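/- arXiv:2012.07282 — 14 statements merged into one kernel-verified Lean document; each statement's English description precedes it below -/
import Mathlib

section
/- Let α > 0, θ ∈ ℝ, and β < 1. If the Archimedean spiral lattice Γ_{α,θ} is asymptotically β-relatively dense, then 1 + 2αβ ≥ 2α. -/
/-- The Archimedean spiral lattice `Γ_{α,θ} = { n^α e^{2πnθi} : n ∈ ℤ, n ≥ 0 }`. -/
noncomputable def spiralLattice (α θ : ℝ) : Set ℂ :=
  {z : ℂ | ∃ n : ℕ, z = (((n : ℝ) ^ α : ℝ) : ℂ) *
    Complex.exp ((2 * Real.pi * n * θ : ℝ) * Complex.I)}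

/-- `Γ` is asymptotically `β`-relatively dense. -/
def AsympRelativelyDense (β : ℝ) (Γ : Set ℂ) : Prop :=
  ∃ r > 0, ∀ r₁ > r, ∃ M > 0, ∀ z : ℂ, M ≤ ‖z‖ →
    ∃ ζ ∈ Γ, 1 ≤ ‖ζ‖ ∧ ‖z - ζ‖ < r₁ * ‖z‖ ^ β

open MeasureTheory Filter Metric in
set_option maxHeartbeats 1000000 in
theorem relatively_dense_implies_exponent_ineq (α θ β : ℝ) (hα : 0 < α) (hβ : β < 1)
    (h : AsympRelativelyDense β (spiralLattice α θ)) :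
    2 * α ≤ 1 + 2 * α * β := by
  by_contra hc
  push_neg at hc
  obtain ⟨r, hr, hdense⟩ := h
  obtain ⟨M, hMpos, hMd⟩ := hdense (r + 1) (by linarith)
  set r₁ : ℝ := r + 1 with hr₁def
  have hr₁ : (0:ℝ) < r₁ := by positivity
  -- eventual smallness of covering radius
  have hsmall : ∀ᶠ R : ℝ in atTop, 2 * r₁ * R ^ β ≤ R := by
    have h0 : Tendsto (fun R : ℝ => 2 * r₁ * R ^ (-(1 - β))) atTop (nhds 0) := by
      simpa using (tendsto_rpow_neg_atTop (show (0:ℝ) < 1 - β by linarith)).const_mul (2 * r₁)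
    have h1 : ∀ᶠ R : ℝ in atTop, 2 * r₁ * R ^ (-(1 - β)) ≤ 1 :=
      h0.eventually (eventually_le_nhds one_pos)
    filter_upwards [h1, eventually_ge_atTop (1:ℝ)] with R hR hR1
    have hRpos : (0:ℝ) < R := by linarith
    have hpow : R ^ (-(1 - β)) * R ^ (1:ℝ) = R ^ β := by
      rw [← Real.rpow_add hRpos]; norm_num
    rw [Real.rpow_one] at hpow
    calc 2 * r₁ * R ^ β = (2 * r₁ * R ^ (-(1 - β))) * R := by rw [← hpow]; ring
      _ ≤ 1 * R := mul_le_mul_of_nonneg_right hR hRpos.le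
      _ = R := one_mul R
  -- the key counting inequality
  have key : ∀ᶠ R : ℝ in atTop,
      3 * R ^ 2 ≤ ((3 * R) ^ (1/α) + 1) * (4 * r₁ ^ 2 * R ^ (2 * β)) := by
    filter_upwards [hsmall, eventually_ge_atTop (1:ℝ), eventually_ge_atTop M] with R hcov hR1 hRM
    have hRpos : (0:ℝ) < R := by linarith
    set N : ℕ := ⌊(3 * R) ^ (1/α)⌋₊ with hN
    set ρ : ℝ := 2 * r₁ * R ^ β with hρ
    have hρpos : 0 < ρ := by positivity
    set pt : ℕ → ℂ := fun n => (((n : ℝ) ^ α : ℝ) : ℂ) *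
      Complex.exp ((2 * Real.pi * n * θ : ℝ) * Complex.I) with hpt
    have habs_pt : ∀ n : ℕ, ‖pt n‖ = (n : ℝ) ^ α := by
      intro n
      show ‖(((n : ℝ) ^ α : ℝ) : ℂ) *
        Complex.exp ((2 * Real.pi * n * θ : ℝ) * Complex.I)‖ = (n : ℝ) ^ α
      rw [norm_mul, Complex.norm_exp_ofReal_mul_I, mul_one,
        Complex.norm_of_nonneg (Real.rpow_nonneg (Nat.cast_nonneg n) α)]
    -- covering
    have hsub : closedBall (0:ℂ) (2*R) \ ball (0:ℂ) R ⊆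
        ⋃ n ∈ Finset.range (N+1), closedBall (pt n) ρ := by
      intro z hz
      obtain ⟨hz2, hz1⟩ := hz
      rw [mem_closedBall, dist_zero_right] at hz2
      rw [mem_ball, dist_zero_right, not_lt] at hz1
      have hzM : M ≤ ‖z‖ := le_trans hRM hz1
      obtain ⟨ζ, hζΓ, hζ1, hζd⟩ := hMd z hzM
      obtain ⟨n, hn⟩ := hζΓ
      have hζabs : ‖ζ‖ = (n : ℝ) ^ α := by rw [hn]; exact habs_pt n
      -- |z|^β ≤ 2 * R^β
      have hzb : ‖z‖ ^ β ≤ 2 * R ^ β := by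
        rcases le_or_gt 0 β with hb | hb
        · calc ‖z‖ ^ β ≤ (2*R) ^ β :=
                Real.rpow_le_rpow (norm_nonneg z) hz2 hb
            _ = 2 ^ β * R ^ β := Real.mul_rpow (by norm_num) hRpos.le
            _ ≤ 2 * R ^ β := by
                apply mul_le_mul_of_nonneg_right _ (Real.rpow_nonneg hRpos.le β)
                calc (2:ℝ) ^ β ≤ 2 ^ (1:ℝ) :=
                      Real.rpow_le_rpow_of_exponent_le (by norm_num) hβ.le
                  _ = 2 := Real.rpow_one 2
        · calc ‖z‖ ^ β ≤ R ^ β :=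
                Real.rpow_le_rpow_of_nonpos hRpos hz1 hb.le
            _ ≤ 2 * R ^ β := by nlinarith [Real.rpow_nonneg hRpos.le β]
      have hdist : ‖z - ζ‖ ≤ ρ := by
        calc ‖z - ζ‖ ≤ r₁ * ‖z‖ ^ β := hζd.le
          _ ≤ r₁ * (2 * R ^ β) := mul_le_mul_of_nonneg_left hzb hr₁.le
          _ = ρ := by rw [hρ]; ring
      -- bound on n
      have hnle : (n : ℝ) ^ α ≤ 3 * R := by
        have htri : ‖ζ‖ ≤ ‖z‖ + ‖z - ζ‖ := by
          have h' := norm_sub_le z (z - ζ)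
          simp only [sub_sub_cancel] at h'
          simpa using h'
        rw [hζabs] at htri
        have hz2' : ‖z‖ ≤ 2 * R := hz2
        calc (n:ℝ) ^ α ≤ ‖z‖ + ‖z - ζ‖ := htri
          _ ≤ 2*R + ρ := add_le_add hz2' hdist
          _ ≤ 2*R + R := by linarith [hcov]
          _ = 3 * R := by ring
      have hnN : n ∈ Finset.range (N+1) := by
        rw [Finset.mem_range, Nat.lt_succ_iff, hN]
        apply Nat.le_floor
        have : ((n:ℝ) ^ α) ^ (1/α) ≤ (3*R) ^ (1/α) :=
          Real.rpow_le_rpow (Real.rpow_nonneg (Nat.cast_nonneg n) α) hnle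
            (by positivity)
        rw [one_div] at this ⊢
        rwa [Real.rpow_rpow_inv (Nat.cast_nonneg n) hα.ne'] at this
      apply Set.mem_biUnion hnN
      have hptn : pt n = ζ := hn.symm
      rw [mem_closedBall, hptn, Complex.dist_eq]
      exact hdist
    -- measure comparison
    have hpieq : ((NNReal.pi : ENNReal)) = ENNReal.ofReal Real.pi := by
      rw [← NNReal.coe_real_pi, ENNReal.ofReal_coe_nnreal]
    have hmeas : volume (closedBall (0:ℂ) (2*R)) ≤
        ENNReal.ofReal ((N+1) * ρ ^ 2 * Real.pi) + ENNReal.ofReal (R ^ 2 * Real.pi) := by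
      have hsub2 : closedBall (0:ℂ) (2*R) ⊆
          (⋃ n ∈ Finset.range (N+1), closedBall (pt n) ρ) ∪ ball (0:ℂ) R := by
        intro z hz
        by_cases hz' : z ∈ ball (0:ℂ) R
        · exact Or.inr hz'
        · exact Or.inl (hsub ⟨hz, hz'⟩)
      calc volume (closedBall (0:ℂ) (2*R))
          ≤ volume ((⋃ n ∈ Finset.range (N+1), closedBall (pt n) ρ) ∪ ball (0:ℂ) R) :=
            measure_mono hsub2
        _ ≤ volume (⋃ n ∈ Finset.range (N+1), closedBall (pt n) ρ) + volume (ball (0:ℂ) R) :=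
            measure_union_le _ _
        _ ≤ (∑ n ∈ Finset.range (N+1), volume (closedBall (pt n) ρ)) + volume (ball (0:ℂ) R) := by
            gcongr
            exact measure_biUnion_finset_le _ _
        _ = ENNReal.ofReal ((N+1) * ρ ^ 2 * Real.pi) + ENNReal.ofReal (R ^ 2 * Real.pi) := by
            simp only [Complex.volume_closedBall, Complex.volume_ball, Finset.sum_const,
              Finset.card_range, nsmul_eq_mul]
            congr 1
            · rw [hpieq, ← ENNReal.ofReal_pow hρpos.le, ← ENNReal.ofReal_natCast (N+1),
                ← ENNReal.ofReal_mul (by positivity), ← ENNReal.ofReal_mul (by positivity)]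
              congr 1
              push_cast
              ring
            · rw [hpieq, ENNReal.ofReal_mul (by positivity), ← ENNReal.ofReal_pow hRpos.le]
    have hlow : ENNReal.ofReal ((2*R) ^ 2 * Real.pi) ≤
        ENNReal.ofReal ((N+1) * ρ ^ 2 * Real.pi) + ENNReal.ofReal (R ^ 2 * Real.pi) := by
      calc ENNReal.ofReal ((2*R) ^ 2 * Real.pi) = volume (closedBall (0:ℂ) (2*R)) := by
            rw [Complex.volume_closedBall, hpieq, ENNReal.ofReal_mul (by positivity),
              ← ENNReal.ofReal_pow (by positivity)]
        _ ≤ _ := hmeas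
    rw [← ENNReal.ofReal_add (by positivity) (by positivity),
      ENNReal.ofReal_le_ofReal_iff (by positivity)] at hlow
    -- extract the real inequality
    have hreal : 3 * R ^ 2 ≤ (N+1) * ρ ^ 2 := by
      have hπ := Real.pi_pos
      nlinarith [hlow]
    have hN1 : ((N:ℝ)+1) ≤ (3*R) ^ (1/α) + 1 := by
      have := Nat.floor_le (by positivity : (0:ℝ) ≤ (3*R) ^ (1/α))
      rw [hN]; push_cast; linarith
    have hρ2 : ρ ^ 2 = 4 * r₁ ^ 2 * R ^ (2*β) := by
      have h2' : (R ^ β) ^ 2 = R ^ (2*β) := by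
        rw [← Real.rpow_natCast (R ^ β) 2, ← Real.rpow_mul hRpos.le]
        norm_num [mul_comm]
      rw [hρ, ← h2']; ring
    calc 3 * R ^ 2 ≤ (N+1) * ρ ^ 2 := hreal
      _ = ((N:ℝ)+1) * (4 * r₁ ^ 2 * R ^ (2*β)) := by rw [hρ2]
      _ ≤ ((3*R) ^ (1/α) + 1) * (4 * r₁ ^ 2 * R ^ (2*β)) := by
          apply mul_le_mul_of_nonneg_right hN1 (by positivity)
  -- now derive the contradiction via a limit
  have hexp : 1/α + 2*β - 2 < 0 := by
    have h2 : 1/α + 2*β < 2 := by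
      rw [div_add' _ _ _ hα.ne', div_lt_iff₀ hα]
      nlinarith
    linarith
  have hkey2 : ∀ᶠ R : ℝ in atTop,
      3 ≤ ((3*R) ^ (1/α) + 1) * (4 * r₁ ^ 2) * R ^ (2*β-2) := by
    filter_upwards [key, eventually_ge_atTop (1:ℝ)] with R hkR hR1
    have hRpos : (0:ℝ) < R := by linarith
    have hgR : (((3*R) ^ (1/α) + 1) * (4 * r₁ ^ 2) * R ^ (2*β-2)) * R ^ 2
        = ((3*R) ^ (1/α) + 1) * (4 * r₁ ^ 2 * R ^ (2*β)) := by
      have : R ^ (2*β-2) * R ^ 2 = R ^ (2*β) := by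
        rw [← Real.rpow_natCast R 2, ← Real.rpow_add hRpos]
        norm_num
      calc ((3*R) ^ (1/α) + 1) * (4 * r₁ ^ 2) * R ^ (2*β-2) * R ^ 2
          = ((3*R) ^ (1/α) + 1) * (4 * r₁ ^ 2) * (R ^ (2*β-2) * R ^ 2) := by ring
        _ = _ := by rw [this]; ring
    have h3 : 3 * R ^ 2 ≤ (((3*R) ^ (1/α) + 1) * (4 * r₁ ^ 2) * R ^ (2*β-2)) * R ^ 2 := by
      rw [hgR]; exact hkR
    have hR2 : (0:ℝ) < R ^ 2 := by positivity
    exact le_of_mul_le_mul_right h3 hR2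
  have hg0 : Tendsto (fun R : ℝ => ((3*R) ^ (1/α) + 1) * (4 * r₁ ^ 2) * R ^ (2*β-2))
      atTop (nhds 0) := by
    have heq : ∀ᶠ R : ℝ in atTop,
        ((3*R) ^ (1/α) + 1) * (4 * r₁ ^ 2) * R ^ (2*β-2) =
        (3 ^ (1/α) * 4 * r₁ ^ 2) * R ^ (1/α + (2*β-2)) + (4 * r₁ ^ 2) * R ^ (2*β-2) := by
      filter_upwards [eventually_gt_atTop (0:ℝ)] with R hRpos
      have h1 : (3*R) ^ (1/α) = 3 ^ (1/α) * R ^ (1/α) :=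
        Real.mul_rpow (by norm_num) hRpos.le
      have h2 : R ^ (1/α) * R ^ (2*β-2) = R ^ (1/α + (2*β-2)) :=
        (Real.rpow_add hRpos _ _).symm
      calc ((3*R) ^ (1/α) + 1) * (4 * r₁ ^ 2) * R ^ (2*β-2)
          = 3 ^ (1/α) * 4 * r₁ ^ 2 * (R ^ (1/α) * R ^ (2*β-2))
            + 4 * r₁ ^ 2 * R ^ (2*β-2) := by rw [h1]; ring
        _ = _ := by rw [h2]
    have ht1 : Tendsto (fun R : ℝ => (3 ^ (1/α) * 4 * r₁ ^ 2) * R ^ (1/α + (2*β-2)))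
        atTop (nhds 0) := by
      have : (1/α + (2*β-2)) = -(2 - (1/α + 2*β)) := by ring
      rw [this]
      simpa using (tendsto_rpow_neg_atTop (show (0:ℝ) < 2 - (1/α + 2*β) by linarith)).const_mul
        (3 ^ (1/α) * 4 * r₁ ^ 2)
    have ht2 : Tendsto (fun R : ℝ => (4 * r₁ ^ 2) * R ^ (2*β-2)) atTop (nhds 0) := by
      have : (2*β-2 : ℝ) = -(2 - 2*β) := by ring
      rw [this]
      simpa using (tendsto_rpow_neg_atTop (show (0:ℝ) < 2 - 2*β by linarith)).const_mul (4 * r₁ ^ 2)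
    have := (ht1.add ht2)
    rw [add_zero] at this
    exact Tendsto.congr' (Filter.EventuallyEq.symm heq) this
  have : ∀ᶠ R : ℝ in atTop,
      ((3*R) ^ (1/α) + 1) * (4 * r₁ ^ 2) * R ^ (2*β-2) < 3 :=
    hg0.eventually (eventually_lt_nhds (by norm_num))
  obtain ⟨R, h1, h2⟩ := (hkey2.and this).exists
  linarith
end

section
/- Let α > 0, θ ∈ ℝ, and β < 1. If the Archimedean spiral lattice Γ_{α,θ} is asymptotically β-uniformly discrete, then 1 + 2αβ ≤ 2α. -/
set_option maxHeartbeats 1000000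
open Real Filter

lemma aux_pow_le (d : ℕ) {t : ℝ} (ht : 0 ≤ t) (ht1 : t ≤ 1) :
    (1 + t) ^ d ≤ 1 + (2 ^ d - 1) * t := by
  induction d with
  | zero => simp
  | succ d ih =>
    have h2 : (1:ℝ) ≤ 2 ^ d := one_le_pow₀ (by norm_num)
    calc (1+t)^(d+1) = (1+t)^d * (1+t) := pow_succ _ _
      _ ≤ (1 + (2^d - 1) * t) * (1 + t) := by
          apply mul_le_mul_of_nonneg_right ih (by linarith)
      _ ≤ 1 + (2 ^ (d+1) - 1) * t := by
          nlinarith [pow_succ (2:ℝ) d, mul_le_mul_of_nonneg_left ht1 ht, mul_nonneg ht ht]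

lemma aux_rpow_le {α : ℝ} {t : ℝ} (ht : 0 ≤ t) (ht1 : t ≤ 1) :
    (1 + t) ^ α ≤ 1 + (2 ^ ⌈α⌉₊ - 1) * t := by
  calc (1 + t) ^ α ≤ (1 + t) ^ ((⌈α⌉₊ : ℕ) : ℝ) :=
        Real.rpow_le_rpow_of_exponent_le (by linarith) (Nat.le_ceil α)
    _ = (1 + t) ^ (⌈α⌉₊ : ℕ) := Real.rpow_natCast _ _
    _ ≤ _ := aux_pow_le _ ht ht1

lemma aux_rpow_add {α : ℝ} {m k : ℝ} (hm : 1 ≤ m) (hk : 0 ≤ k) (hkm : k ≤ m) :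
    (m + k) ^ α ≤ m ^ α + 2 ^ ⌈α⌉₊ * k * m ^ (α - 1) := by
  have hm0 : 0 < m := by linarith
  have h1 : m + k = m * (1 + k / m) := by field_simp
  have h2 : (m + k) ^ α = m ^ α * (1 + k / m) ^ α := by
    rw [h1, Real.mul_rpow hm0.le (by positivity)]
  have h3 : (1 + k / m) ^ α ≤ 1 + (2 ^ ⌈α⌉₊ - 1) * (k / m) :=
    aux_rpow_le (by positivity) (by rw [div_le_one hm0]; exact hkm)
  have h4 : m ^ α * (k / m) = k * m ^ (α - 1) := by
    rw [Real.rpow_sub hm0, Real.rpow_one]; ring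
  have h5 : (0:ℝ) ≤ m ^ α := by positivity
  have h6 : (1:ℝ) ≤ 2 ^ ⌈α⌉₊ := one_le_pow₀ (by norm_num)
  calc (m + k) ^ α ≤ m ^ α * (1 + (2 ^ ⌈α⌉₊ - 1) * (k / m)) := by
        rw [h2]; exact mul_le_mul_of_nonneg_left h3 h5
    _ = m ^ α + (2 ^ ⌈α⌉₊ - 1) * (m ^ α * (k / m)) := by ring
    _ = m ^ α + (2 ^ ⌈α⌉₊ - 1) * (k * m ^ (α-1)) := by rw [h4]
    _ ≤ _ := by nlinarith [mul_nonneg hk (Real.rpow_nonneg hm0.le (α-1))]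


/-- `Γ` is asymptotically `β`-uniformly discrete. -/
def AsympUniformlyDiscrete (β : ℝ) (Γ : Set ℂ) : Prop :=
  ∃ s > 0, ∀ s₁, 0 < s₁ → s₁ < s → ∃ M > 0, ∀ z : ℂ, M ≤ ‖z‖ →
    {ζ ∈ Γ | 1 ≤ ‖ζ‖ ∧ ‖z - ζ‖ < s₁ * ‖z‖ ^ β}.Subsingleton

theorem uniformly_discrete_implies_exponent_ineq (α θ β : ℝ) (hα : 0 < α) (hβ : β < 1)
    (h : AsympUniformlyDiscrete β (spiralLattice α θ)) :
    1 + 2 * α * β ≤ 2 * α := by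
  by_contra hc
  push_neg at hc
  obtain ⟨s, hs, hmain⟩ := h
  obtain ⟨M, hM, hdisc⟩ := hmain (s/2) (by positivity) (by linarith)
  set C : ℝ := 2 ^ ⌈α⌉₊ with hCdef
  have hC1 : (1:ℝ) ≤ C := one_le_pow₀ (by norm_num)
  set K : ℝ := C + (1 + C) * (4 * Real.pi) with hKdef
  have hpi := Real.pi_pos
  have hK0 : 0 < K := by positivity
  have hε : 0 < 1 + 2*α*β - 2*α := by linarith
  -- choose N
  have hA : ∀ᶠ x : ℝ in atTop, M ≤ x ^ (2*α) :=
    (tendsto_rpow_atTop (by positivity)).eventually_ge_atTop M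
  have hB : ∀ᶠ x : ℝ in atTop, K * x ^ (2*α - 1 - 2*α*β) < s/2 := by
    have h0 : Tendsto (fun x : ℝ => K * x ^ (2*α - 1 - 2*α*β)) atTop (nhds (K * 0)) := by
      have : (2*α - 1 - 2*α*β) = -(1 + 2*α*β - 2*α) := by ring
      rw [this]
      exact (tendsto_rpow_neg_atTop hε).const_mul K
    rw [mul_zero] at h0
    exact h0.eventually_lt_const (by positivity)
  obtain ⟨N, hN⟩ :=
    (tendsto_natCast_atTop_atTop.eventually ((hA.and hB).and (eventually_ge_atTop (7:ℝ)))).exists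
  obtain ⟨⟨hN2, hN3⟩, hN7⟩ := hN
  have hx1 : (1:ℝ) ≤ (N:ℝ) := by linarith
  have hx0 : (0:ℝ) < (N:ℝ) := by linarith
  have hNpos : 0 < N := by exact_mod_cast hx0
  -- Dirichlet
  obtain ⟨j, k, hk0, hkN, hjk⟩ := Real.exists_int_int_abs_mul_sub_le θ hNpos
  set q : ℕ := k.toNat with hqdef
  have hqk : (q:ℤ) = k := Int.toNat_of_nonneg hk0.le
  have hq1 : 1 ≤ q := by omega
  have hqN : q ≤ N := by omega
  have hqx : (q:ℝ) ≤ (N:ℝ) := by exact_mod_cast hqN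
  have hq0 : (0:ℝ) < q := by exact_mod_cast hq1
  have hjq : |(q:ℝ) * θ - j| ≤ 1 / ((N:ℝ) + 1) := by
    have hq' : ((q:ℤ):ℝ) = (q:ℝ) := by push_cast; ring
    rw [← hq', hqk]
    exact hjk
  set m : ℕ := N^2 with hmdef
  have hmr : (m:ℝ) = (N:ℝ)^2 := by rw [hmdef]; push_cast; ring
  have hm1 : (1:ℝ) ≤ (m:ℝ) := by rw [hmr]; exact one_le_pow₀ hx1
  have hm0 : (0:ℝ) < (m:ℝ) := by linarith
  have hqm : (q:ℝ) ≤ (m:ℝ) := by rw [hmr]; exact hqx.trans (le_self_pow₀ hx1 two_ne_zero)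
  set a : ℝ := (m:ℝ) ^ α with hadef
  set b : ℝ := ((m:ℝ) + (q:ℝ)) ^ α with hbdef
  have ha0 : 0 < a := Real.rpow_pos_of_pos hm0 α
  have hab : a < b := Real.rpow_lt_rpow hm0.le (by linarith) hα
  have hb_le : b ≤ a + C * q * (m:ℝ) ^ (α - 1) := aux_rpow_add hm1 hq0.le hqm
  -- cast identities
  have hx2 : (m:ℝ) = (N:ℝ) ^ (2:ℝ) := by
    rw [hmr, ← Real.rpow_natCast (N:ℝ) 2]; norm_num
  have ha_eq : a = (N:ℝ) ^ (2*α) := by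
    rw [hadef, hx2, ← Real.rpow_mul hx0.le]
  have hm_eq : (m:ℝ) ^ (α - 1) = (N:ℝ) ^ (2*(α-1)) := by
    rw [hx2, ← Real.rpow_mul hx0.le]
  -- the two lattice points
  set ζ₁ : ℂ := (((m : ℝ) ^ α : ℝ) : ℂ) *
    Complex.exp ((2 * Real.pi * m * θ : ℝ) * Complex.I) with hζ₁def
  set ζ₂ : ℂ := ((((m + q : ℕ) : ℝ) ^ α : ℝ) : ℂ) *
    Complex.exp ((2 * Real.pi * (m + q : ℕ) * θ : ℝ) * Complex.I) with hζ₂def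
  have hmem1 : ζ₁ ∈ spiralLattice α θ := ⟨m, rfl⟩
  have hmem2 : ζ₂ ∈ spiralLattice α θ := ⟨m + q, rfl⟩
  have hbcast : (((m + q : ℕ) : ℝ)) ^ α = b := by push_cast; rfl
  have habs1 : ‖ζ₁‖ = a := by
    rw [hζ₁def, norm_mul, Complex.norm_exp_ofReal_mul_I, mul_one, Complex.norm_real, Real.norm_eq_abs,
      abs_of_pos ha0]
  have habs2 : ‖ζ₂‖ = b := by
    rw [hζ₂def, norm_mul, Complex.norm_exp_ofReal_mul_I, mul_one, Complex.norm_real, Real.norm_eq_abs, hbcast,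
      abs_of_pos (by linarith)]
  -- angular estimate
  set E : ℂ := Complex.exp ((2 * Real.pi * ((q:ℝ) * θ - j) : ℝ) * Complex.I) with hEdef
  have hargabs : ‖((2 * Real.pi * ((q:ℝ) * θ - j) : ℝ) : ℂ) * Complex.I‖
      = 2 * Real.pi * |(q:ℝ) * θ - j| := by
    rw [norm_mul, Complex.norm_I, mul_one, Complex.norm_real, Real.norm_eq_abs, abs_mul,
      abs_of_pos (by positivity : (0:ℝ) < 2 * Real.pi)]
  have h8 : (1:ℝ) / ((N:ℝ)+1) ≤ 1/8 := by
    apply one_div_le_one_div_of_le (by norm_num) (by linarith)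
  have harg_le : 2 * Real.pi * |(q:ℝ) * θ - j| ≤ 1 := by
    have h9 := mul_le_mul_of_nonneg_left (hjq.trans h8) (by positivity : (0:ℝ) ≤ 2 * Real.pi)
    linarith only [h9, Real.pi_le_four]
  have hE1 : ‖E - 1‖ ≤ 4 * Real.pi / ((N:ℝ) + 1) := by
    have := Complex.norm_exp_sub_one_le (x := ((2 * Real.pi * ((q:ℝ) * θ - j) : ℝ) : ℂ) *
      Complex.I) (by rw [hargabs]; exact harg_le)
    rw [hargabs] at this
    refine this.trans ?_
    rw [div_eq_mul_inv]
    have := mul_le_mul_of_nonneg_left hjq (by positivity : (0:ℝ) ≤ 4 * Real.pi)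
    calc 2 * (2 * Real.pi * |(q:ℝ)*θ - j|) = 4 * Real.pi * |(q:ℝ)*θ - j| := by ring
      _ ≤ 4 * Real.pi * (1/((N:ℝ)+1)) := this
      _ = 4 * Real.pi * ((N:ℝ)+1)⁻¹ := by rw [one_div]
  -- exponential identities
  have hexpq : Complex.exp ((2 * Real.pi * (q:ℝ) * θ : ℝ) * Complex.I) = E := by
    rw [hEdef, ← mul_one (Complex.exp ((2 * Real.pi * ((q:ℝ) * θ - j) : ℝ) * Complex.I)),
      ← Complex.exp_int_mul_two_pi_mul_I j, ← Complex.exp_add]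
    congr 1
    push_cast
    ring
  have hBeq : ((2 * Real.pi * ((m + q : ℕ) : ℝ) * θ : ℝ) : ℂ) * Complex.I
      = ((2 * Real.pi * (m:ℝ) * θ : ℝ) : ℂ) * Complex.I
        + ((2 * Real.pi * (q:ℝ) * θ : ℝ) : ℂ) * Complex.I := by
    push_cast; ring
  have hsub : ζ₁ - ζ₂ = Complex.exp ((2 * Real.pi * m * θ : ℝ) * Complex.I) *
      ((a:ℂ) - (b:ℂ) * E) := by
    rw [hζ₁def, hζ₂def, hbcast, hBeq, Complex.exp_add, hexpq, hadef]
    ring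
  have habs_sub : ‖ζ₁ - ζ₂‖ = ‖(a:ℂ) - (b:ℂ) * E‖ := by
    rw [hsub, norm_mul, Complex.norm_exp_ofReal_mul_I, one_mul]
  -- main distance bound
  have hdist : ‖ζ₁ - ζ₂‖ ≤ (b - a) + b * ‖E - 1‖ := by
    rw [habs_sub]
    have hsplit : (a:ℂ) - (b:ℂ) * E = ((a:ℂ) - (b:ℂ)) + (b:ℂ) * (1 - E) := by ring
    rw [hsplit]
    refine (norm_add_le _ _).trans ?_
    gcongr
    · rw [← Complex.ofReal_sub, Complex.norm_real, Real.norm_eq_abs, abs_of_nonpos (by linarith)]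
      linarith
    · rw [norm_mul, Complex.norm_real, Real.norm_eq_abs, abs_of_pos (by linarith : (0:ℝ) < b),
        norm_sub_rev 1 E]
  -- b ≤ (1+C) * a
  have hmm : (m:ℝ) * (m:ℝ) ^ (α - 1) = a := by
    rw [hadef, Real.rpow_sub hm0, Real.rpow_one]
    field_simp
  have hC0 : (0:ℝ) < C := by rw [hCdef]; positivity
  have hb2 : b ≤ (1 + C) * a := by
    have h1 : C * (q:ℝ) * (m:ℝ) ^ (α-1) ≤ C * (m:ℝ) * (m:ℝ) ^ (α-1) :=
      mul_le_mul_of_nonneg_right (mul_le_mul_of_nonneg_left hqm hC0.le)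
        (Real.rpow_nonneg hm0.le _)
    have h2 : C * (m:ℝ) * (m:ℝ) ^ (α-1) = C * a := by rw [mul_assoc, hmm]
    have h3 : (1 + C) * a = a + C * a := by ring
    linarith only [hb_le, h1, h2, h3]
  -- rpow arithmetic in x = N
  have hxpow1 : (N:ℝ) * (N:ℝ) ^ (2*(α-1)) = (N:ℝ) ^ (2*α-1) := by
    have h1 : (1:ℝ) + 2*(α-1) = 2*α-1 := by ring
    rw [← h1, Real.rpow_add hx0, Real.rpow_one]
  have hxpow2 : (N:ℝ) ^ (2*α) / (N:ℝ) = (N:ℝ) ^ (2*α-1) := by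
    rw [Real.rpow_sub hx0, Real.rpow_one]
  have hxp_pos : (0:ℝ) < (N:ℝ) ^ (2*α-1) := Real.rpow_pos_of_pos hx0 _
  -- total bound
  have hstep : (b - a) + b * ‖E - 1‖ ≤ K * (N:ℝ) ^ (2*α-1) := by
    have t1 : b - a ≤ C * (N:ℝ) ^ (2*α-1) := by
      have h1 : C * (q:ℝ) * (m:ℝ) ^ (α-1) ≤ C * (N:ℝ) * (m:ℝ) ^ (α-1) :=
        mul_le_mul_of_nonneg_right (mul_le_mul_of_nonneg_left hqx hC0.le)
          (Real.rpow_nonneg hm0.le _)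
      have h2 : C * (N:ℝ) * (m:ℝ) ^ (α-1) = C * (N:ℝ) ^ (2*α-1) := by
        rw [hm_eq, mul_assoc, hxpow1]
      linarith only [hb_le, h1, h2]
    have t2 : b * ‖E - 1‖ ≤ (1 + C) * (4 * Real.pi) * (N:ℝ) ^ (2*α-1) := by
      have hEnn : (0:ℝ) ≤ ‖E - 1‖ := norm_nonneg _
      have hb0 : (0:ℝ) ≤ b := by linarith
      have u1 : b * ‖E - 1‖ ≤ ((1 + C) * a) * (4 * Real.pi / ((N:ℝ) + 1)) := by
        apply mul_le_mul hb2 hE1 hEnn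
        exact mul_nonneg (by linarith only [hC0] : (0:ℝ) ≤ 1 + C) ha0.le
      have u2 : 4 * Real.pi / ((N:ℝ) + 1) ≤ 4 * Real.pi / (N:ℝ) := by
        apply div_le_div_of_nonneg_left (by positivity) hx0 (by linarith)
      have u3 : ((1 + C) * a) * (4 * Real.pi / (N:ℝ)) = (1 + C) * (4 * Real.pi) * (N:ℝ) ^ (2*α-1) := by
        rw [ha_eq, ← hxpow2]
        field_simp
      have u4 : ((1 + C) * a) * (4 * Real.pi / ((N:ℝ) + 1)) ≤ ((1 + C) * a) * (4 * Real.pi / (N:ℝ)) := by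
        apply mul_le_mul_of_nonneg_left u2
        exact mul_nonneg (by linarith only [hC0] : (0:ℝ) ≤ 1 + C) ha0.le
      linarith only [u1, u4, u3.le, u3.ge]
    have hKexp : K * (N:ℝ) ^ (2*α-1) = C * (N:ℝ) ^ (2*α-1) + (1+C) * (4*Real.pi) * (N:ℝ) ^ (2*α-1) := by
      rw [hKdef]; ring
    linarith only [t1, t2, hKexp]
  have hfinal : K * (N:ℝ) ^ (2*α-1) < s/2 * (N:ℝ) ^ (2*α*β) := by
    have h1 := mul_lt_mul_of_pos_right hN3 (Real.rpow_pos_of_pos hx0 (2*α*β))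
    have h2 : 2*α - 1 - 2*α*β + 2*α*β = 2*α - 1 := by ring
    rwa [mul_assoc, ← Real.rpow_add hx0, h2] at h1
  -- assemble membership facts
  have habsz : ‖ζ₁‖ = (N:ℝ) ^ (2*α) := habs1.trans ha_eq
  have hzM : M ≤ ‖ζ₁‖ := by rw [habsz]; exact hN2
  have hβz : ‖ζ₁‖ ^ β = (N:ℝ) ^ (2*α*β) := by
    rw [habsz, ← Real.rpow_mul hx0.le]
  have hone1 : 1 ≤ ‖ζ₁‖ := by
    rw [habs1, hadef]
    calc (1:ℝ) = 1 ^ α := (Real.one_rpow α).symm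
      _ ≤ (m:ℝ) ^ α := Real.rpow_le_rpow (by norm_num) hm1 hα.le
  have hone2 : 1 ≤ ‖ζ₂‖ := by
    rw [habs2]
    rw [habs1, hadef] at hone1
    linarith
  have hS := hdisc ζ₁ hzM
  have hmemS1 : ζ₁ ∈ {ζ | ζ ∈ spiralLattice α θ ∧ 1 ≤ ‖ζ‖ ∧
      ‖ζ₁ - ζ‖ < s/2 * ‖ζ₁‖ ^ β} := by
    refine ⟨hmem1, hone1, ?_⟩
    rw [sub_self, norm_zero, hβz]
    positivity
  have hmemS2 : ζ₂ ∈ {ζ | ζ ∈ spiralLattice α θ ∧ 1 ≤ ‖ζ‖ ∧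
      ‖ζ₁ - ζ‖ < s/2 * ‖ζ₁‖ ^ β} := by
    refine ⟨hmem2, hone2, ?_⟩
    rw [hβz]
    calc ‖ζ₁ - ζ₂‖ ≤ (b - a) + b * ‖E - 1‖ := hdist
      _ ≤ K * (N:ℝ) ^ (2*α-1) := hstep
      _ < s/2 * (N:ℝ) ^ (2*α*β) := hfinal
  have heq : ζ₁ = ζ₂ := hS hmemS1 hmemS2
  rw [heq, habs2] at habs1
  linarith
end

section
/- Let α > 0, θ ∈ ℝ, and β < 1 with 1 + 2αβ = 2α. If the Archimedean spiral lattice Γ_{α,θ} is asymptotically β-relatively dense or asymptotically β-uniformly discrete, then θ is irrational. -/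
open Filter Real Complex Set


/-- Lower bound on distance from `R` to a ray through a `b`-th root of `-1`. -/
lemma ray_lower_bound (b : ℕ) (hb : 1 ≤ b) (v : ℂ) (hv : ‖v‖ = 1)
    (hvb : v ^ b = -1) (R t : ℝ) (hR : 0 < R) (ht : 0 ≤ t) :
    R / (b * 2 ^ b) ≤ ‖(R : ℂ) - (t : ℂ) * v‖ := by
  have hbR : (1:ℝ) ≤ b := by exact_mod_cast hb
  have hden1 : (1:ℝ) ≤ (b:ℝ) * 2 ^ b := by
    have h1 : (1:ℝ) ≤ (2:ℝ) ^ b := one_le_pow₀ (by norm_num)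
    nlinarith
  rcases le_or_gt t (2 * R) with h2 | h2
  · obtain ⟨m, rfl⟩ : ∃ m, b = m + 1 := ⟨b - 1, (Nat.succ_pred_eq_of_pos hb).symm⟩
    have key := geom_sum₂_mul (R : ℂ) ((t : ℂ) * v) (m + 1)
    have habs_pow : ‖(R:ℂ) ^ (m+1) - ((t:ℂ) * v) ^ (m+1)‖ = R ^ (m+1) + t ^ (m+1) := by
      rw [mul_pow, hvb]
      have h3 : (R:ℂ) ^ (m+1) - (t:ℂ) ^ (m+1) * (-1) = ((R ^ (m+1) + t ^ (m+1) : ℝ) : ℂ) := by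
        push_cast; ring
      rw [h3, Complex.norm_real, Real.norm_eq_abs, _root_.abs_of_nonneg (by positivity)]
    set A := ‖(R:ℂ) - (t:ℂ) * v‖ with hA
    have hsum : ‖∑ i ∈ Finset.range (m+1), (R:ℂ) ^ i * ((t:ℂ) * v) ^ (m + 1 - 1 - i)‖
        ≤ (m+1) * (2 * R) ^ m := by
      refine le_trans (norm_sum_le _ _) ?_
      have hterm : ∀ i ∈ Finset.range (m+1),
          ‖(R:ℂ) ^ i * ((t:ℂ) * v) ^ (m + 1 - 1 - i)‖ ≤ (2*R) ^ m := by
        intro i hi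
        rw [Finset.mem_range] at hi
        have hi' : i ≤ m := Nat.lt_succ_iff.mp hi
        rw [norm_mul, norm_pow, norm_pow, norm_mul, Complex.norm_real, Real.norm_eq_abs, Complex.norm_real, Real.norm_eq_abs, hv,
          mul_one, _root_.abs_of_pos hR, _root_.abs_of_nonneg ht]
        have h1 : R ^ i * t ^ (m + 1 - 1 - i) ≤ (2*R) ^ i * (2*R) ^ (m + 1 - 1 - i) := by
          apply mul_le_mul (pow_le_pow_left₀ hR.le (by linarith) i)
            (pow_le_pow_left₀ ht h2 _) (by positivity) (by positivity)
        refine le_trans h1 ?_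
        rw [← pow_add]
        have he : i + (m + 1 - 1 - i) = m := by omega
        rw [he]
      calc _ ≤ ∑ _i ∈ Finset.range (m+1), (2*R) ^ m := Finset.sum_le_sum hterm
        _ = (m+1) * (2*R) ^ m := by rw [Finset.sum_const, Finset.card_range]; push_cast; ring
    have hBpos : (0:ℝ) < ((m:ℝ)+1) * (2*R) ^ m := by positivity
    have hRb : R ^ (m+1) ≤ A * (((m:ℝ)+1) * (2 * R) ^ m) := by
      have h3 : R ^ (m+1) ≤ ‖(R:ℂ) ^ (m+1) - ((t:ℂ) * v) ^ (m+1)‖ := by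
        rw [habs_pow]; nlinarith [pow_nonneg ht (m+1)]
      rw [← key, norm_mul] at h3
      rw [mul_comm]
      exact le_trans h3 (mul_le_mul_of_nonneg_right hsum (norm_nonneg _))
    have hAge : R ^ (m+1) / (((m:ℝ)+1) * (2*R) ^ m) ≤ A := (div_le_iff₀ hBpos).mpr hRb
    have heq : R ^ (m+1) / (((m:ℝ)+1) * (2*R) ^ m) = R / (((m:ℝ)+1) * 2 ^ m) := by
      rw [mul_pow, pow_succ]
      field_simp
    rw [heq] at hAge
    refine le_trans ?_ hAge
    have hd2 : ((m:ℝ)+1) * 2 ^ m ≤ ((m+1:ℕ):ℝ) * 2 ^ (m+1) := by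
      push_cast
      have : (2:ℝ) ^ m ≤ 2 ^ (m+1) := by
        apply pow_le_pow_right₀ (by norm_num) (by omega)
      nlinarith [pow_pos (by norm_num : (0:ℝ) < 2) m]
    exact div_le_div_of_nonneg_left hR.le (by positivity) hd2
  · have h3 : t - R ≤ ‖(R:ℂ) - (t:ℂ) * v‖ := by
      have h4 := norm_sub_norm_le ((t:ℂ) * v) (R:ℂ)
      rw [norm_mul, Complex.norm_real, Real.norm_eq_abs, Complex.norm_real, Real.norm_eq_abs, hv, mul_one, _root_.abs_of_nonneg ht,
        _root_.abs_of_pos hR] at h4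
      calc t - R ≤ ‖(t:ℂ) * v - (R:ℂ)‖ := h4
        _ = ‖(R:ℂ) - (t:ℂ) * v‖ := norm_sub_rev _ _
    have h5 : R / ((b:ℝ) * 2 ^ b) ≤ R := by
      rw [div_le_iff₀ (by positivity)]
      nlinarith [mul_nonneg (sub_nonneg.mpr hden1) hR.le]
    linarith

/-- Mean-value bound for the gap of consecutive rpow values. -/
lemma rpow_gap_le (α : ℝ) (hα : 0 < α) (a d : ℝ) (ha : 1 ≤ a) (hd : 0 < d) (hda : d ≤ a) :
    (a + d) ^ α - a ^ α ≤ α * ((2:ℝ) ^ α + 1) * d * a ^ (α - 1) := by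
  have ha0 : (0:ℝ) < a := lt_of_lt_of_le one_pos ha
  have hab : a < a + d := by linarith
  have hcont : ContinuousOn (fun t : ℝ => t ^ α) (Set.Icc a (a + d)) := by
    apply ContinuousOn.rpow_const continuousOn_id
    intro x hx
    exact Or.inl (by simp only [id]; nlinarith [hx.1])
  have hderiv : ∀ x ∈ Set.Ioo a (a + d),
      HasDerivAt (fun t : ℝ => t ^ α) (α * x ^ (α - 1)) x := by
    intro x hx
    exact Real.hasDerivAt_rpow_const (Or.inl (by nlinarith [hx.1]))
  obtain ⟨ξ, hξmem, hξ⟩ := exists_hasDerivAt_eq_slope (fun t : ℝ => t ^ α)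
    (fun x => α * x ^ (α - 1)) hab hcont hderiv
  have hξa : a < ξ := hξmem.1
  have hξ2a : ξ ≤ 2 * a := by nlinarith [hξmem.2]
  have hξ0 : (0:ℝ) < ξ := lt_trans ha0 hξa
  have hgap : (a + d) ^ α - a ^ α = α * ξ ^ (α - 1) * d := by
    have hd' : a + d - a = d := by ring
    rw [hd'] at hξ
    field_simp at hξ
    linarith [hξ]
  have hbound : ξ ^ (α - 1) ≤ ((2:ℝ) ^ α + 1) * a ^ (α - 1) := by
    rcases le_or_gt 1 α with h1 | h1
    · have h2 : ξ ^ (α - 1) ≤ (2 * a) ^ (α - 1) :=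
        Real.rpow_le_rpow hξ0.le hξ2a (by linarith)
      have h3 : (2 * a) ^ (α - 1) = (2:ℝ) ^ (α - 1) * a ^ (α - 1) :=
        Real.mul_rpow (by norm_num) ha0.le
      have h4 : (2:ℝ) ^ (α - 1) ≤ (2:ℝ) ^ α :=
        Real.rpow_le_rpow_of_exponent_le one_le_two (by linarith)
      have h5 : (0:ℝ) ≤ a ^ (α - 1) := Real.rpow_nonneg ha0.le _
      nlinarith
    · have h2 : ξ ^ (α - 1) ≤ a ^ (α - 1) :=
        Real.rpow_le_rpow_of_nonpos ha0 hξa.le (by linarith)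
      have h5 : (0:ℝ) ≤ a ^ (α - 1) := Real.rpow_nonneg ha0.le _
      have h6 : (0:ℝ) < (2:ℝ) ^ α := Real.rpow_pos_of_pos (by norm_num) _
      nlinarith
  rw [hgap]
  have h7 : (0:ℝ) ≤ ξ ^ (α - 1) := Real.rpow_nonneg hξ0.le _
  nlinarith [mul_le_mul_of_nonneg_left hbound (by positivity : (0:ℝ) ≤ α * d)]

lemma exp_multiple_eq_one (b : ℕ) (hb : 1 ≤ b) (p : ℤ) (θ : ℝ) (hbθ : (b:ℝ) * θ = p)
    (j : ℕ) : Complex.exp (((2 * Real.pi * ((j * b : ℕ):ℝ) * θ : ℝ) : ℂ) * Complex.I) = 1 := by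
  have hreal : (2 * Real.pi * ((j * b : ℕ):ℝ) * θ : ℝ) = ((j:ℤ) * p : ℤ) * (2 * Real.pi) := by
    push_cast
    linear_combination (2 * Real.pi * (j:ℝ)) * hbθ
  rw [show (((2 * Real.pi * ((j * b : ℕ):ℝ) * θ : ℝ)) : ℂ) * Complex.I
      = (((j:ℤ) * p : ℤ) : ℂ) * (2 * (Real.pi : ℂ) * Complex.I) by
    rw [hreal]; push_cast; ring]
  exact Complex.exp_int_mul_two_pi_mul_I _

lemma exp_root_neg_one (b : ℕ) (hb : 1 ≤ b) (p : ℤ) (θ : ℝ) (hbθ : (b:ℝ) * θ = p)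
    (n : ℕ) :
    (Complex.exp (((2 * Real.pi * (n:ℝ) * θ - Real.pi / b : ℝ) : ℂ) * Complex.I)) ^ b = -1 := by
  have hb0 : (b:ℝ) ≠ 0 := by positivity
  rw [← Complex.exp_nat_mul]
  have hreal : (b:ℝ) * (2 * Real.pi * (n:ℝ) * θ - Real.pi / b)
      = ((n:ℤ) * p : ℤ) * (2 * Real.pi) + (-Real.pi) := by
    field_simp
    push_cast
    linear_combination (2 * (n:ℝ)) * hbθ
  rw [show (b:ℂ) * ((((2 * Real.pi * (n:ℝ) * θ - Real.pi / b : ℝ)) : ℂ) * Complex.I)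
      = (((n:ℤ) * p : ℤ) : ℂ) * (2 * (Real.pi:ℂ) * Complex.I) + (-(Real.pi:ℂ) * Complex.I) by
    have : ((b:ℝ) * (2 * Real.pi * (n:ℝ) * θ - Real.pi / b) : ℂ)
        = ((((n:ℤ) * p : ℤ) : ℝ) * (2 * Real.pi) + (-Real.pi) : ℝ) := by exact_mod_cast congrArg Complex.ofReal hreal
    push_cast at this ⊢
    linear_combination Complex.I * this]
  rw [Complex.exp_add, Complex.exp_int_mul_two_pi_mul_I, one_mul]
  rw [show (-(Real.pi:ℂ) * Complex.I) = -((Real.pi:ℂ) * Complex.I) by ring]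
  rw [Complex.exp_neg, Complex.exp_pi_mul_I]
  norm_num

set_option maxHeartbeats 1000000 in
theorem delone_implies_irrational (α θ β : ℝ) (hα : 0 < α) (hβ : β < 1)
    (hcrit : 1 + 2 * α * β = 2 * α)
    (h : AsympRelativelyDense β (spiralLattice α θ) ∨
      AsympUniformlyDiscrete β (spiralLattice α θ)) :
    Irrational θ := by
  by_contra hirr
  obtain ⟨x, hx⟩ : ∃ q : ℚ, (q : ℝ) = θ := not_not.mp hirr
  set b := x.den with hbdef
  set p := x.num with hpdef
  have hb : 1 ≤ b := x.pos
  have hbR : (0:ℝ) < b := by exact_mod_cast hb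
  have hbθ : (b:ℝ) * θ = p := by
    have hden : (x.den : ℝ) ≠ 0 := by positivity
    rw [← hx, Rat.cast_def]
    field_simp
    rw [hbdef, hpdef]
  rcases h with hdense | hdisc
  · -- relative density case
    obtain ⟨r, hr, hdense⟩ := hdense
    obtain ⟨M, hM, hball⟩ := hdense (r + 1) (by linarith)
    have h1β : 0 < 1 - β := by linarith
    set c : ℝ := 1 / ((b:ℝ) * 2 ^ b) with hcdef
    have hcpos : 0 < c := by
      rw [hcdef]; exact div_pos one_pos (mul_pos hbR (by positivity))
    obtain ⟨R, hR1, hRM, hRr⟩ := (((eventually_ge_atTop (1:ℝ)).and ((eventually_ge_atTop M).and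
      ((tendsto_rpow_atTop h1β).eventually_ge_atTop ((r+1)/c + 1)))).exists)
    have hR0 : (0:ℝ) < R := by linarith
    have hkey : (r + 1) * R ^ β < c * R := by
      have h2 : (r+1)/c < R ^ (1-β) := by linarith
      rw [div_lt_iff₀ hcpos] at h2
      have hpow : R ^ (1-β) * R ^ β = R := by
        rw [← Real.rpow_add hR0]; norm_num
      have h4 : (0:ℝ) < R ^ β := Real.rpow_pos_of_pos hR0 β
      calc (r+1) * R ^ β < (R ^ (1-β) * c) * R ^ β := by nlinarith
        _ = c * R := by rw [mul_comm (R ^ (1-β)) c, mul_assoc, hpow]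
    set ω : ℂ := Complex.exp (((Real.pi / b : ℝ) : ℂ) * Complex.I) with hωdef
    have hωabs : ‖ω‖ = 1 := Complex.norm_exp_ofReal_mul_I _
    have hzabs : ‖(R:ℂ) * ω‖ = R := by
      rw [norm_mul, Complex.norm_real, Real.norm_eq_abs, hωabs, mul_one, _root_.abs_of_pos hR0]
    obtain ⟨ζ, hζΓ, hζ1, hζ2⟩ := hball ((R:ℂ) * ω) (by rw [hzabs]; exact hRM)
    obtain ⟨n, rfl⟩ := hζΓ
    set t : ℝ := (n:ℝ) ^ α with htdef
    have ht : 0 ≤ t := Real.rpow_nonneg (Nat.cast_nonneg n) α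
    set v : ℂ := Complex.exp (((2 * Real.pi * (n:ℝ) * θ - Real.pi / b : ℝ) : ℂ) * Complex.I)
      with hvdef
    have hvabs : ‖v‖ = 1 := Complex.norm_exp_ofReal_mul_I _
    have hvb : v ^ b = -1 := exp_root_neg_one b hb p θ hbθ n
    have hfact : Complex.exp (((2 * Real.pi * (n:ℝ) * θ : ℝ) : ℂ) * Complex.I) = ω * v := by
      rw [hωdef, hvdef, ← Complex.exp_add]
      congr 1
      push_cast
      ring
    have hdiff : (R:ℂ) * ω - (((n : ℝ) ^ α : ℝ) : ℂ) *
        Complex.exp ((2 * Real.pi * n * θ : ℝ) * Complex.I)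
        = ω * ((R:ℂ) - (t:ℂ) * v) := by
      rw [show ((2 * Real.pi * (n:ℕ) * θ : ℝ) : ℂ) * Complex.I
        = ((2 * Real.pi * (n:ℝ) * θ : ℝ) : ℂ) * Complex.I by norm_num, hfact, htdef]
      ring
    have hlb := ray_lower_bound b hb v hvabs hvb R t hR0 ht
    have habs2 : ‖(R:ℂ) * ω - (((n : ℝ) ^ α : ℝ) : ℂ) *
        Complex.exp ((2 * Real.pi * n * θ : ℝ) * Complex.I)‖
        = ‖(R:ℂ) - (t:ℂ) * v‖ := by
      rw [hdiff, norm_mul, hωabs, one_mul]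
    rw [habs2, hzabs] at hζ2
    have hceq : c * R = R / ((b:ℝ) * 2 ^ b) := by rw [hcdef]; ring
    linarith [hζ2, hkey, hlb, hceq ▸ hkey]
  · -- uniform discreteness case
    obtain ⟨s, hs, hdisc⟩ := hdisc
    obtain ⟨M, hM, hsub⟩ := hdisc (s/2) (by linarith) (by linarith)
    set K : ℝ := (2:ℝ) ^ α + 1 with hKdef
    have hKpos : 0 < K := by
      have := Real.rpow_pos_of_pos (by norm_num : (0:ℝ) < 2) α; linarith
    have hαβ : α * β = α - 1/2 := by linarith
    have tk : Tendsto (fun k : ℕ => (k:ℝ) * b) atTop atTop :=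
      tendsto_natCast_atTop_atTop.atTop_mul_const hbR
    have e1 := ((tendsto_rpow_atTop hα).comp tk).eventually_ge_atTop (max M 1)
    have e3 := ((tendsto_rpow_atTop (by norm_num : (0:ℝ) < 1/2)).comp tk).eventually_ge_atTop
      (α * K * b / (s/2) + 1)
    obtain ⟨k, hk1, hkα, hk3⟩ := (((eventually_ge_atTop (1:ℕ)).and (e1.and e3)).exists)
    simp only [Function.comp_apply] at hkα hk3
    set a : ℝ := (k:ℝ) * b with hadef
    have hk1R : (1:ℝ) ≤ (k:ℝ) := by exact_mod_cast hk1
    have hb1R : (1:ℝ) ≤ (b:ℝ) := by exact_mod_cast hb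
    have ha1 : 1 ≤ a := by nlinarith
    have ha0 : (0:ℝ) < a := by linarith
    have hda : (b:ℝ) ≤ a := by nlinarith
    have hgap := rpow_gap_le α hα a b ha1 hbR hda
    have haα1 : (1:ℝ) ≤ a ^ α := le_trans (le_max_right M 1) hkα
    have haαpos : (0:ℝ) < a ^ α := by linarith
    have hlt : a ^ α < (a + b) ^ α := Real.rpow_lt_rpow ha0.le (by linarith) hα
    have hzabs : ‖(↑(a ^ α) : ℂ)‖ = a ^ α := by
      rw [Complex.norm_real, Real.norm_eq_abs, _root_.abs_of_pos haαpos]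
    have hβz : (a ^ α) ^ β = a ^ (α - 1/2) := by
      rw [← Real.rpow_mul ha0.le, hαβ]
    have hgap2 : (a + b) ^ α - a ^ α < (s/2) * a ^ (α - 1/2) := by
      have h5 : α * K * b / (s/2) < a ^ (1/2 : ℝ) := by linarith
      have h6 : α * K * b < (s/2) * a ^ (1/2 : ℝ) := by
        rw [div_lt_iff₀ (by linarith : (0:ℝ) < s/2)] at h5; linarith
      have h7 : (0:ℝ) < a ^ (α - 1) := Real.rpow_pos_of_pos ha0 _
      have h8 : a ^ ((1:ℝ)/2) * a ^ (α - 1) = a ^ (α - 1/2) := by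
        rw [← Real.rpow_add ha0]; ring_nf
      calc (a + b) ^ α - a ^ α ≤ α * K * b * a ^ (α - 1) := hgap
        _ < ((s/2) * a ^ (1/2 : ℝ)) * a ^ (α - 1) := by nlinarith
        _ = (s/2) * a ^ (α - 1/2) := by rw [mul_assoc, h8]
    -- memberships
    have hcast1 : ((k * b : ℕ) : ℝ) = a := by push_cast [hadef]; ring
    have hcast2 : (((k+1) * b : ℕ) : ℝ) = a + b := by push_cast [hadef]; ring
    have hmem1 : (↑(a ^ α) : ℂ) ∈ spiralLattice α θ := by
      refine ⟨k * b, ?_⟩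
      rw [show ((2 * Real.pi * ((k*b : ℕ):ℕ) * θ : ℝ) : ℂ) * Complex.I
        = ((2 * Real.pi * ((k*b : ℕ):ℝ) * θ : ℝ) : ℂ) * Complex.I by norm_num]
      rw [exp_multiple_eq_one b hb p θ hbθ k, mul_one, hcast1]
    have hmem2 : (↑((a + b) ^ α) : ℂ) ∈ spiralLattice α θ := by
      refine ⟨(k+1) * b, ?_⟩
      rw [show ((2 * Real.pi * (((k+1)*b : ℕ):ℕ) * θ : ℝ) : ℂ) * Complex.I
        = ((2 * Real.pi * (((k+1)*b : ℕ):ℝ) * θ : ℝ) : ℂ) * Complex.I by norm_num]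
      rw [exp_multiple_eq_one b hb p θ hbθ (k+1), mul_one, hcast2]
    have hzM : M ≤ ‖(↑(a ^ α) : ℂ)‖ := by
      rw [hzabs]; exact le_trans (le_max_left M 1) hkα
    have hS := hsub (↑(a ^ α) : ℂ) hzM
    have hin1 : (↑(a ^ α) : ℂ) ∈ {ζ ∈ spiralLattice α θ | 1 ≤ ‖ζ‖ ∧
        ‖(↑(a ^ α) : ℂ) - ζ‖ < (s/2) * ‖(↑(a ^ α) : ℂ)‖ ^ β} := by
      refine ⟨hmem1, by rw [hzabs]; exact haα1, ?_⟩
      rw [sub_self, norm_zero, hzabs, hβz]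
      have : (0:ℝ) < a ^ (α - 1/2) := Real.rpow_pos_of_pos ha0 _
      nlinarith
    have hin2 : (↑((a + b) ^ α) : ℂ) ∈ {ζ ∈ spiralLattice α θ | 1 ≤ ‖ζ‖ ∧
        ‖(↑(a ^ α) : ℂ) - ζ‖ < (s/2) * ‖(↑(a ^ α) : ℂ)‖ ^ β} := by
      refine ⟨hmem2, ?_, ?_⟩
      · rw [Complex.norm_real, Real.norm_eq_abs, _root_.abs_of_pos (by linarith)]
        linarith
      · rw [hzabs, hβz]
        rw [show (↑(a ^ α) : ℂ) - (↑((a + b) ^ α) : ℂ) = ((a ^ α - (a + b) ^ α : ℝ) : ℂ) by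
          push_cast; ring]
        rw [Complex.norm_real, Real.norm_eq_abs, abs_sub_comm, _root_.abs_of_nonneg (by linarith)]
        exact hgap2
    have heq := hS hin1 hin2
    have heqR : a ^ α = (a + b) ^ α := by exact_mod_cast heq
    linarith
end

section
/- Let θ be an irrational real number, and for t ≥ 1 let Λ(t) = { ((mθ − n)·√t, m/√t) : m, n ∈ ℤ } ⊆ ℝ². The following conditions are mutually equivalent: (i) the family {Λ(t)}_{t≥1} is relatively dense; (ii) the family {Λ(t)}_{t≥1} is uniformly discrete; (iii) θ is badly approximable. -/
private lemma sqrt_le_abs_add (a b : ℝ) : Real.sqrt (a^2 + b^2) ≤ |a| + |b| := by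
  have h : a^2 + b^2 ≤ (|a| + |b|)^2 := by
    nlinarith [abs_nonneg a, abs_nonneg b, sq_abs a, sq_abs b, mul_nonneg (abs_nonneg a) (abs_nonneg b)]
  calc Real.sqrt (a^2+b^2) ≤ Real.sqrt ((|a|+|b|)^2) := Real.sqrt_le_sqrt h
    _ = |a| + |b| := Real.sqrt_sq (by positivity)

private lemma abs_le_of_sq_le' {x B : ℝ} (hB : 0 ≤ B) (h : x^2 ≤ B^2) : |x| ≤ B := by
  nlinarith [sq_abs x, abs_nonneg x]

private lemma abs_le_sqrt_sq_add (a b : ℝ) : |a| ≤ Real.sqrt (a^2+b^2) := by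
  calc |a| = Real.sqrt (a^2) := (Real.sqrt_sq_eq_abs a).symm
    _ ≤ _ := Real.sqrt_le_sqrt (by nlinarith [sq_nonneg b])

private lemma sqrt_sub_le (u1 u2 v1 v2 : ℝ) :
    Real.sqrt ((u1-v1)^2 + (u2-v2)^2) ≤ Real.sqrt (u1^2+u2^2) + Real.sqrt (v1^2+v2^2) := by
  obtain ⟨A, hA⟩ : ∃ A, A = Real.sqrt (u1^2+u2^2) := ⟨_, rfl⟩
  obtain ⟨B, hB⟩ : ∃ B, B = Real.sqrt (v1^2+v2^2) := ⟨_, rfl⟩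
  rw [← hA, ← hB]
  have hA0 : 0 ≤ A := hA ▸ Real.sqrt_nonneg _
  have hB0 : 0 ≤ B := hB ▸ Real.sqrt_nonneg _
  have hA2 : A^2 = u1^2+u2^2 := by rw [hA]; exact Real.sq_sqrt (by positivity)
  have hB2 : B^2 = v1^2+v2^2 := by rw [hB]; exact Real.sq_sqrt (by positivity)
  have key : (u1-v1)^2 + (u2-v2)^2 ≤ (A+B)^2 := by
    have cs : (u1*v1 + u2*v2)^2 ≤ A^2 * B^2 := by nlinarith [sq_nonneg (u1*v2 - u2*v1)]
    have h2 : u1*v1 + u2*v2 ≤ A*B := by nlinarith [mul_nonneg hA0 hB0]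
    have expand : (u1-v1)^2 + (u2-v2)^2 = A^2 + B^2 - 2*(u1*v1 + u2*v2) := by
      rw [hA2, hB2]; ring
    rw [expand]
    nlinarith [h2, mul_nonneg hA0 hB0]
  calc Real.sqrt ((u1-v1)^2 + (u2-v2)^2) ≤ Real.sqrt ((A+B)^2) := Real.sqrt_le_sqrt key
    _ = A+B := Real.sqrt_sq (by positivity)

private lemma half_le_abs_half_sub_int (z : ℤ) : (1:ℝ)/2 ≤ |1/2 - (z:ℝ)| := by
  rcases le_or_gt z 0 with h | h
  · have hz : (z:ℝ) ≤ 0 := by exact_mod_cast h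
    rw [abs_of_pos (by linarith)]
    linarith
  · have hz : (1:ℝ) ≤ z := by exact_mod_cast h
    rw [abs_of_nonpos (by linarith)]
    linarith



/-- The lattice `Λ(t) = { ((mθ − n)√t, m/√t) : m, n ∈ ℤ }`. -/
noncomputable def latticeFamily (θ t : ℝ) : Set (ℝ × ℝ) :=
  {v : ℝ × ℝ | ∃ m n : ℤ,
    v = (((m : ℝ) * θ - (n : ℝ)) * Real.sqrt t, (m : ℝ) / Real.sqrt t)}

/-- Euclidean distance on `ℝ × ℝ`. -/
noncomputable def eDist (a b : ℝ × ℝ) : ℝ :=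
  Real.sqrt ((a.1 - b.1) ^ 2 + (a.2 - b.2) ^ 2)

/-- The family `{Λ(t)}_{t ≥ 1}` is relatively dense. -/
def FamilyRelativelyDense (θ : ℝ) : Prop :=
  ∃ r > 0, ∀ t ≥ (1 : ℝ), ∀ ζ : ℝ × ℝ, ∃ l ∈ latticeFamily θ t, eDist ζ l < r

/-- The family `{Λ(t)}_{t ≥ 1}` is uniformly discrete. -/
def FamilyUniformlyDiscrete (θ : ℝ) : Prop :=
  ∃ s > 0, ∀ t ≥ (1 : ℝ), ∀ ζ : ℝ × ℝ,
    {l ∈ latticeFamily θ t | eDist ζ l < s}.Subsingleton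

/-- `θ` is badly approximable. -/
def BadlyApproximable (θ : ℝ) : Prop :=
  Irrational θ ∧ ∃ c > 0, ∀ p q : ℤ, 1 ≤ q → c ≤ (q : ℝ) * |(q : ℝ) * θ - (p : ℝ)|


private lemma lattice_lower {θ c : ℝ} (hc : 0 < c)
    (hb : ∀ p q : ℤ, 1 ≤ q → c ≤ (q:ℝ) * |(q:ℝ)*θ - (p:ℝ)|)
    {t : ℝ} (ht : 1 ≤ t) (m n : ℤ) (hmn : ¬(m = 0 ∧ n = 0)) :
    min 1 (2*c) ≤ (((m:ℝ)*θ - n) * Real.sqrt t)^2 + ((m:ℝ)/Real.sqrt t)^2 := by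
  have ht0 : (0:ℝ) ≤ t := by linarith
  have hstst : Real.sqrt t * Real.sqrt t = t := Real.mul_self_sqrt ht0
  have hst1 : (1:ℝ) ≤ Real.sqrt t := by
    rw [show (1:ℝ) = Real.sqrt 1 from Real.sqrt_one.symm]
    exact Real.sqrt_le_sqrt ht
  have hst0 : (0:ℝ) < Real.sqrt t := by linarith
  by_cases hm : m = 0
  · subst hm
    have hn : n ≠ 0 := fun h => hmn ⟨rfl, h⟩
    have hn1 : (1:ℝ) ≤ (n:ℝ)^2 := by
      have h1 : (1:ℤ) ≤ n^2 := by
        rcases lt_or_gt_of_ne hn with h | h <;> nlinarith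
      exact_mod_cast h1
    have h2 : (1:ℝ) ≤ (((0:ℤ):ℝ)*θ - n)^2 * (Real.sqrt t * Real.sqrt t) := by
      push_cast
      nlinarith
    calc min 1 (2*c) ≤ 1 := min_le_left _ _
      _ ≤ (((0:ℤ):ℝ)*θ - n)^2 * (Real.sqrt t * Real.sqrt t) := h2
      _ ≤ ((((0:ℤ):ℝ)*θ - n) * Real.sqrt t)^2 + (((0:ℤ):ℝ)/Real.sqrt t)^2 := by
        have : ((((0:ℤ):ℝ))/Real.sqrt t)^2 ≥ 0 := sq_nonneg _
        nlinarith
  · have key : c ≤ |(m:ℝ)| * |(m:ℝ)*θ - (n:ℝ)| := by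
      rcases lt_or_gt_of_ne hm with hneg | hpos
      · have h := hb (-n) (-m) (by omega)
        have e1 : ((-m : ℤ):ℝ) = |(m:ℝ)| := by
          push_cast
          rw [abs_of_neg (by exact_mod_cast hneg : (m:ℝ) < 0)]
        have e2 : |((-m:ℤ):ℝ)*θ - ((-n:ℤ):ℝ)| = |(m:ℝ)*θ - (n:ℝ)| := by
          push_cast
          rw [show (-(m:ℝ))*θ - (-(n:ℝ)) = -((m:ℝ)*θ - (n:ℝ)) from by ring, abs_neg]
        rw [← e1, ← e2]
        exact h
      · have h := hb n m (by omega)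
        have e1 : ((m : ℤ):ℝ) = |(m:ℝ)| := by
          rw [abs_of_pos (by exact_mod_cast hpos : (0:ℝ) < (m:ℝ))]
        rw [← e1]
        exact h
    have hxy : (((m:ℝ)*θ - n) * Real.sqrt t) * ((m:ℝ)/Real.sqrt t) = (m:ℝ)*((m:ℝ)*θ - n) := by
      field_simp
    have habs : c ≤ |(((m:ℝ)*θ - n) * Real.sqrt t) * ((m:ℝ)/Real.sqrt t)| := by
      rw [hxy, abs_mul]
      exact key
    calc min 1 (2*c) ≤ 2*c := min_le_right _ _
      _ ≤ (((m:ℝ)*θ - n) * Real.sqrt t)^2 + ((m:ℝ)/Real.sqrt t)^2 := by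
        nlinarith [sq_nonneg (|(((m:ℝ)*θ - n) * Real.sqrt t)| - |((m:ℝ)/Real.sqrt t)|),
          sq_abs (((m:ℝ)*θ - n) * Real.sqrt t), sq_abs ((m:ℝ)/Real.sqrt t),
          abs_mul ((((m:ℝ)*θ - n) * Real.sqrt t)) (((m:ℝ)/Real.sqrt t)), habs]

private lemma exists_short {θ : ℝ} (hθ : Irrational θ) (hnb : ¬BadlyApproximable θ)
    {ε : ℝ} (hε : 0 < ε) :
    ∃ t : ℝ, 1 ≤ t ∧ ∃ m n : ℤ, ¬(m = 0 ∧ n = 0) ∧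
      (((m:ℝ)*θ - n) * Real.sqrt t)^2 + ((m:ℝ)/Real.sqrt t)^2 < ε^2 := by
  have h : ∀ c > (0:ℝ), ∃ p q : ℤ, 1 ≤ q ∧ (q:ℝ) * |(q:ℝ)*θ - (p:ℝ)| < c := by
    intro c hc
    by_contra hcon
    push_neg at hcon
    exact hnb ⟨hθ, c, hc, fun p q hq => hcon p q hq⟩
  obtain ⟨p, q, hq1, hlt⟩ := h (min (ε^2/2) (1/2)) (by positivity)
  have hq0 : (0:ℝ) < (q:ℝ) := by exact_mod_cast hq1
  have hδ0 : (0:ℝ) < |(q:ℝ)*θ - p| := by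
    rw [abs_pos, sub_ne_zero]
    have : Irrational ((q:ℝ)*θ) := by
      have := Irrational.intCast_mul hθ (by omega : q ≠ 0)
      rwa [show ((q:ℝ)*θ) = ((q:ℤ):ℝ)*θ from by norm_num] at this
    exact this.ne_int p
  set δ := |(q:ℝ)*θ - p| with hδdef
  have hδlt : δ < 1 := by
    have h1 : (1:ℝ)*δ ≤ (q:ℝ)*δ := by
      apply mul_le_mul_of_nonneg_right _ hδ0.le
      exact_mod_cast hq1
    have : (q:ℝ)*δ < 1/2 := lt_of_lt_of_le hlt (min_le_right _ _)
    linarith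
  refine ⟨(q:ℝ)/δ, ?_, q, p, ?_, ?_⟩
  · rw [le_div_iff₀ hδ0]
    have hq1' : (1:ℝ) ≤ (q:ℝ) := by exact_mod_cast hq1
    linarith
  · rintro ⟨h1, -⟩
    omega
  · have ht0 : (0:ℝ) ≤ (q:ℝ)/δ := by positivity
    have hstsq : Real.sqrt ((q:ℝ)/δ) ^ 2 = (q:ℝ)/δ := Real.sq_sqrt ht0
    have hst0 : (0:ℝ) < Real.sqrt ((q:ℝ)/δ) := by
      apply Real.sqrt_pos.mpr
      positivity
    have hx2 : (((q:ℝ)*θ - p) * Real.sqrt ((q:ℝ)/δ))^2 = (q:ℝ)*δ := by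
      rw [mul_pow, hstsq, show ((q:ℝ)*θ-p)^2 = δ^2 from (sq_abs _).symm]
      field_simp
    have hy2 : ((q:ℝ)/Real.sqrt ((q:ℝ)/δ))^2 = (q:ℝ)*δ := by
      have hqne : (q:ℝ) ≠ 0 := ne_of_gt hq0
      have hδne : δ ≠ 0 := ne_of_gt hδ0
      rw [div_pow, hstsq]
      field_simp
    rw [hx2, hy2]
    have : (q:ℝ)*δ < ε^2/2 := lt_of_lt_of_le hlt (min_le_left _ _)
    linarith

private lemma eDist_tri (ζ a b : ℝ × ℝ) : eDist a b ≤ eDist ζ a + eDist ζ b := by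
  unfold eDist
  have h := sqrt_sub_le (ζ.1 - a.1) (ζ.2 - a.2) (ζ.1 - b.1) (ζ.2 - b.2)
  have e : (ζ.1 - a.1 - (ζ.1 - b.1))^2 + (ζ.2 - a.2 - (ζ.2 - b.2))^2
      = (a.1 - b.1)^2 + (a.2 - b.2)^2 := by ring
  rw [e] at h
  exact h

set_option maxHeartbeats 1000000 in
private lemma imp_3_2 {θ : ℝ} (hθ : Irrational θ) (h3 : BadlyApproximable θ) :
    FamilyUniformlyDiscrete θ := by
  revert h3
  rintro ⟨-, c, hc, hb⟩
  have hmin0 : (0:ℝ) < min 1 (2*c) := lt_min one_pos (by linarith)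
  refine ⟨Real.sqrt (min 1 (2*c)) / 2, by positivity, ?_⟩
  intro t ht ζ l hl l' hl'
  obtain ⟨⟨m, n, rfl⟩, hdl⟩ := hl
  obtain ⟨⟨m', n', rfl⟩, hdl'⟩ := hl'
  have ht0 : (0:ℝ) ≤ t := by linarith
  by_cases hd : m - m' = 0 ∧ n - n' = 0
  · obtain ⟨h1, h2⟩ := hd
    have hm : m = m' := by omega
    have hn : n = n' := by omega
    rw [hm, hn]
  · exfalso
    have hlow := lattice_lower hc hb ht (m - m') (n - n') hd
    have hs2 : Real.sqrt (min 1 (2*c)) ^ 2 = min 1 (2*c) := Real.sq_sqrt hmin0.le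
    have htri := eDist_tri ζ
      ((((m:ℝ)*θ - n) * Real.sqrt t, (m:ℝ)/Real.sqrt t))
      ((((m':ℝ)*θ - n') * Real.sqrt t, (m':ℝ)/Real.sqrt t))
    have hlt : eDist ((((m:ℝ)*θ - n) * Real.sqrt t, (m:ℝ)/Real.sqrt t))
        ((((m':ℝ)*θ - n') * Real.sqrt t, (m':ℝ)/Real.sqrt t))
        < Real.sqrt (min 1 (2*c)) := by linarith
    have heq : eDist ((((m:ℝ)*θ - n) * Real.sqrt t, (m:ℝ)/Real.sqrt t))
        ((((m':ℝ)*θ - n') * Real.sqrt t, (m':ℝ)/Real.sqrt t))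
        = Real.sqrt (((((m - m' : ℤ):ℝ)*θ - ((n - n' : ℤ):ℝ)) * Real.sqrt t)^2
          + (((m - m' : ℤ):ℝ)/Real.sqrt t)^2) := by
      unfold eDist
      congr 1
      push_cast
      ring
    rw [heq] at hlt
    have hge : Real.sqrt (min 1 (2*c))
        ≤ Real.sqrt (((((m - m' : ℤ):ℝ)*θ - ((n - n' : ℤ):ℝ)) * Real.sqrt t)^2
          + (((m - m' : ℤ):ℝ)/Real.sqrt t)^2) := Real.sqrt_le_sqrt hlow
    linarith

set_option maxHeartbeats 1000000 in
private lemma imp_2_3 {θ : ℝ} (hθ : Irrational θ) (h2 : FamilyUniformlyDiscrete θ) :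
    BadlyApproximable θ := by
  revert h2
  intro h2
  by_contra hnb
  obtain ⟨s, hs, hdisc⟩ := h2
  obtain ⟨t, ht, m, n, hmn, hshort⟩ := exists_short hθ hnb hs
  have ht0 : (0:ℝ) ≤ t := by linarith
  have hst0 : (0:ℝ) < Real.sqrt t := Real.sqrt_pos.mpr (by linarith)
  have h00 : ((0,0) : ℝ × ℝ) ∈ latticeFamily θ t := ⟨0, 0, by norm_num⟩
  have hl : ((((m:ℝ)*θ - n) * Real.sqrt t, (m:ℝ)/Real.sqrt t) : ℝ × ℝ)
      ∈ latticeFamily θ t := ⟨m, n, rfl⟩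
  have hd1 : eDist ((0,0) : ℝ × ℝ) ((0,0) : ℝ × ℝ) < s := by
    unfold eDist
    norm_num
    exact hs
  have hd2 : eDist ((0,0) : ℝ × ℝ) ((((m:ℝ)*θ - n) * Real.sqrt t, (m:ℝ)/Real.sqrt t)) < s := by
    unfold eDist
    rw [Real.sqrt_lt' hs]
    nlinarith [hshort]
  have hkey := hdisc t ht (0,0) ⟨h00, hd1⟩ ⟨hl, hd2⟩
  have h2' : (m:ℝ)/Real.sqrt t = 0 := (congrArg Prod.snd hkey).symm
  have hm0 : m = 0 := by
    field_simp [hst0.ne'] at h2'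
    simpa using h2'
  have hmR : (m:ℝ) = 0 := by exact_mod_cast hm0
  have h1' : ((m:ℝ)*θ - n) * Real.sqrt t = 0 := (congrArg Prod.fst hkey).symm
  rw [hmR] at h1'
  have hn0 : n = 0 := by
    rcases mul_eq_zero.mp h1' with h | h
    · have : (n:ℝ) = 0 := by linarith [h]
      exact_mod_cast this
    · exact absurd h hst0.ne'
  exact hmn ⟨hm0, hn0⟩

set_option maxHeartbeats 1000000 in
private lemma imp_1_3 {θ : ℝ} (hθ : Irrational θ) (h1 : FamilyRelativelyDense θ) :
    BadlyApproximable θ := by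
  revert h1
  intro h1
  by_contra hnb
  obtain ⟨r, hr, hdense⟩ := h1
  obtain ⟨t, ht, m, n, hmn, hshort⟩ :=
    exists_short hθ hnb (ε := 1/(8*r)) (by positivity)
  have ht0 : (0:ℝ) ≤ t := by linarith
  have hst0 : (0:ℝ) < Real.sqrt t := Real.sqrt_pos.mpr (by linarith)
  obtain ⟨x₀, hx₀def⟩ : ∃ x₀ : ℝ, x₀ = ((m:ℝ)*θ - n) * Real.sqrt t := ⟨_, rfl⟩
  obtain ⟨y₀, hy₀def⟩ : ∃ y₀ : ℝ, y₀ = (m:ℝ)/Real.sqrt t := ⟨_, rfl⟩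
  rw [← hx₀def, ← hy₀def] at hshort
  have hN0 : 0 < x₀^2 + y₀^2 := by
    by_cases hm : m = 0
    · have hn : n ≠ 0 := fun h => hmn ⟨hm, h⟩
      have hx : x₀ ≠ 0 := by
        rw [hx₀def, hm]
        push_cast
        simp only [zero_mul, zero_sub]
        intro h
        rcases mul_eq_zero.mp h with h | h
        · have : (n:ℝ) = 0 := by linarith
          exact hn (by exact_mod_cast this)
        · exact hst0.ne' h
      nlinarith [pow_two_pos_of_ne_zero hx, sq_nonneg y₀]
    · have hy : y₀ ≠ 0 := by
        rw [hy₀def]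
        exact div_ne_zero (by exact_mod_cast hm) hst0.ne'
      nlinarith [pow_two_pos_of_ne_zero hy, sq_nonneg x₀]
  obtain ⟨l, hl, hlt⟩ := hdense t ht
    (-y₀/(2*(x₀^2 + y₀^2)), x₀/(2*(x₀^2 + y₀^2)))
  obtain ⟨m', n', rfl⟩ := hl
  obtain ⟨xl, hxldef⟩ : ∃ xl : ℝ, xl = ((m':ℝ)*θ - n') * Real.sqrt t := ⟨_, rfl⟩
  obtain ⟨yl, hyldef⟩ : ∃ yl : ℝ, yl = (m':ℝ)/Real.sqrt t := ⟨_, rfl⟩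
  obtain ⟨E, hEdef⟩ : ∃ E : ℝ,
      E = eDist (-y₀/(2*(x₀^2 + y₀^2)), x₀/(2*(x₀^2 + y₀^2)))
        (((m':ℝ)*θ - n') * Real.sqrt t, (m':ℝ)/Real.sqrt t) := ⟨_, rfl⟩
  rw [← hEdef] at hlt
  have hE0 : 0 ≤ E := hEdef ▸ Real.sqrt_nonneg _
  have habs1 : |(-y₀/(2*(x₀^2 + y₀^2))) - xl| ≤ E := by
    rw [hEdef, hxldef]
    exact abs_le_sqrt_sq_add _ _
  have habs2 : |(x₀/(2*(x₀^2 + y₀^2))) - yl| ≤ E := by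
    rw [hEdef, hyldef]
    have h := abs_le_sqrt_sq_add ((x₀/(2*(x₀^2 + y₀^2))) - (m':ℝ)/Real.sqrt t)
      ((-y₀/(2*(x₀^2 + y₀^2))) - ((m':ℝ)*θ - n') * Real.sqrt t)
    unfold eDist
    refine h.trans (le_of_eq ?_)
    congr 1
    ring
  have hint : x₀ * yl - y₀ * xl = ((m*n' - m'*n : ℤ) : ℝ) := by
    rw [hx₀def, hy₀def, hxldef, hyldef]
    push_cast
    field_simp
    ring
  have hfζ : x₀ * (x₀/(2*(x₀^2 + y₀^2))) - y₀ * (-y₀/(2*(x₀^2 + y₀^2))) = 1/2 := by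
    field_simp
    ring
  have hkey : (1:ℝ)/2 - ((m*n' - m'*n : ℤ) : ℝ)
      = x₀ * ((x₀/(2*(x₀^2 + y₀^2))) - yl) - y₀ * ((-y₀/(2*(x₀^2 + y₀^2))) - xl) := by
    linear_combination hint - hfζ
  have hε : (0:ℝ) < 1/(8*r) := by positivity
  have hx₀ : |x₀| ≤ 1/(8*r) := abs_le_of_sq_le' hε.le (by nlinarith [hshort, sq_nonneg y₀])
  have hy₀ : |y₀| ≤ 1/(8*r) := abs_le_of_sq_le' hε.le (by nlinarith [hshort, sq_nonneg x₀])
  have hhalf := half_le_abs_half_sub_int (m*n' - m'*n)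
  rw [hkey] at hhalf
  have h1 : |x₀ * ((x₀/(2*(x₀^2 + y₀^2))) - yl) - y₀ * ((-y₀/(2*(x₀^2 + y₀^2))) - xl)|
      ≤ |x₀| * |(x₀/(2*(x₀^2 + y₀^2))) - yl| + |y₀| * |(-y₀/(2*(x₀^2 + y₀^2))) - xl| := by
    calc _ ≤ |x₀ * ((x₀/(2*(x₀^2 + y₀^2))) - yl)| + |y₀ * ((-y₀/(2*(x₀^2 + y₀^2))) - xl)| :=
          abs_sub _ _
      _ = _ := by rw [abs_mul, abs_mul]
  have c1 : |x₀| * |(x₀/(2*(x₀^2 + y₀^2))) - yl| ≤ (1/(8*r)) * E :=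
    mul_le_mul hx₀ habs2 (abs_nonneg _) hε.le
  have c2 : |y₀| * |(-y₀/(2*(x₀^2 + y₀^2))) - xl| ≤ (1/(8*r)) * E :=
    mul_le_mul hy₀ habs1 (abs_nonneg _) hε.le
  have hfin : (1:ℝ)/2 ≤ 2 * ((1/(8*r)) * E) := by linarith
  have hmul : (1/(8*r)) * E < (1/(8*r)) * r := by
    exact mul_lt_mul_of_pos_left hlt hε
  have heq4 : (1/(8*r)) * r = 1/8 := by
    field_simp
  linarith

set_option maxHeartbeats 1000000 in
private lemma imp_3_1 {θ : ℝ} (hθ : Irrational θ) (h3 : BadlyApproximable θ) :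
    FamilyRelativelyDense θ := by
  revert h3
  rintro ⟨-, c, hc, hb⟩
  have hs₂0 : (0:ℝ) < min 1 (2*c) := lt_min one_pos (by linarith)
  have hs₂1 : min 1 (2*c) ≤ 1 := min_le_left _ _
  obtain ⟨B, hBdef⟩ : ∃ B : ℝ, B = Real.sqrt (1/2 + 1/(min 1 (2*c))) := ⟨_, rfl⟩
  have hB0 : 0 ≤ B := hBdef ▸ Real.sqrt_nonneg _
  have hB2 : B^2 = 1/2 + 1/(min 1 (2*c)) := by
    rw [hBdef]; exact Real.sq_sqrt (by positivity)
  refine ⟨2 + B, by positivity, ?_⟩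
  intro t ht ζ
  have ht0 : (0:ℝ) ≤ t := by linarith
  have hst1 : (1:ℝ) ≤ Real.sqrt t := by
    rw [show (1:ℝ) = Real.sqrt 1 from Real.sqrt_one.symm]
    exact Real.sqrt_le_sqrt ht
  have hst0 : (0:ℝ) < Real.sqrt t := by linarith
  -- Dirichlet's theorem gives a short primitive vector direction
  have hnfl : 0 < ⌊Real.sqrt t⌋₊ := Nat.floor_pos.mpr hst1
  obtain ⟨p, q, hq0, hqle, habs0⟩ := Real.exists_int_int_abs_mul_sub_le θ hnfl
  have hqst : (q:ℝ) ≤ Real.sqrt t := by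
    calc (q:ℝ) ≤ (⌊Real.sqrt t⌋₊ : ℝ) := by exact_mod_cast hqle
      _ ≤ Real.sqrt t := Nat.floor_le (by linarith)
  have habs : |(q:ℝ)*θ - p| ≤ 1/Real.sqrt t := by
    refine habs0.trans ?_
    exact one_div_le_one_div_of_le hst0 (le_of_lt (Nat.lt_floor_add_one _))
  -- divide by the gcd
  have hq0' : q ≠ 0 := by omega
  obtain ⟨g, hgdef⟩ : ∃ g : ℕ, g = Int.gcd q p := ⟨_, rfl⟩
  have hg0 : 0 < g := hgdef ▸ Int.gcd_pos_iff.mpr (Or.inl hq0')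
  obtain ⟨m₀, hm₀def⟩ : ∃ m₀ : ℤ, m₀ = q / g := ⟨_, rfl⟩
  obtain ⟨n₀, hn₀def⟩ : ∃ n₀ : ℤ, n₀ = p / g := ⟨_, rfl⟩
  have hgq : (g:ℤ) * m₀ = q := by
    rw [hm₀def, hgdef]; exact Int.mul_ediv_cancel' (Int.gcd_dvd_left _ _)
  have hgp : (g:ℤ) * n₀ = p := by
    rw [hn₀def, hgdef]; exact Int.mul_ediv_cancel' (Int.gcd_dvd_right _ _)
  have hcop : Int.gcd m₀ n₀ = 1 := by
    rw [hm₀def, hn₀def, hgdef]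
    exact Int.gcd_div_gcd_div_gcd (by rw [← hgdef]; exact hg0)
  have hm₀pos : 0 < m₀ := by
    rcases le_or_gt m₀ 0 with h | h
    · exfalso
      have hgZ : (0:ℤ) < (g:ℤ) := by exact_mod_cast hg0
      have hnp : (g:ℤ) * m₀ ≤ 0 := mul_nonpos_of_nonneg_of_nonpos hgZ.le h
      rw [hgq] at hnp
      omega
    · exact h
  -- Bezout
  have hAB : (1:ℤ) = m₀ * Int.gcdA m₀ n₀ + n₀ * Int.gcdB m₀ n₀ := by
    rw [← Int.gcd_eq_gcd_ab, hcop]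
    norm_num
  obtain ⟨ia, hiadef⟩ : ∃ ia : ℤ, ia = -(Int.gcdB m₀ n₀) := ⟨_, rfl⟩
  obtain ⟨ib, hibdef⟩ : ∃ ib : ℤ, ib = Int.gcdA m₀ n₀ := ⟨_, rfl⟩
  have hbez : m₀ * ib - n₀ * ia = 1 := by
    rw [hiadef, hibdef]; linear_combination -hAB
  -- the short primitive vector (x₀, y₀)
  obtain ⟨x₀, hx₀def⟩ : ∃ x : ℝ, x = ((m₀:ℝ)*θ - n₀) * Real.sqrt t := ⟨_, rfl⟩
  obtain ⟨y₀, hy₀def⟩ : ∃ y : ℝ, y = (m₀:ℝ)/Real.sqrt t := ⟨_, rfl⟩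
  have hNs : min 1 (2*c) ≤ x₀^2 + y₀^2 := by
    rw [hx₀def, hy₀def]
    exact lattice_lower hc hb ht m₀ n₀ (by rintro ⟨h, -⟩; omega)
  have hN0 : 0 < x₀^2 + y₀^2 := lt_of_lt_of_le hs₂0 hNs
  have hgR1 : (1:ℝ) ≤ (g:ℝ) := by exact_mod_cast hg0
  have hqR : (q:ℝ) = (g:ℝ) * (m₀:ℝ) := by exact_mod_cast hgq.symm
  have hpR : (p:ℝ) = (g:ℝ) * (n₀:ℝ) := by exact_mod_cast hgp.symm
  have hx₀abs : |x₀| ≤ 1 := by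
    have h2 : |(g:ℝ) * x₀| = |(q:ℝ)*θ - p| * Real.sqrt t := by
      rw [hx₀def, show (g:ℝ) * (((m₀:ℝ)*θ - n₀) * Real.sqrt t)
          = ((q:ℝ)*θ - p) * Real.sqrt t from by rw [hqR, hpR]; ring,
        abs_mul, abs_of_pos hst0]
    have h3 : (g:ℝ) * |x₀| ≤ 1 := by
      rw [show (g:ℝ) * |x₀| = |(g:ℝ)| * |x₀| from by
          rw [abs_of_nonneg (by linarith : (0:ℝ) ≤ (g:ℝ))],
        ← abs_mul, h2]
      calc |(q:ℝ)*θ - p| * Real.sqrt t ≤ (1/Real.sqrt t) * Real.sqrt t :=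
            mul_le_mul_of_nonneg_right habs hst0.le
        _ = 1 := by field_simp
    have h4 := mul_le_mul_of_nonneg_right hgR1 (abs_nonneg x₀)
    linarith
  have hy₀pos : 0 < y₀ := by
    rw [hy₀def]
    exact div_pos (by exact_mod_cast hm₀pos) hst0
  have hy₀le : y₀ ≤ 1 := by
    have hm₀q : (m₀:ℝ) ≤ (q:ℝ) := by
      have hm₀R : (0:ℝ) < (m₀:ℝ) := by exact_mod_cast hm₀pos
      have h5 := mul_le_mul_of_nonneg_right hgR1 hm₀R.le
      rw [hqR]
      linarith
    rw [hy₀def, div_le_one hst0]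
    linarith
  have hN2 : x₀^2 + y₀^2 ≤ 2 := by
    nlinarith [sq_abs x₀, hx₀abs, abs_nonneg x₀, hy₀pos, hy₀le]
  -- the second basis vector (xw, yw), reduced mod (x₀, y₀)
  obtain ⟨xv, hxvdef⟩ : ∃ x : ℝ, x = ((ia:ℝ)*θ - ib) * Real.sqrt t := ⟨_, rfl⟩
  obtain ⟨yv, hyvdef⟩ : ∃ y : ℝ, y = (ia:ℝ)/Real.sqrt t := ⟨_, rfl⟩
  obtain ⟨k₀, hk₀def⟩ : ∃ k : ℤ, k = round ((x₀*xv + y₀*yv) / (x₀^2 + y₀^2)) := ⟨_, rfl⟩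
  obtain ⟨xw, hxwdef⟩ : ∃ x : ℝ,
    x = ((((ia - k₀*m₀) : ℤ):ℝ)*θ - (((ib - k₀*n₀) : ℤ):ℝ)) * Real.sqrt t := ⟨_, rfl⟩
  obtain ⟨yw, hywdef⟩ : ∃ y : ℝ, y = (((ia - k₀*m₀) : ℤ):ℝ)/Real.sqrt t := ⟨_, rfl⟩
  have hxw : xw = xv - (k₀:ℝ)*x₀ := by
    rw [hxwdef, hxvdef, hx₀def]; push_cast; ring
  have hyw : yw = yv - (k₀:ℝ)*y₀ := by
    rw [hywdef, hyvdef, hy₀def]; push_cast; ring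
  have hdet : x₀*yw - y₀*xw = 1 := by
    have h1 : x₀*yv - y₀*xv = ((m₀*ib - n₀*ia : ℤ):ℝ) := by
      rw [hx₀def, hy₀def, hxvdef, hyvdef]
      push_cast
      field_simp
      ring
    calc x₀*yw - y₀*xw = x₀*yv - y₀*xv := by rw [hxw, hyw]; ring
      _ = ((m₀*ib - n₀*ia : ℤ):ℝ) := h1
      _ = 1 := by rw [hbez]; norm_num
  have hPabs : |x₀*xw + y₀*yw| ≤ (x₀^2 + y₀^2)/2 := by
    have h1 := abs_sub_round ((x₀*xv + y₀*yv) / (x₀^2 + y₀^2))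
    rw [← hk₀def] at h1
    have h2 : x₀*xw + y₀*yw
        = ((x₀*xv + y₀*yv) / (x₀^2 + y₀^2) - (k₀:ℝ)) * (x₀^2 + y₀^2) := by
      rw [hxw, hyw]
      field_simp
      ring
    rw [h2, abs_mul, abs_of_pos hN0]
    calc _ ≤ (1/2) * (x₀^2+y₀^2) := mul_le_mul_of_nonneg_right h1 hN0.le
      _ = _ := by ring
  have hlag : (x₀^2+y₀^2) * (xw^2 + yw^2) = (x₀*xw + y₀*yw)^2 + 1 := by
    have h1 : (x₀^2+y₀^2)*(xw^2+yw^2)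
        = (x₀*xw + y₀*yw)^2 + (x₀*yw - y₀*xw)^2 := by ring
    rw [h1, hdet]
    norm_num
  have hw2 : xw^2 + yw^2 ≤ 1/2 + 1/(min 1 (2*c)) := by
    have hP2 : (x₀*xw + y₀*yw)^2 ≤ ((x₀^2+y₀^2)/2)^2 := by
      nlinarith [sq_abs (x₀*xw + y₀*yw), abs_nonneg (x₀*xw + y₀*yw), hPabs, hN0]
    have hinv : 1 ≤ (x₀^2+y₀^2) * (1/(min 1 (2*c))) := by
      rw [mul_one_div, le_div_iff₀ hs₂0]
      linarith
    have hmain : (x₀^2+y₀^2) * (xw^2+yw^2)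
        ≤ (x₀^2+y₀^2) * (1/2 + 1/(min 1 (2*c))) := by
      rw [hlag, mul_add]
      nlinarith [hP2, hinv, hN2, hN0]
    exact le_of_mul_le_mul_left hmain hN0
  have hxwB : |xw| ≤ B := abs_le_of_sq_le' hB0 (by rw [hB2]; nlinarith [sq_nonneg yw])
  have hywB : |yw| ≤ B := abs_le_of_sq_le' hB0 (by rw [hB2]; nlinarith [sq_nonneg xw])
  -- solve for the target point and round the coefficients
  obtain ⟨xc, hxcdef⟩ : ∃ x : ℝ, x = ζ.1*yw - ζ.2*xw := ⟨_, rfl⟩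
  obtain ⟨yc, hycdef⟩ : ∃ y : ℝ, y = x₀*ζ.2 - y₀*ζ.1 := ⟨_, rfl⟩
  obtain ⟨α, hαdef⟩ : ∃ a : ℤ, a = round xc := ⟨_, rfl⟩
  obtain ⟨β, hβdef⟩ : ∃ b : ℤ, b = round yc := ⟨_, rfl⟩
  refine ⟨((((α*m₀ + β*(ia - k₀*m₀) : ℤ):ℝ)*θ
      - ((α*n₀ + β*(ib - k₀*n₀) : ℤ):ℝ)) * Real.sqrt t,
    (((α*m₀ + β*(ia - k₀*m₀) : ℤ):ℝ))/Real.sqrt t),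
    ⟨α*m₀ + β*(ia - k₀*m₀), α*n₀ + β*(ib - k₀*n₀), rfl⟩, ?_⟩
  have hL1 : (((α*m₀ + β*(ia - k₀*m₀) : ℤ):ℝ)*θ
      - ((α*n₀ + β*(ib - k₀*n₀) : ℤ):ℝ)) * Real.sqrt t
      = (α:ℝ)*x₀ + (β:ℝ)*xw := by
    rw [hx₀def, hxwdef]
    push_cast
    ring
  have hL2 : (((α*m₀ + β*(ia - k₀*m₀) : ℤ):ℝ))/Real.sqrt t
      = (α:ℝ)*y₀ + (β:ℝ)*yw := by
    rw [hy₀def, hywdef]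
    push_cast
    ring
  have hsol1 : xc*x₀ + yc*xw = ζ.1 := by
    rw [hxcdef, hycdef]
    linear_combination ζ.1 * hdet
  have hsol2 : xc*y₀ + yc*yw = ζ.2 := by
    rw [hxcdef, hycdef]
    linear_combination ζ.2 * hdet
  have hα1 := abs_sub_round xc
  have hβ1 := abs_sub_round yc
  rw [← hαdef] at hα1
  rw [← hβdef] at hβ1
  have he1 : ζ.1 - ((α:ℝ)*x₀ + (β:ℝ)*xw) = (xc - (α:ℝ))*x₀ + (yc - (β:ℝ))*xw := by
    linear_combination -hsol1
  have he2 : ζ.2 - ((α:ℝ)*y₀ + (β:ℝ)*yw) = (xc - (α:ℝ))*y₀ + (yc - (β:ℝ))*yw := by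
    linear_combination -hsol2
  have hy₀abs : |y₀| ≤ 1 := by rw [abs_of_pos hy₀pos]; exact hy₀le
  have hb1 : |(xc - (α:ℝ))*x₀ + (yc - (β:ℝ))*xw| ≤ 1/2 + B/2 := by
    calc |(xc - (α:ℝ))*x₀ + (yc - (β:ℝ))*xw|
        ≤ |(xc - (α:ℝ))*x₀| + |(yc - (β:ℝ))*xw| := abs_add_le _ _
      _ = |xc - (α:ℝ)| * |x₀| + |yc - (β:ℝ)| * |xw| := by rw [abs_mul, abs_mul]
      _ ≤ (1/2)*1 + (1/2)*B := add_le_add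
          (mul_le_mul hα1 hx₀abs (abs_nonneg _) (by norm_num))
          (mul_le_mul hβ1 hxwB (abs_nonneg _) (by norm_num))
      _ = 1/2 + B/2 := by ring
  have hb2 : |(xc - (α:ℝ))*y₀ + (yc - (β:ℝ))*yw| ≤ 1/2 + B/2 := by
    calc |(xc - (α:ℝ))*y₀ + (yc - (β:ℝ))*yw|
        ≤ |(xc - (α:ℝ))*y₀| + |(yc - (β:ℝ))*yw| := abs_add_le _ _
      _ = |xc - (α:ℝ)| * |y₀| + |yc - (β:ℝ)| * |yw| := by rw [abs_mul, abs_mul]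
      _ ≤ (1/2)*1 + (1/2)*B := add_le_add
          (mul_le_mul hα1 hy₀abs (abs_nonneg _) (by norm_num))
          (mul_le_mul hβ1 hywB (abs_nonneg _) (by norm_num))
      _ = 1/2 + B/2 := by ring
  have hgoal : eDist ζ ((((α*m₀ + β*(ia - k₀*m₀) : ℤ):ℝ)*θ
      - ((α*n₀ + β*(ib - k₀*n₀) : ℤ):ℝ)) * Real.sqrt t,
      (((α*m₀ + β*(ia - k₀*m₀) : ℤ):ℝ))/Real.sqrt t)
      = Real.sqrt (((xc - (α:ℝ))*x₀ + (yc - (β:ℝ))*xw)^2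
        + ((xc - (α:ℝ))*y₀ + (yc - (β:ℝ))*yw)^2) := by
    unfold eDist
    rw [show ((((α*m₀ + β*(ia - k₀*m₀) : ℤ):ℝ)*θ
        - ((α*n₀ + β*(ib - k₀*n₀) : ℤ):ℝ)) * Real.sqrt t,
        (((α*m₀ + β*(ia - k₀*m₀) : ℤ):ℝ))/Real.sqrt t).1
        = (α:ℝ)*x₀ + (β:ℝ)*xw from hL1]
    rw [show ((((α*m₀ + β*(ia - k₀*m₀) : ℤ):ℝ)*θ
        - ((α*n₀ + β*(ib - k₀*n₀) : ℤ):ℝ)) * Real.sqrt t,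
        (((α*m₀ + β*(ia - k₀*m₀) : ℤ):ℝ))/Real.sqrt t).2
        = (α:ℝ)*y₀ + (β:ℝ)*yw from hL2]
    rw [he1, he2]
  rw [hgoal]
  calc Real.sqrt (((xc - (α:ℝ))*x₀ + (yc - (β:ℝ))*xw)^2
        + ((xc - (α:ℝ))*y₀ + (yc - (β:ℝ))*yw)^2)
      ≤ |(xc - (α:ℝ))*x₀ + (yc - (β:ℝ))*xw|
        + |(xc - (α:ℝ))*y₀ + (yc - (β:ℝ))*yw| := sqrt_le_abs_add _ _
    _ ≤ (1/2 + B/2) + (1/2 + B/2) := add_le_add hb1 hb2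
    _ < 2 + B := by linarith

theorem lattice_family_tfae (θ : ℝ) (hθ : Irrational θ) :
    List.TFAE [FamilyRelativelyDense θ, FamilyUniformlyDiscrete θ,
      BadlyApproximable θ] := by
  tfae_have 3 → 2 := imp_3_2 hθ
  tfae_have 2 → 3 := imp_2_3 hθ
  tfae_have 1 → 3 := imp_1_3 hθ
  tfae_have 3 → 1 := imp_3_1 hθ
  tfae_finish
end

section
/- Let −∞ < β < 1, r > 0, Γ ⊆ ℂ, and Γ' = { γ ∈ Γ : |γ| ≥ 1 }. The following conditions are mutually equivalent: (i) for every r₁ > r there exists M₁ > 0 such that for every z ∈ ℂ with |z| ≥ M₁ there exists ζ ∈ Γ' with |z − ζ| < r₁·|z|^β; (ii) for every r₂ > r there exists M₂ > 0 such that for every z ∈ ℂ with |z| ≥ M₂ there exists ζ ∈ Γ' with |z − ζ| < r₂·|ζ|^β; (iii) for every r₃ > r there exists M₃ > 0 such that for every z ∈ ℂ with |z| ≥ M₃ there exists ζ ∈ Γ' with |z − ζ| < (r₃/2)·(|z|^β + |ζ|^β). -/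
open Filter

set_option maxHeartbeats 1000000 in
lemma key_lemma (β : ℝ) (hβ : β < 1) (C : ℝ) (hC : 0 < C) (t : ℝ) (ht : 1 < t) :
    ∃ M, 1 ≤ M ∧ ∀ x y : ℝ, M ≤ x → 1 ≤ y → |x - y| < C * (x ^ β + y ^ β) →
      y ^ β < t * x ^ β ∧ x ^ β < t * y ^ β := by
  have hcont : ContinuousAt (fun s : ℝ => s ^ β) 1 :=
    Real.continuousAt_rpow_const 1 β (Or.inl one_ne_zero)
  have htend : Tendsto (fun s : ℝ => s ^ β) (nhds 1) (nhds 1) := by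
    have := hcont.tendsto
    rwa [Real.one_rpow] at this
  have hev : ∀ᶠ s in nhds (1:ℝ), s ^ β < t := htend.eventually_lt_const ht
  obtain ⟨δ, hδ, hδp⟩ := Metric.eventually_nhds_iff.mp hev
  obtain ⟨b, hb0, hb1, hβb⟩ : ∃ b : ℝ, 0 ≤ b ∧ b < 1 ∧ β ≤ b :=
    ⟨max β 0, le_max_right _ _, max_lt hβ one_pos, le_max_left _ _⟩
  obtain ⟨ε, hε0, hεδ, hεhalf⟩ : ∃ ε : ℝ, 0 < ε ∧ 3 * ε < δ ∧ ε ≤ 1/2 := by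
    refine ⟨min (δ/4) (1/2), lt_min (by linarith) (by norm_num), ?_, min_le_right _ _⟩
    have : min (δ/4) (1/2) ≤ δ/4 := min_le_left _ _
    linarith
  obtain ⟨M, hM1, hdecay⟩ : ∃ M : ℝ, 1 ≤ M ∧ ∀ x : ℝ, M ≤ x → 3 * C * x ^ (b - 1) ≤ ε := by
    refine ⟨max 1 ((3*C/ε) ^ (1/(1-b))), le_max_left _ _, fun x hx => ?_⟩
    have hx0 : 0 < x := lt_of_lt_of_le one_pos (le_trans (le_max_left _ _) hx)
    have hbase : 0 < 3*C/ε := by positivity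
    have hMx : (3*C/ε) ^ (1/(1-b)) ≤ x := le_trans (le_max_right _ _) hx
    have h1 : x ^ (b-1) ≤ ((3*C/ε) ^ (1/(1-b))) ^ (b-1) :=
      Real.rpow_le_rpow_of_nonpos (by positivity) hMx (by linarith)
    have h2 : ((3*C/ε) ^ (1/(1-b))) ^ (b-1) = (3*C/ε) ^ ((1/(1-b)) * (b-1)) := by
      rw [← Real.rpow_mul hbase.le]
    have hne : (1:ℝ) - b ≠ 0 := by linarith
    have h3 : (1/(1-b)) * (b-1) = -1 := by field_simp; ring
    have h4 : (3*C/ε) ^ (-1 : ℝ) = ε/(3*C) := by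
      rw [Real.rpow_neg_one]; field_simp
    rw [h2, h3, h4] at h1
    calc 3 * C * x ^ (b-1) ≤ 3 * C * (ε/(3*C)) :=
          mul_le_mul_of_nonneg_left h1 (by positivity)
      _ = ε := by field_simp
  refine ⟨M, hM1, fun x y hx hy hxy => ?_⟩
  have hx1 : 1 ≤ x := le_trans hM1 hx
  have hx0 : 0 < x := lt_of_lt_of_le one_pos hx1
  have hy0 : 0 < y := lt_of_lt_of_le one_pos hy
  have hxβb : x ^ β ≤ x ^ b := Real.rpow_le_rpow_of_exponent_le hx1 hβb
  have hyβb : y ^ β ≤ y ^ b := Real.rpow_le_rpow_of_exponent_le hy hβb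
  have hxy' : |x - y| < C * (x ^ b + y ^ b) := by
    have := mul_le_mul_of_nonneg_left (add_le_add hxβb hyβb) hC.le
    linarith
  have hy2x : y < 2 * x := by
    rcases le_or_gt y x with h | h
    · linarith
    · have hxb_yb : x ^ b ≤ y ^ b := Real.rpow_le_rpow hx0.le h.le hb0
      have hyM : M ≤ y := le_trans hx h.le
      have hdy := hdecay y hyM
      have hyb : y ^ b = y ^ (b-1) * y := by
        rw [← Real.rpow_add_one hy0.ne' (b-1)]; ring_nf
      have h1 : y - x ≤ |x - y| := by rw [abs_sub_comm]; exact le_abs_self _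
      have h2 : y - x < 2 * C * (y ^ (b-1) * y) := by
        rw [← hyb]
        nlinarith [mul_le_mul_of_nonneg_left hxb_yb hC.le]
      have h3 : 2 * C * (y ^ (b-1) * y) ≤ ε * y := by
        have := mul_le_mul_of_nonneg_right hdy hy0.le
        nlinarith [Real.rpow_pos_of_pos hy0 (b-1)]
      nlinarith
  have hmain : |x - y| < ε * x := by
    have h2xb : (2*x) ^ b = 2 ^ b * x ^ b := Real.mul_rpow (by norm_num) hx0.le
    have h2b : (2:ℝ) ^ b ≤ 2 := by
      calc (2:ℝ) ^ b ≤ (2:ℝ) ^ (1:ℝ) := Real.rpow_le_rpow_of_exponent_le (by norm_num) hb1.le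
        _ = 2 := Real.rpow_one 2
    have hxbpos : 0 < x ^ b := Real.rpow_pos_of_pos hx0 b
    have hyb2 : y ^ b ≤ 2 * x ^ b := by
      calc y ^ b ≤ (2*x) ^ b := Real.rpow_le_rpow hy0.le hy2x.le hb0
        _ = 2 ^ b * x ^ b := h2xb
        _ ≤ 2 * x ^ b := mul_le_mul_of_nonneg_right h2b hxbpos.le
    have hxb : x ^ b = x ^ (b-1) * x := by
      rw [← Real.rpow_add_one hx0.ne' (b-1)]; ring_nf
    have hdx := hdecay x hx
    calc |x - y| < C * (x ^ b + y ^ b) := hxy'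
      _ ≤ 3 * C * x ^ b := by nlinarith [mul_le_mul_of_nonneg_left hyb2 hC.le]
      _ = 3 * C * x ^ (b-1) * x := by rw [hxb]; ring
      _ ≤ ε * x := mul_le_mul_of_nonneg_right hdx hx0.le
  have hr1 : |y/x - 1| < δ := by
    have heq : y/x - 1 = (y - x)/x := by field_simp
    rw [heq, abs_div, abs_of_pos hx0, abs_sub_comm, div_lt_iff₀ hx0]
    nlinarith [mul_lt_mul_of_pos_right (show ε < δ by linarith) hx0]
  have hylb : (1 - ε) * x < y := by
    have : x - y ≤ |x - y| := le_abs_self _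
    nlinarith
  have hr2 : |x/y - 1| < δ := by
    have heq : x/y - 1 = (x - y)/y := by field_simp
    rw [heq, abs_div, abs_of_pos hy0, div_lt_iff₀ hy0]
    have hyhalf : x/2 < y := by nlinarith
    calc |x - y| < ε * x := hmain
      _ ≤ δ * (x/2) := by nlinarith [mul_le_mul_of_nonneg_right (show ε ≤ δ/2 by linarith) hx0.le]
      _ < δ * y := by nlinarith
  have hq1 : (y/x) ^ β < t := hδp (by rwa [Real.dist_eq])
  have hq2 : (x/y) ^ β < t := hδp (by rwa [Real.dist_eq])
  rw [Real.div_rpow hy0.le hx0.le] at hq1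
  rw [Real.div_rpow hx0.le hy0.le] at hq2
  have hxβ : 0 < x ^ β := Real.rpow_pos_of_pos hx0 β
  have hyβ : 0 < y ^ β := Real.rpow_pos_of_pos hy0 β
  exact ⟨(div_lt_iff₀ hxβ).mp hq1, (div_lt_iff₀ hyβ).mp hq2⟩
theorem relatively_dense_characterizations (β r : ℝ) (hβ : β < 1) (hr : 0 < r)
    (Γ : Set ℂ) (Γ' : Set ℂ) (hΓ' : Γ' = {γ ∈ Γ | 1 ≤ ‖γ‖}) :
    List.TFAE
      [∀ r₁ > r, ∃ M₁ > 0, ∀ z : ℂ, M₁ ≤ ‖z‖ →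
          ∃ ζ ∈ Γ', ‖z - ζ‖ < r₁ * ‖z‖ ^ β,
        ∀ r₂ > r, ∃ M₂ > 0, ∀ z : ℂ, M₂ ≤ ‖z‖ →
          ∃ ζ ∈ Γ', ‖z - ζ‖ < r₂ * ‖ζ‖ ^ β,
        ∀ r₃ > r, ∃ M₃ > 0, ∀ z : ℂ, M₃ ≤ ‖z‖ →
          ∃ ζ ∈ Γ', ‖z - ζ‖ < r₃ / 2 * (‖z‖ ^ β + ‖ζ‖ ^ β)] := by
  have habs : ∀ ζ : ℂ, ζ ∈ Γ' → 1 ≤ ‖ζ‖ := by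
    intro ζ hζ; rw [hΓ'] at hζ; exact hζ.2
  have hdiff : ∀ z ζ : ℂ, |‖z‖ - ‖ζ‖| ≤ ‖z - ζ‖ :=
    fun z ζ => abs_norm_sub_norm_le z ζ
  tfae_have 1 → 2 := by
    intro h1 r₂ hr₂
    obtain ⟨r', hr'1, hr'2⟩ : ∃ r', r < r' ∧ r' < r₂ := ⟨(r+r₂)/2, by linarith, by linarith⟩
    have hr'0 : 0 < r' := lt_trans hr hr'1
    obtain ⟨t, ht, htr⟩ : ∃ t, 1 < t ∧ r' * t = r₂ :=
      ⟨r₂/r', (one_lt_div hr'0).mpr hr'2, by field_simp⟩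
    obtain ⟨M, hM1, hkey⟩ := key_lemma β hβ r' hr'0 t ht
    obtain ⟨M₁, hM₁, h⟩ := h1 r' hr'1
    refine ⟨max M₁ M, lt_of_lt_of_le hM₁ (le_max_left _ _), fun z hz => ?_⟩
    obtain ⟨ζ, hζΓ, hlt⟩ := h z (le_trans (le_max_left _ _) hz)
    refine ⟨ζ, hζΓ, ?_⟩
    have hy := habs ζ hζΓ
    have hyβ : 0 < ‖ζ‖ ^ β := Real.rpow_pos_of_pos (lt_of_lt_of_le one_pos hy) β
    have hxO : M ≤ ‖z‖ := le_trans (le_max_right _ _) hz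
    have hin : |‖z‖ - ‖ζ‖| <
        r' * (‖z‖ ^ β + ‖ζ‖ ^ β) := by
      have h1 := hdiff z ζ
      nlinarith [mul_pos hr'0 hyβ]
    obtain ⟨hq1, hq2⟩ := hkey _ _ hxO hy hin
    calc ‖z - ζ‖ < r' * ‖z‖ ^ β := hlt
      _ ≤ r' * (t * ‖ζ‖ ^ β) := mul_le_mul_of_nonneg_left hq2.le hr'0.le
      _ = r₂ * ‖ζ‖ ^ β := by rw [← htr]; ring
  tfae_have 2 → 3 := by
    intro h2 r₃ hr₃
    obtain ⟨r', hr'1, hr'2, hr'3⟩ : ∃ r', r < r' ∧ r' < r₃ ∧ r₃/2 < r' :=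
      ⟨(r+r₃)/2, by linarith, by linarith, by linarith⟩
    have hr'0 : 0 < r' := lt_trans hr hr'1
    obtain ⟨t, ht, htr⟩ : ∃ t, 1 < t ∧ r' * t = r₃ :=
      ⟨r₃/r', (one_lt_div hr'0).mpr hr'2, by field_simp⟩
    obtain ⟨M, hM1, hkey⟩ := key_lemma β hβ r' hr'0 t ht
    obtain ⟨M₂, hM₂, h⟩ := h2 r' hr'1
    refine ⟨max M₂ M, lt_of_lt_of_le hM₂ (le_max_left _ _), fun z hz => ?_⟩
    obtain ⟨ζ, hζΓ, hlt⟩ := h z (le_trans (le_max_left _ _) hz)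
    refine ⟨ζ, hζΓ, ?_⟩
    have hy := habs ζ hζΓ
    have hx1 : 1 ≤ ‖z‖ := le_trans hM1 (le_trans (le_max_right _ _) hz)
    have hxβ : 0 < ‖z‖ ^ β := Real.rpow_pos_of_pos (lt_of_lt_of_le one_pos hx1) β
    have hyβ : 0 < ‖ζ‖ ^ β := Real.rpow_pos_of_pos (lt_of_lt_of_le one_pos hy) β
    have hxO : M ≤ ‖z‖ := le_trans (le_max_right _ _) hz
    have hin : |‖z‖ - ‖ζ‖| <
        r' * (‖z‖ ^ β + ‖ζ‖ ^ β) := by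
      have h1 := hdiff z ζ
      nlinarith [mul_pos hr'0 hxβ]
    obtain ⟨hq1, hq2⟩ := hkey _ _ hxO hy hin
    have hfinal : r' * ‖ζ‖ ^ β ≤
        r₃ / 2 * (‖z‖ ^ β + ‖ζ‖ ^ β) := by
      nlinarith [mul_le_mul_of_nonneg_left hq1.le (show (0:ℝ) ≤ r' - r₃/2 by linarith),
        mul_nonneg (mul_nonneg (by linarith : (0:ℝ) ≤ r₃) (by linarith : (0:ℝ) ≤ t - 1)) hxβ.le]
    linarith
  tfae_have 3 → 1 := by
    intro h3 r₁ hr₁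
    obtain ⟨r', hr'1, hr'2⟩ : ∃ r', r < r' ∧ r' < r₁ := ⟨(r+r₁)/2, by linarith, by linarith⟩
    have hr'0 : 0 < r' := lt_trans hr hr'1
    obtain ⟨t, ht, htr⟩ : ∃ t, 1 < t ∧ r' * t = r₁ :=
      ⟨r₁/r', (one_lt_div hr'0).mpr hr'2, by field_simp⟩
    obtain ⟨M, hM1, hkey⟩ := key_lemma β hβ r' hr'0 t ht
    obtain ⟨M₃, hM₃, h⟩ := h3 r' hr'1
    refine ⟨max M₃ M, lt_of_lt_of_le hM₃ (le_max_left _ _), fun z hz => ?_⟩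
    obtain ⟨ζ, hζΓ, hlt⟩ := h z (le_trans (le_max_left _ _) hz)
    refine ⟨ζ, hζΓ, ?_⟩
    have hy := habs ζ hζΓ
    have hx1 : 1 ≤ ‖z‖ := le_trans hM1 (le_trans (le_max_right _ _) hz)
    have hxβ : 0 < ‖z‖ ^ β := Real.rpow_pos_of_pos (lt_of_lt_of_le one_pos hx1) β
    have hyβ : 0 < ‖ζ‖ ^ β := Real.rpow_pos_of_pos (lt_of_lt_of_le one_pos hy) β
    have hxO : M ≤ ‖z‖ := le_trans (le_max_right _ _) hz
    have hin : |‖z‖ - ‖ζ‖| <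
        r' * (‖z‖ ^ β + ‖ζ‖ ^ β) := by
      have h1 := hdiff z ζ
      nlinarith
    obtain ⟨hq1, hq2⟩ := hkey _ _ hxO hy hin
    have ha : r'/2 * ‖ζ‖ ^ β < r'/2 * (t * ‖z‖ ^ β) :=
      mul_lt_mul_of_pos_left hq1 (by linarith)
    have hb : r'/2 * (t * ‖z‖ ^ β) = r₁/2 * ‖z‖ ^ β := by
      rw [show r'/2 * (t * ‖z‖ ^ β) = (r' * t) * ‖z‖ ^ β / 2 by ring, htr]
      ring
    have hc : r₁/2 * ‖z‖ ^ β ≤ r₁ * ‖z‖ ^ β := by nlinarith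
    nlinarith [mul_le_mul_of_nonneg_right hr'2.le hxβ.le]
  tfae_finish
end

section
/- Let −∞ < β < 1, s > 0, let Γ ⊆ ℂ be locally finite (i.e., { ζ ∈ Γ : |ζ| < r } is finite for every r > 0), and let Γ' = { γ ∈ Γ : |γ| ≥ 1 }. The following conditions are mutually equivalent: (i) for every s₁ with 0 < s₁ < s there exists M₁ > 0 such that for every z ∈ ℂ with |z| ≥ M₁ the set { ζ ∈ Γ' : |z − ζ| < s₁·|z|^β } has at most one element; (ii) for every s₂ with 0 < s₂ < s there exists M₂ > 0 such that for every z ∈ ℂ with |z| ≥ M₂ the set { ζ ∈ Γ' : |z − ζ| < s₂·|ζ|^β } has at most one element; (iii) for every s₃ with 0 < s₃ < s there exists M₃ > 0 such that for every z ∈ ℂ with |z| ≥ M₃ the set { ζ ∈ Γ' : |z − ζ| < (s₃/2)·(|z|^β + |ζ|^β) } has at most one element. -/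
open Real Set

private lemma ratio_rpow {β t u x y : ℝ} (ht : u ^ |β| ≤ t) (hu : 1 ≤ u)
    (hy : 0 < y) (hyx : y ≤ x) (hxu : x ≤ u * y) :
    x ^ β ≤ t * y ^ β ∧ y ^ β ≤ t * x ^ β := by
  have hx : 0 < x := lt_of_lt_of_le hy hyx
  have hu0 : 0 < u := lt_of_lt_of_le one_pos hu
  have ht1 : 1 ≤ t := le_trans (by
    calc (1:ℝ) = u ^ (0:ℝ) := (Real.rpow_zero u).symm
      _ ≤ u ^ |β| := Real.rpow_le_rpow_of_exponent_le hu (abs_nonneg β)) ht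
  rcases le_or_gt 0 β with hβ0 | hβ0
  · have habs : |β| = β := abs_of_nonneg hβ0
    constructor
    · calc x ^ β ≤ (u * y) ^ β := Real.rpow_le_rpow hx.le hxu hβ0
        _ = u ^ β * y ^ β := Real.mul_rpow hu0.le hy.le
        _ ≤ t * y ^ β := by
            apply mul_le_mul_of_nonneg_right _ (Real.rpow_nonneg hy.le β)
            rw [← habs]; exact ht
    · calc y ^ β ≤ x ^ β := Real.rpow_le_rpow hy.le hyx hβ0
        _ ≤ t * x ^ β := le_mul_of_one_le_left (Real.rpow_nonneg hx.le β) ht1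
  · have habs : |β| = -β := abs_of_neg hβ0
    constructor
    · calc x ^ β ≤ y ^ β := Real.rpow_le_rpow_of_nonpos hy hyx hβ0.le
        _ ≤ t * y ^ β := le_mul_of_one_le_left (Real.rpow_nonneg hy.le β) ht1
    · have h1 : (1:ℝ) ≤ t * u ^ β := by
        have h2 : u ^ (-β) ≤ t := by rw [← habs]; exact ht
        have hub : 0 < u ^ β := Real.rpow_pos_of_pos hu0 β
        calc (1:ℝ) = u ^ (-β) * u ^ β := by
              rw [← Real.rpow_add hu0]; simp
          _ ≤ t * u ^ β := mul_le_mul_of_nonneg_right h2 hub.le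
      calc y ^ β = 1 * y ^ β := (one_mul _).symm
        _ ≤ (t * u ^ β) * y ^ β :=
            mul_le_mul_of_nonneg_right h1 (Real.rpow_nonneg hy.le β)
        _ = t * ((u * y) ^ β) := by rw [Real.mul_rpow hu0.le hy.le]; ring
        _ ≤ t * x ^ β := by
            apply mul_le_mul_of_nonneg_left _ (le_trans zero_le_one ht1)
            exact Real.rpow_le_rpow_of_nonpos hx hxu hβ0.le

private lemma key_lemma_s6 (β s₁ s₂ : ℝ) (hβ : β < 1) (hs₁ : 0 < s₁) (h12 : s₁ < s₂) :
    ∃ M : ℝ, 1 ≤ M ∧ ∀ a b : ℝ, M ≤ a → 1 ≤ b →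
      |a - b| < s₁ * max a b ^ max β 0 →
      a ^ β ≤ s₂ / s₁ * b ^ β ∧ b ^ β ≤ s₂ / s₁ * a ^ β := by
  set t := s₂ / s₁ with htdef
  have ht : 1 < t := (one_lt_div hs₁).2 h12
  have ht0 : 0 < t := lt_trans one_pos ht
  set u := t ^ (1 / (|β| + 1)) with hudef
  have hd0 : 0 < 1 / (|β| + 1) := by positivity
  have hu : 1 < u := (Real.one_lt_rpow_iff_of_pos ht0).2 (Or.inl ⟨ht, hd0⟩)
  have hu0 : 0 < u := lt_trans one_pos hu
  have hut : u ^ |β| ≤ t := by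
    have heq : u ^ (|β| + 1) = t := by
      rw [hudef, ← Real.rpow_mul ht0.le, one_div,
        inv_mul_cancel₀ (by positivity : |β| + 1 ≠ 0), Real.rpow_one]
    calc u ^ |β| ≤ u ^ (|β| + 1) :=
          Real.rpow_le_rpow_of_exponent_le hu.le (by linarith)
      _ = t := heq
  set ε := 1 - u⁻¹ with hεdef
  have hε : 0 < ε := by
    rw [hεdef]
    have h5 : u⁻¹ < 1 := inv_lt_one_of_one_lt₀ hu
    linarith
  set β' := max β 0 with hβ'def
  have hβ'0 : 0 ≤ β' := le_max_right _ _
  have hβ'1 : β' < 1 := max_lt hβ one_pos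
  have h1β : 0 < 1 - β' := by linarith
  refine ⟨max 1 ((s₁ / ε) ^ (1 / (1 - β'))), le_max_left _ _, ?_⟩
  intro a b ha hb habd
  have ha1 : 1 ≤ a := le_trans (le_max_left _ _) ha
  have ha0 : 0 < a := lt_of_lt_of_le one_pos ha1
  set m := max a b with hmdef
  set n := min a b with hndef
  have hm1 : 1 ≤ m := le_trans ha1 (le_max_left _ _)
  have hm0 : 0 < m := lt_of_lt_of_le one_pos hm1
  have hn1 : 1 ≤ n := le_min ha1 hb
  have hn0 : 0 < n := lt_of_lt_of_le one_pos hn1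
  have hnm : n ≤ m := min_le_max
  -- s₁ * m ^ (β' - 1) ≤ ε
  have hstep : s₁ * m ^ (β' - 1) ≤ ε := by
    have hMa : (s₁ / ε) ^ (1 / (1 - β')) ≤ m :=
      le_trans (le_trans (le_max_right _ _) ha) (le_max_left a b)
    have hm2 : s₁ / ε ≤ m ^ (1 - β') := by
      calc s₁ / ε = ((s₁ / ε) ^ (1 / (1 - β'))) ^ (1 - β') := by
            rw [← Real.rpow_mul (by positivity)]
            rw [one_div, inv_mul_cancel₀ (by positivity : 1 - β' ≠ 0), Real.rpow_one]
        _ ≤ m ^ (1 - β') := Real.rpow_le_rpow (by positivity) hMa h1β.le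
    have hpos : 0 < s₁ / ε := by positivity
    have hinv : (m ^ (1 - β'))⁻¹ ≤ (s₁ / ε)⁻¹ := inv_anti₀ hpos hm2
    have hrw : m ^ (β' - 1) = (m ^ (1 - β'))⁻¹ := by
      rw [show β' - 1 = -(1 - β') by ring, Real.rpow_neg hm0.le]
    rw [hrw]
    calc s₁ * (m ^ (1 - β'))⁻¹ ≤ s₁ * (s₁ / ε)⁻¹ :=
          mul_le_mul_of_nonneg_left hinv hs₁.le
      _ = ε := by field_simp
  -- m - n < ε * m
  have hmn : m - n < ε * m := by
    have h1 : m - n = |a - b| := by rw [hmdef, hndef, max_sub_min_eq_abs, abs_sub_comm]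
    have h2 : s₁ * m ^ β' = s₁ * m ^ (β' - 1) * m := by
      rw [mul_assoc, ← Real.rpow_add_one hm0.ne' (β' - 1)]
      norm_num
    calc m - n = |a - b| := h1
      _ < s₁ * m ^ β' := habd
      _ = s₁ * m ^ (β' - 1) * m := h2
      _ ≤ ε * m := mul_le_mul_of_nonneg_right hstep hm0.le
  have hmu : m ≤ u * n := by
    have h3 : u⁻¹ * m < n := by
      have : (1 - ε) * m < n := by linarith
      rw [hεdef] at this; linarith [this]
    calc m = u * (u⁻¹ * m) := by field_simp
      _ ≤ u * n := mul_le_mul_of_nonneg_left h3.le hu0.le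
  obtain ⟨h1, h2⟩ := ratio_rpow hut hu.le hn0 hnm hmu
  rcases le_total a b with h | h
  · rw [hmdef, hndef, max_eq_right h, min_eq_left h] at h1 h2
    exact ⟨h2, h1⟩
  · rw [hmdef, hndef, max_eq_left h, min_eq_right h] at h1 h2
    exact ⟨h1, h2⟩

private lemma transfer (β s : ℝ) (hβ : β < 1) (Γ' : Set ℂ)
    (hΓ'1 : ∀ ζ ∈ Γ', 1 ≤ ‖ζ‖)
    (D₁ D₂ : ℝ → ℝ → ℝ → ℝ)
    (h₁ : ∀ s' x y, 0 < s' → D₁ s' x y ≤ s' * max (x ^ β) (y ^ β))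
    (h₂ : ∀ s' x y, 0 < s' → s' * min (x ^ β) (y ^ β) ≤ D₂ s' x y)
    (hc : ∀ s', 0 < s' → s' < s → ∃ M > 0, ∀ z : ℂ, M ≤ ‖z‖ →
        {ζ ∈ Γ' | ‖z - ζ‖ <
          D₂ s' (‖z‖) (‖ζ‖)}.Subsingleton) :
    ∀ s', 0 < s' → s' < s → ∃ M > 0, ∀ z : ℂ, M ≤ ‖z‖ →
        {ζ ∈ Γ' | ‖z - ζ‖ <
          D₁ s' (‖z‖) (‖ζ‖)}.Subsingleton := by
  intro s₁ hs₁0 hs₁s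
  set s₂ := (s₁ + s) / 2 with hs₂def
  have hs₂0 : 0 < s₂ := by rw [hs₂def]; linarith
  have h12 : s₁ < s₂ := by rw [hs₂def]; linarith
  have h2s : s₂ < s := by rw [hs₂def]; linarith
  obtain ⟨M₂, hM₂0, hM₂⟩ := hc s₂ hs₂0 h2s
  obtain ⟨M, hM1, hkey⟩ := key_lemma_s6 β s₁ s₂ hβ hs₁0 h12
  refine ⟨max M M₂, lt_of_lt_of_le hM₂0 (le_max_right _ _), ?_⟩
  intro z hz
  apply (hM₂ z (le_trans (le_max_right _ _) hz)).anti
  rintro ζ ⟨hζΓ, hζd⟩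
  refine ⟨hζΓ, ?_⟩
  set x := ‖z‖ with hxdef
  set y := ‖ζ‖ with hydef
  have hy1 : 1 ≤ y := hΓ'1 ζ hζΓ
  have hxM : M ≤ x := le_trans (le_max_left _ _) hz
  have hx1 : 1 ≤ x := le_trans hM1 hxM
  have hxy : |x - y| ≤ ‖z - ζ‖ := abs_norm_sub_norm_le z ζ
  have hmaxle : max (x ^ β) (y ^ β) ≤ max x y ^ max β 0 := by
    have hb' : β ≤ max β 0 := le_max_left _ _
    have hh1 : x ^ β ≤ max x y ^ max β 0 :=
      le_trans (Real.rpow_le_rpow_of_exponent_le hx1 hb')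
        (Real.rpow_le_rpow (zero_le_one.trans hx1) (le_max_left x y) (le_max_right β 0))
    have hh2 : y ^ β ≤ max x y ^ max β 0 :=
      le_trans (Real.rpow_le_rpow_of_exponent_le hy1 hb')
        (Real.rpow_le_rpow (zero_le_one.trans hy1) (le_max_right x y) (le_max_right β 0))
    exact max_le hh1 hh2
  have hd1 : ‖z - ζ‖ < s₁ * max (x ^ β) (y ^ β) :=
    lt_of_lt_of_le hζd (h₁ s₁ x y hs₁0)
  have habd : |x - y| < s₁ * max x y ^ max β 0 :=
    lt_of_le_of_lt hxy
      (lt_of_lt_of_le hd1 (mul_le_mul_of_nonneg_left hmaxle hs₁0.le))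
  obtain ⟨hra, hrb⟩ := hkey x y hxM hy1 habd
  have hmm : s₁ * max (x ^ β) (y ^ β) ≤ s₂ * min (x ^ β) (y ^ β) := by
    rcases le_total (x ^ β) (y ^ β) with h | h
    · rw [max_eq_right h, min_eq_left h]
      calc s₁ * y ^ β ≤ s₁ * (s₂ / s₁ * x ^ β) :=
            mul_le_mul_of_nonneg_left hrb hs₁0.le
        _ = s₂ * x ^ β := by field_simp
    · rw [max_eq_left h, min_eq_right h]
      calc s₁ * x ^ β ≤ s₁ * (s₂ / s₁ * y ^ β) :=
            mul_le_mul_of_nonneg_left hra hs₁0.le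
        _ = s₂ * y ^ β := by field_simp
  exact lt_of_lt_of_le hd1 (le_trans hmm (h₂ s₂ x y hs₂0))

theorem uniformly_discrete_characterizations (β s : ℝ) (hβ : β < 1) (hs : 0 < s)
    (Γ : Set ℂ) (hloc : ∀ r > 0, {ζ ∈ Γ | ‖ζ‖ < r}.Finite)
    (Γ' : Set ℂ) (hΓ' : Γ' = {γ ∈ Γ | 1 ≤ ‖γ‖}) :
    List.TFAE
      [∀ s₁, 0 < s₁ → s₁ < s → ∃ M₁ > 0, ∀ z : ℂ, M₁ ≤ ‖z‖ →
          {ζ ∈ Γ' | ‖z - ζ‖ < s₁ * ‖z‖ ^ β}.Subsingleton,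
        ∀ s₂, 0 < s₂ → s₂ < s → ∃ M₂ > 0, ∀ z : ℂ, M₂ ≤ ‖z‖ →
          {ζ ∈ Γ' | ‖z - ζ‖ < s₂ * ‖ζ‖ ^ β}.Subsingleton,
        ∀ s₃, 0 < s₃ → s₃ < s → ∃ M₃ > 0, ∀ z : ℂ, M₃ ≤ ‖z‖ →
          {ζ ∈ Γ' | ‖z - ζ‖ <
            s₃ / 2 * (‖z‖ ^ β + ‖ζ‖ ^ β)}.Subsingleton] := by
  have hΓ'1 : ∀ ζ ∈ Γ', 1 ≤ ‖ζ‖ := by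
    intro ζ hζ; rw [hΓ'] at hζ; exact hζ.2
  tfae_have 1 → 2 := by
    intro h1
    exact transfer β s hβ Γ' hΓ'1 (fun s' x y => s' * y ^ β) (fun s' x y => s' * x ^ β)
      (fun s' x y hs' => mul_le_mul_of_nonneg_left (le_max_right _ _) hs'.le)
      (fun s' x y hs' => mul_le_mul_of_nonneg_left (min_le_left _ _) hs'.le) h1
  tfae_have 2 → 3 := by
    intro h2
    exact transfer β s hβ Γ' hΓ'1
      (fun s' x y => s' / 2 * (x ^ β + y ^ β)) (fun s' x y => s' * y ^ β)
      (fun s' x y hs' => by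
        have ha := le_max_left (x ^ β) (y ^ β)
        have hb := le_max_right (x ^ β) (y ^ β)
        nlinarith)
      (fun s' x y hs' => mul_le_mul_of_nonneg_left (min_le_right _ _) hs'.le) h2
  tfae_have 3 → 1 := by
    intro h3
    exact transfer β s hβ Γ' hΓ'1
      (fun s' x y => s' * x ^ β) (fun s' x y => s' / 2 * (x ^ β + y ^ β))
      (fun s' x y hs' => mul_le_mul_of_nonneg_left (le_max_left _ _) hs'.le)
      (fun s' x y hs' => by
        have ha := min_le_left (x ^ β) (y ^ β)
        have hb := min_le_right (x ^ β) (y ^ β)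
        nlinarith) h3
  tfae_finish
end

section
/- Let r', r > 0 with r < r' < 2r, let 0 < β < 1, and let z, ζ ∈ ℂ. If |z − ζ| < r·|z|^β and |z| ≥ (r·r'/(2(r' − r)))^{1/(1−β)}, then |z − ζ| < (r'/2)·|z|^β + (r'/2)·|ζ|^β. -/
theorem lemma_15 (r r' β : ℝ) (hr : 0 < r) (hr' : r < r') (hr'2 : r' < 2 * r)
    (hβ0 : 0 < β) (hβ1 : β < 1) (z ζ : ℂ)
    (h1 : ‖z - ζ‖ < r * ‖z‖ ^ β)
    (h2 : (r * r' / (2 * (r' - r))) ^ (1 / (1 - β)) ≤ ‖z‖) :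
    ‖z - ζ‖ < r' / 2 * ‖z‖ ^ β + r' / 2 * ‖ζ‖ ^ β := by
  set a := ‖z‖ with ha
  set b := ‖ζ‖ with hb
  have hrr : 0 < r' - r := by linarith
  have hr'0 : 0 < r' := by linarith
  have hM : 0 < r * r' / (2 * (r' - r)) :=
    div_pos (mul_pos hr hr'0) (by linarith)
  have ha0 : 0 < a := lt_of_lt_of_le (Real.rpow_pos_of_pos hM _) h2
  have h1β : 0 < 1 - β := by linarith
  -- key : a ^ (1 - β) ≥ M
  have key : r * r' / (2 * (r' - r)) ≤ a ^ (1 - β) := by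
    have := Real.rpow_le_rpow (Real.rpow_pos_of_pos hM (1 / (1 - β))).le h2 h1β.le
    rwa [← Real.rpow_mul hM.le, one_div, inv_mul_cancel₀ h1β.ne', Real.rpow_one] at this
  have hsplit : a = a ^ β * a ^ (1 - β) := by
    rw [← Real.rpow_add ha0]
    norm_num
  have hp : 0 < a ^ β := Real.rpow_pos_of_pos ha0 β
  have hq : 0 < a ^ (1 - β) := Real.rpow_pos_of_pos ha0 (1 - β)
  have hra : r * a ^ β ≤ 2 * (r' - r) / r' * a := by
    rw [div_le_iff₀ (by linarith : (0:ℝ) < 2 * (r' - r))] at key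
    rw [div_mul_eq_mul_div, le_div_iff₀ hr'0]
    nlinarith [mul_le_mul_of_nonneg_left key hp.le]
  have hba : a - b ≤ ‖z - ζ‖ := by
    simpa [ha, hb] using norm_sub_norm_le z ζ
  have hc0 : 0 < (2 * r - r') / r' := by
    apply div_pos (by linarith) (by linarith)
  have hc1 : (2 * r - r') / r' ≤ 1 := by
    rw [div_le_one (by linarith)]; linarith
  have hbgt : (2 * r - r') / r' * a < b := by
    have heq : (2 * r - r') / r' * a + 2 * (r' - r) / r' * a = a := by
      rw [div_mul_eq_mul_div, div_mul_eq_mul_div, ← add_div,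
        div_eq_iff hr'0.ne']
      ring
    linarith [hba, h1, hra]
  have hbβ : (2 * r - r') / r' * a ^ β < b ^ β := by
    have h3 : ((2 * r - r') / r' * a) ^ β < b ^ β :=
      Real.rpow_lt_rpow (by positivity) hbgt hβ0
    rw [Real.mul_rpow hc0.le ha0.le] at h3
    have h4 : (2 * r - r') / r' ≤ ((2 * r - r') / r') ^ β := by
      have := Real.rpow_le_rpow_of_exponent_ge hc0 hc1 hβ1.le
      simpa using this
    nlinarith
  have h5 : r' / 2 * ((2 * r - r') / r' * a ^ β) = (2 * r - r') / 2 * a ^ β := by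
    field_simp
  have h6 := mul_lt_mul_of_pos_left hbβ (half_pos hr'0)
  rw [h5] at h6
  linarith
end

section
/- Let r' > r > 0, let 0 < β < 1, and let z, ζ ∈ ℂ with |z| ≥ (r·r'/(r' − r))^{1/(1−β)}. If either |z − ζ| < (r/2)·|z|^β + (r/2)·|ζ|^β or |z − ζ| < r·|z|^β, then |z − ζ| < r'·|ζ|^β. -/
lemma key_real (r r' β : ℝ) (hr : 0 < r) (hr' : r < r')
    (hβ0 : 0 < β) (hβ1 : β < 1) (a b d : ℝ)
    (ha : (r * r' / (r' - r)) ^ (1 / (1 - β)) ≤ a) (hb : 0 ≤ b)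
    (hbd : a - d ≤ b) (hd : d < r * a ^ β) : d < r' * b ^ β := by
  have hrr' : 0 < r' - r := by linarith
  have hr'0 : 0 < r' := by linarith
  have hM0 : 0 < r * r' / (r' - r) := by positivity
  have h1β : 0 < 1 - β := by linarith
  have ha0 : 0 < a := lt_of_lt_of_le (Real.rpow_pos_of_pos hM0 _) ha
  have haβpos : 0 < a ^ β := Real.rpow_pos_of_pos ha0 _
  -- a^(1-β) ≥ r r' / (r'-r)
  have h1 : r * r' / (r' - r) ≤ a ^ (1 - β) := by
    have := Real.rpow_le_rpow (le_of_lt (Real.rpow_pos_of_pos hM0 _)) ha (le_of_lt h1β)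
    rwa [← Real.rpow_mul (le_of_lt hM0), one_div, inv_mul_cancel₀ (ne_of_gt h1β),
      Real.rpow_one] at this
  -- (r'-r) * a ≥ r * r' * a^β
  have h2 : r * r' * a ^ β ≤ (r' - r) * a := by
    have hmul := mul_le_mul_of_nonneg_right h1 (le_of_lt haβpos)
    have heq : a ^ (1 - β) * a ^ β = a := by
      rw [← Real.rpow_add ha0, sub_add_cancel, Real.rpow_one]
    rw [heq] at hmul
    calc r * r' * a ^ β = r * r' / (r' - r) * a ^ β * (r' - r) := by
          field_simp
      _ ≤ a * (r' - r) := by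
          exact mul_le_mul_of_nonneg_right hmul (le_of_lt hrr')
      _ = (r' - r) * a := by ring
  -- a - r * a^β ≥ (r/r') * a
  have h3 : r / r' * a ≤ a - r * a ^ β := by
    rw [div_mul_eq_mul_div, div_le_iff₀ hr'0]
    nlinarith
  have hb' : r / r' * a < b := by nlinarith
  have hrr'a : 0 ≤ r / r' * a := by positivity
  have h4 : (r / r' * a) ^ β < b ^ β := Real.rpow_lt_rpow hrr'a hb' hβ0
  have h5 : (r / r' * a) ^ β = (r / r') ^ β * a ^ β :=
    Real.mul_rpow (by positivity) (le_of_lt ha0)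
  have h6 : r / r' ≤ (r / r') ^ β := by
    have hx0 : (0:ℝ) < r / r' := by positivity
    have hx1 : r / r' ≤ 1 := by rw [div_le_one hr'0]; linarith
    have := Real.rpow_le_rpow_of_exponent_ge (x := r / r') hx0 hx1 (le_of_lt hβ1)
    rwa [Real.rpow_one] at this
  have h7 : r / r' * a ^ β ≤ (r / r' * a) ^ β := by
    rw [h5]
    exact mul_le_mul_of_nonneg_right h6 (le_of_lt haβpos)
  have h8 : r * a ^ β < r' * b ^ β := by
    have : r' * (r / r' * a ^ β) = r * a ^ β := by field_simp
    nlinarith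
  linarith

theorem lemma_2 (r r' β : ℝ) (hr : 0 < r) (hr' : r < r')
    (hβ0 : 0 < β) (hβ1 : β < 1) (z ζ : ℂ)
    (hM : (r * r' / (r' - r)) ^ (1 / (1 - β)) ≤ ‖z‖)
    (h : ‖z - ζ‖ < r / 2 * ‖z‖ ^ β + r / 2 * ‖ζ‖ ^ β ∨
      ‖z - ζ‖ < r * ‖z‖ ^ β) :
    ‖z - ζ‖ < r' * ‖ζ‖ ^ β := by
  set a := ‖z‖
  set b := ‖ζ‖
  set d := ‖z - ζ‖
  have hb : 0 ≤ b := norm_nonneg _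
  have hbd : a - d ≤ b := by
    have h' : a - b ≤ d := by
      calc a - b ≤ |a - b| := le_abs_self _
        _ ≤ d := abs_norm_sub_norm_le z ζ
    linarith
  rcases h with h | h
  · rcases le_or_gt b a with hba | hba
    · have hβab : b ^ β ≤ a ^ β := Real.rpow_le_rpow hb hba (le_of_lt hβ0)
      exact key_real r r' β hr hr' hβ0 hβ1 a b d hM hb hbd (by nlinarith)
    · have ha0 : 0 ≤ a := norm_nonneg _
      have hβab : a ^ β ≤ b ^ β := Real.rpow_le_rpow ha0 (le_of_lt hba) (le_of_lt hβ0)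
      have hbβ : 0 < b ^ β := Real.rpow_pos_of_pos (by linarith [norm_nonneg z, lt_of_le_of_lt ha0 hba]) _
      nlinarith
  · exact key_real r r' β hr hr' hβ0 hβ1 a b d hM hb hbd h
end

section
/- Let θ be an irrational real number, and for t ≥ 1 let Λ(t) = { ((mθ − n)·√t, m/√t) : m, n ∈ ℤ } ⊆ ℝ². If the family {Λ(t)}_{t≥1} is relatively dense, then θ is badly approximable. -/
theorem relatively_dense_implies_badly_approximable (θ : ℝ) (hθ : Irrational θ)
    (h : FamilyRelativelyDense θ) : BadlyApproximable θ := by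
  obtain ⟨r, hr, hR⟩ := h
  refine ⟨hθ, min (1 / (8 * r ^ 2)) 1, by positivity, ?_⟩
  intro p q hq
  by_contra hcon
  push_neg at hcon
  set α : ℝ := (q : ℝ) * θ - (p : ℝ) with hαdef
  have hqR : (1 : ℝ) ≤ (q : ℝ) := by exact_mod_cast hq
  have hα0 : α ≠ 0 := by
    have h1 : Irrational ((q : ℤ) * θ) := Irrational.intCast_mul hθ (by omega)
    have h2 : ((q : ℤ) : ℝ) * θ ≠ (p : ℝ) := h1.ne_int p
    simpa [hαdef, sub_eq_zero] using h2
  have hαpos : 0 < |α| := abs_pos.mpr hα0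
  have hδ : (q : ℝ) * |α| < min (1 / (8 * r ^ 2)) 1 := hcon
  have hα1 : |α| < 1 := by
    have h1 : |α| ≤ (q : ℝ) * |α| := le_mul_of_one_le_left hαpos.le hqR
    have h2 : (q : ℝ) * |α| < 1 := lt_of_lt_of_le hδ (min_le_right _ _)
    linarith
  set t : ℝ := (q : ℝ) / |α| with htdef
  have htpos : 0 < t := by positivity
  have ht1 : (1 : ℝ) ≤ t := by
    rw [htdef, le_div_iff₀ hαpos]
    nlinarith
  set s : ℝ := Real.sqrt t with hsdef
  have hs : 0 < s := Real.sqrt_pos.mpr htpos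
  have hs2 : s ^ 2 = t := Real.sq_sqrt htpos.le
  have hq0 : (q : ℝ) ≠ 0 := by positivity
  set A : ℝ := (q : ℝ) / s with hAdef
  set B : ℝ := α * s with hBdef
  have habs : |α| ≠ 0 := hαpos.ne'
  have hA2 : A ^ 2 = (q : ℝ) * |α| := by
    rw [hAdef, div_pow, hs2, htdef]
    field_simp
  have hB2 : B ^ 2 = (q : ℝ) * |α| := by
    rw [hBdef, mul_pow, hs2, htdef]
    calc α ^ 2 * ((q : ℝ) / |α|) = ((q : ℝ) / |α| * |α|) * |α| := by
          rw [pow_two, ← abs_mul_abs_self α]; ring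
      _ = (q : ℝ) * |α| := by rw [div_mul_cancel₀ _ habs]
  have hS : A ^ 2 + B ^ 2 = 2 * (q : ℝ) * |α| := by rw [hA2, hB2]; ring
  have hSpos : 0 < A ^ 2 + B ^ 2 := by rw [hS]; positivity
  have hSlt : A ^ 2 + B ^ 2 < 1 / (4 * r ^ 2) := by
    have h2 : (q : ℝ) * |α| < 1 / (8 * r ^ 2) := lt_of_lt_of_le hδ (min_le_left _ _)
    have h3 : 2 * (1 / (8 * r ^ 2)) = 1 / (4 * r ^ 2) := by
      field_simp; ring
    rw [hS]
    nlinarith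
  set ζ : ℝ × ℝ := (-A / (2 * (A ^ 2 + B ^ 2)), B / (2 * (A ^ 2 + B ^ 2))) with hζdef
  obtain ⟨l, ⟨m, n, hl⟩, hdist⟩ := hR t ht1 ζ
  set d1 : ℝ := ζ.1 - l.1 with hd1
  set d2 : ℝ := ζ.2 - l.2 with hd2
  set k : ℤ := q * n - m * p with hkdef
  have hl1 : l.1 = ((m : ℝ) * θ - (n : ℝ)) * s := by rw [hl]
  have hl2 : l.2 = (m : ℝ) / s := by rw [hl]
  have hz1 : ζ.1 = -A / (2 * (A ^ 2 + B ^ 2)) := rfl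
  have hz2 : ζ.2 = B / (2 * (A ^ 2 + B ^ 2)) := rfl
  have hlin : -l.1 * A + l.2 * B = (k : ℝ) := by
    rw [hl1, hl2, hAdef, hBdef, hαdef, hkdef]
    push_cast
    field_simp
    ring
  have hzin : -ζ.1 * A + ζ.2 * B = 1 / 2 := by
    have he : -ζ.1 * A + ζ.2 * B = (A ^ 2 + B ^ 2) / (2 * (A ^ 2 + B ^ 2)) := by
      rw [hz1, hz2]; ring
    rw [he, div_eq_iff (by positivity)]
    ring
  clear_value t s A B ζ k d1 d2
  have hinner : -d1 * A + d2 * B = 1 / 2 - (k : ℝ) := by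
    rw [hd1, hd2]
    linear_combination hzin - hlin
  have hkk : (0 : ℝ) ≤ (k : ℝ) * ((k : ℝ) - 1) := by
    have hkz : (0 : ℤ) ≤ k * (k - 1) := by
      rcases le_or_gt k 0 with hk0 | hk0
      · nlinarith
      · nlinarith
    exact_mod_cast hkz
  have hquart : (1 : ℝ) / 4 ≤ (-d1 * A + d2 * B) ^ 2 := by
    have he2 : (1 / 2 - (k : ℝ)) ^ 2 = (k : ℝ) * ((k : ℝ) - 1) + 1 / 4 := by ring
    rw [hinner, he2]; linarith
  have hCS : (-d1 * A + d2 * B) ^ 2 ≤ (d1 ^ 2 + d2 ^ 2) * (A ^ 2 + B ^ 2) := by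
    have key : (d1 ^ 2 + d2 ^ 2) * (A ^ 2 + B ^ 2)
        = (-d1 * A + d2 * B) ^ 2 + (d1 * B + d2 * A) ^ 2 := by ring
    rw [key]
    linarith [sq_nonneg (d1 * B + d2 * A)]
  have h14 : (1 : ℝ) / 4 ≤ (d1 ^ 2 + d2 ^ 2) * (A ^ 2 + B ^ 2) := le_trans hquart hCS
  have hr2 : (0 : ℝ) < r ^ 2 := by positivity
  have h3 : r ^ 2 * (A ^ 2 + B ^ 2) < 1 / 4 := by
    have h4 := mul_lt_mul_of_pos_left hSlt hr2
    have h5 : r ^ 2 * (1 / (4 * r ^ 2)) = 1 / 4 := by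
      field_simp
    linarith
  have hfar : r ^ 2 ≤ d1 ^ 2 + d2 ^ 2 := by
    have h6 : r ^ 2 * (A ^ 2 + B ^ 2) < (d1 ^ 2 + d2 ^ 2) * (A ^ 2 + B ^ 2) :=
      lt_of_lt_of_le h3 h14
    exact (lt_of_mul_lt_mul_right h6 hSpos.le).le
  have hge : r ≤ eDist ζ l := by
    rw [eDist, ← hd1, ← hd2,
      show r = Real.sqrt (r ^ 2) from (Real.sqrt_sq hr.le).symm]
    exact Real.sqrt_le_sqrt hfar
  linarith
end

section
/- Let θ be an irrational real number, and for t ≥ 1 let Λ(t) = { ((mθ − n)·√t, m/√t) : m, n ∈ ℤ } ⊆ ℝ². If the family {Λ(t)}_{t≥1} is uniformly discrete, then θ is badly approximable. -/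
theorem uniformly_discrete_implies_badly_approximable (θ : ℝ) (hθ : Irrational θ)
    (h : FamilyUniformlyDiscrete θ) : BadlyApproximable θ := by
  obtain ⟨s, hs, hsub⟩ := h
  refine ⟨hθ, ?_⟩
  set K : ℝ := max 1 (16 / s ^ 2) with hK
  have hK1 : (1 : ℝ) ≤ K := le_max_left _ _
  have hKpos : (0 : ℝ) < K := lt_of_lt_of_le one_pos hK1
  have hsqK : 0 < Real.sqrt K := Real.sqrt_pos.mpr hKpos
  have hsqK4 : 4 / s ≤ Real.sqrt K := by
    have h16 : (16 / s ^ 2 : ℝ) ≤ K := le_max_right _ _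
    have : Real.sqrt (16 / s ^ 2) ≤ Real.sqrt K := Real.sqrt_le_sqrt h16
    have heq : Real.sqrt (16 / s ^ 2) = 4 / s := by
      rw [Real.sqrt_div' 16 (by positivity)]
      · rw [show (16 : ℝ) = 4 ^ 2 by norm_num, Real.sqrt_sq (by norm_num),
          Real.sqrt_sq hs.le]
    linarith [this, heq.symm.le.trans this]
  refine ⟨s / (2 * Real.sqrt K), by positivity, ?_⟩
  intro p q hq
  by_contra hlt
  push_neg at hlt
  have hqpos : (0 : ℝ) < (q : ℝ) := by exact_mod_cast hq
  set t : ℝ := (q : ℝ) ^ 2 * K with ht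
  have hq1' : (1 : ℝ) ≤ (q : ℝ) := by exact_mod_cast hq
  have hq1 : (1 : ℝ) ≤ (q : ℝ) ^ 2 := by nlinarith
  have ht1 : (1 : ℝ) ≤ t := by nlinarith
  have hst : Real.sqrt t = (q : ℝ) * Real.sqrt K := by
    rw [ht, Real.sqrt_mul (by positivity), Real.sqrt_sq hqpos.le]
  have hstpos : 0 < Real.sqrt t := by rw [hst]; positivity
  have hmem0 : ((0 : ℝ), (0 : ℝ)) ∈ latticeFamily θ t :=
    ⟨0, 0, by simp⟩
  set v : ℝ × ℝ := (((q : ℝ) * θ - (p : ℝ)) * Real.sqrt t, (q : ℝ) / Real.sqrt t)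
    with hv
  have hmemv : v ∈ latticeFamily θ t := ⟨q, p, rfl⟩
  -- bounds on coordinates of v
  have hy : (q : ℝ) / Real.sqrt t = 1 / Real.sqrt K := by
    rw [hst]; field_simp
  have hybound : (q : ℝ) / Real.sqrt t ≤ s / 4 := by
    rw [hy]
    rw [div_le_div_iff₀ hsqK (by norm_num : (0:ℝ) < 4)]
    have := (div_le_iff₀ hs).mp hsqK4
    linarith
  have hxbound : |((q : ℝ) * θ - (p : ℝ)) * Real.sqrt t| < s / 2 := by
    rw [abs_mul, abs_of_pos hstpos, hst]
    have h1 : (q : ℝ) * |(q : ℝ) * θ - (p : ℝ)| * Real.sqrt K <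
        s / (2 * Real.sqrt K) * Real.sqrt K := by
      apply mul_lt_mul_of_pos_right hlt hsqK
    have h2 : s / (2 * Real.sqrt K) * Real.sqrt K = s / 2 := by
      field_simp
    calc |(q : ℝ) * θ - (p : ℝ)| * ((q : ℝ) * Real.sqrt K)
        = (q : ℝ) * |(q : ℝ) * θ - (p : ℝ)| * Real.sqrt K := by ring
      _ < s / 2 := by rw [← h2]; exact h1
  have hd0 : eDist ((0 : ℝ), (0 : ℝ)) ((0 : ℝ), (0 : ℝ)) < s := by
    simp [eDist]; exact hs
  have hdv : eDist ((0 : ℝ), (0 : ℝ)) v < s := by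
    unfold eDist
    have hypos : 0 ≤ (q : ℝ) / Real.sqrt t := by positivity
    have hx2 : (((0:ℝ),(0:ℝ)).1 - v.1) ^ 2 + (((0:ℝ),(0:ℝ)).2 - v.2) ^ 2 < s ^ 2 := by
      simp only [hv]
      have hx : (((q : ℝ) * θ - (p : ℝ)) * Real.sqrt t) ^ 2 < (s / 2) ^ 2 := by
        have := sq_abs (((q : ℝ) * θ - (p : ℝ)) * Real.sqrt t)
        nlinarith [abs_nonneg (((q : ℝ) * θ - (p : ℝ)) * Real.sqrt t)]
      have hy2 : ((q : ℝ) / Real.sqrt t) ^ 2 ≤ (s / 4) ^ 2 := by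
        nlinarith
      simp only [zero_sub, neg_sq]
      nlinarith
    calc Real.sqrt ((((0:ℝ),(0:ℝ)).1 - v.1) ^ 2 + (((0:ℝ),(0:ℝ)).2 - v.2) ^ 2)
        < Real.sqrt (s ^ 2) := by
          apply Real.sqrt_lt_sqrt (by positivity) hx2
      _ = s := Real.sqrt_sq hs.le
  have heq : ((0 : ℝ), (0 : ℝ)) = v :=
    hsub t ht1 ((0 : ℝ), (0 : ℝ)) ⟨hmem0, hd0⟩ ⟨hmemv, hdv⟩
  have : (0 : ℝ) = (q : ℝ) / Real.sqrt t := congrArg Prod.snd heq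
  rw [hy] at this
  have : (1 : ℝ) / Real.sqrt K > 0 := by positivity
  linarith
end

section
/- Let θ be a badly approximable real number, and for t ≥ 1 let Λ(t) = { ((mθ − n)·√t, m/√t) : m, n ∈ ℤ } ⊆ ℝ². Then the family {Λ(t)}_{t≥1} is uniformly discrete. -/
lemma abs_fst_le_eDist (a b : ℝ × ℝ) : |a.1 - b.1| ≤ eDist a b := by
  rw [eDist, ← Real.sqrt_sq_eq_abs]
  exact Real.sqrt_le_sqrt (by nlinarith [sq_nonneg (a.2 - b.2)])

lemma abs_snd_le_eDist (a b : ℝ × ℝ) : |a.2 - b.2| ≤ eDist a b := by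
  rw [eDist, ← Real.sqrt_sq_eq_abs]
  exact Real.sqrt_le_sqrt (by nlinarith [sq_nonneg (a.1 - b.1)])

theorem badly_approximable_implies_uniformly_discrete (θ : ℝ)
    (h : BadlyApproximable θ) : FamilyUniformlyDiscrete θ := by
  obtain ⟨-, c, hc, hbad⟩ := h
  have hsc : 0 < Real.sqrt c := Real.sqrt_pos.mpr hc
  set s := min 1 (Real.sqrt c) / 2 with hs
  have hs0 : 0 < s := by
    have : 0 < min 1 (Real.sqrt c) := lt_min one_pos hsc
    linarith
  refine ⟨s, hs0, fun t ht ζ l1 hl1 l2 hl2 => ?_⟩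
  obtain ⟨⟨m1, n1, e1⟩, d1⟩ := hl1
  obtain ⟨⟨m2, n2, e2⟩, d2⟩ := hl2
  have hst : (1:ℝ) ≤ Real.sqrt t := by
    rw [show (1:ℝ) = Real.sqrt 1 by simp]
    exact Real.sqrt_le_sqrt ht
  have hstpos : (0:ℝ) < Real.sqrt t := lt_of_lt_of_le one_pos hst
  by_cases hm : m1 = m2
  · by_cases hn : n1 = n2
    · rw [e1, e2, hm, hn]
    · exfalso
      -- first coordinates differ by (n2 - n1)√t, which has abs ≥ 1
      have hx : |l1.1 - l2.1| = |(n1:ℝ) - (n2:ℝ)| * Real.sqrt t := by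
        rw [e1, e2]
        simp only [hm]
        rw [show ((m2:ℝ) * θ - n1) * Real.sqrt t - ((m2:ℝ) * θ - n2) * Real.sqrt t
            = ((n2:ℝ) - n1) * Real.sqrt t by ring, abs_mul, abs_of_pos hstpos,
          abs_sub_comm]
      have hn1 : (1:ℝ) ≤ |(n1:ℝ) - (n2:ℝ)| := by
        rw [show ((n1:ℝ) - n2) = ((n1 - n2 : ℤ) : ℝ) by push_cast; ring, ← Int.cast_abs]
        exact_mod_cast Int.one_le_abs (sub_ne_zero.mpr hn)
      have hbig : (1:ℝ) ≤ |l1.1 - l2.1| := by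
        rw [hx]; nlinarith
      have hsmall : |l1.1 - l2.1| < 2 * s := by
        calc |l1.1 - l2.1| ≤ |l1.1 - ζ.1| + |ζ.1 - l2.1| := abs_sub_le _ _ _
          _ < s + s := by
              rw [abs_sub_comm l1.1 ζ.1]
              exact add_lt_add (lt_of_le_of_lt (abs_fst_le_eDist ζ l1) d1)
                (lt_of_le_of_lt (abs_fst_le_eDist ζ l2) d2)
          _ = 2 * s := by ring
      have : 2 * s ≤ 1 := by
        have := min_le_left 1 (Real.sqrt c); rw [hs]; linarith
      linarith
  · exfalso
    set m : ℤ := m1 - m2 with hmdef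
    set n : ℤ := n1 - n2 with hndef
    have hmne : m ≠ 0 := sub_ne_zero.mpr hm
    have hx : |l1.1 - l2.1| = |(m:ℝ) * θ - (n:ℝ)| * Real.sqrt t := by
      rw [e1, e2]
      simp only
      rw [show ((m1:ℝ) * θ - n1) * Real.sqrt t - ((m2:ℝ) * θ - n2) * Real.sqrt t
          = (((m1:ℝ) - m2) * θ - ((n1:ℝ) - n2)) * Real.sqrt t by ring, abs_mul,
        abs_of_pos hstpos]
      push_cast [hmdef, hndef]
      ring_nf
    have hy : |l1.2 - l2.2| = |(m:ℝ)| / Real.sqrt t := by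
      rw [e1, e2]
      simp only
      rw [div_sub_div_same, abs_div, abs_of_pos hstpos]
      push_cast [hmdef]
      ring_nf
    -- badly approximable lower bound
    have key : c ≤ |(m:ℝ)| * |(m:ℝ) * θ - (n:ℝ)| := by
      rcases hmne.lt_or_gt with hlt | hlt
      · have h1 : (1:ℤ) ≤ -m := by omega
        have := hbad (-n) (-m) h1
        push_cast at this
        have habs : |(-(m:ℝ)) * θ - (-(n:ℝ))| = |(m:ℝ) * θ - (n:ℝ)| := by
          rw [show (-(m:ℝ)) * θ - (-(n:ℝ)) = -((m:ℝ) * θ - n) by ring, abs_neg]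
        rw [habs] at this
        have : c ≤ -(m:ℝ) * |(m:ℝ) * θ - (n:ℝ)| := this
        have hma : |(m:ℝ)| = -(m:ℝ) := by
          rw [abs_of_neg]; exact_mod_cast hlt
        rw [hma]; linarith
      · have h1 : (1:ℤ) ≤ m := hlt
        have := hbad n m h1
        have hma : |(m:ℝ)| = (m:ℝ) := by
          rw [abs_of_pos]; exact_mod_cast hlt
        rw [hma]; linarith
    have hprod : c ≤ |l1.1 - l2.1| * |l1.2 - l2.2| := by
      rw [hx, hy]
      rw [show (|(m:ℝ) * θ - (n:ℝ)| * Real.sqrt t) * (|(m:ℝ)| / Real.sqrt t)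
          = |(m:ℝ)| * |(m:ℝ) * θ - (n:ℝ)| * (Real.sqrt t / Real.sqrt t) by ring,
        div_self (ne_of_gt hstpos), mul_one]
      exact key
    have h2s : 2 * s ≤ Real.sqrt c := by
      have := min_le_right 1 (Real.sqrt c); rw [hs]; linarith
    have hsmall1 : |l1.1 - l2.1| < 2 * s := by
      calc |l1.1 - l2.1| ≤ |l1.1 - ζ.1| + |ζ.1 - l2.1| := abs_sub_le _ _ _
        _ < s + s := by
            rw [abs_sub_comm l1.1 ζ.1]
            exact add_lt_add (lt_of_le_of_lt (abs_fst_le_eDist ζ l1) d1)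
              (lt_of_le_of_lt (abs_fst_le_eDist ζ l2) d2)
        _ = 2 * s := by ring
    have hsmall2 : |l1.2 - l2.2| < 2 * s := by
      calc |l1.2 - l2.2| ≤ |l1.2 - ζ.2| + |ζ.2 - l2.2| := abs_sub_le _ _ _
        _ < s + s := by
            rw [abs_sub_comm l1.2 ζ.2]
            exact add_lt_add (lt_of_le_of_lt (abs_snd_le_eDist ζ l1) d1)
              (lt_of_le_of_lt (abs_snd_le_eDist ζ l2) d2)
        _ = 2 * s := by ring
    have hlt : |l1.1 - l2.1| * |l1.2 - l2.2| < Real.sqrt c * Real.sqrt c :=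
      mul_lt_mul'' (lt_of_lt_of_le hsmall1 h2s) (lt_of_lt_of_le hsmall2 h2s)
        (abs_nonneg _) (abs_nonneg _)
    rw [Real.mul_self_sqrt hc.le] at hlt
    linarith
end

section
/- Let θ be a badly approximable real number, and for t ≥ 1 let Λ(t) = { ((mθ − n)·√t, m/√t) : m, n ∈ ℤ } ⊆ ℝ². Then the family {Λ(t)}_{t≥1} is relatively dense. -/
/-- Dirichlet's theorem wrapper: for `0 < ε < 1/2`, there are `1 ≤ q ≤ 2/ε` and `p`
with `|qθ - p| ≤ ε`. -/
lemma aux_dirichlet_eps (θ : ℝ) {ε : ℝ} (h0 : 0 < ε) (h1 : ε < 1/2) :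
    ∃ q p : ℤ, 1 ≤ q ∧ (q : ℝ) ≤ 2/ε ∧ |(q : ℝ) * θ - p| ≤ ε := by
  set N : ℕ := ⌈ε⁻¹⌉₊ with hN
  have hNpos : 0 < N := Nat.ceil_pos.mpr (by positivity)
  obtain ⟨j, k, hk0, hkN, hjk⟩ := Real.exists_int_int_abs_mul_sub_le θ hNpos
  have hNle : (N : ℝ) ≤ ε⁻¹ + 1 := (Nat.ceil_lt_add_one (by positivity)).le
  have hεinv : (2:ℝ) ≤ ε⁻¹ := by
    rw [le_inv_comm₀] <;> [linarith; norm_num; linarith]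
  refine ⟨k, j, hk0, ?_, ?_⟩
  · have : (k : ℝ) ≤ N := by exact_mod_cast hkN
    have h2 : (2:ℝ)/ε = 2 * ε⁻¹ := by rw [div_eq_mul_inv]
    linarith
  · have h1 : (ε⁻¹ : ℝ) ≤ N := Nat.le_ceil _
    have : (1:ℝ)/(N+1) ≤ ε := by
      rw [div_le_iff₀ (by positivity)]
      have : ε * ε⁻¹ = 1 := mul_inv_cancel₀ h0.ne'
      nlinarith
    linarith [hjk]

/-- Key density lemma: for a badly approximable `θ` with constant `c`, every real `x` is
within `ε` of some `mθ - n` with `|m| ≤ (16/c + 4)/ε`.  Proved by a multiscale greedy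
induction on the scale `k` (with `ε ≥ 1/2^k`). -/
lemma aux_key_dense (θ c : ℝ) (hirr : Irrational θ) (hc : 0 < c)
    (hba : ∀ p q : ℤ, 1 ≤ q → c ≤ (q : ℝ) * |(q : ℝ) * θ - p|) :
    ∀ k : ℕ, ∀ x ε : ℝ, (1 : ℝ)/2^k ≤ ε →
    ∃ m n : ℤ, |(m : ℝ)| ≤ (16/c + 4)/ε ∧ |(m : ℝ) * θ - n - x| ≤ ε := by
  have base : ∀ x ε : ℝ, (1:ℝ)/2 ≤ ε →
      ∃ m n : ℤ, |(m : ℝ)| ≤ (16/c + 4)/ε ∧ |(m : ℝ) * θ - n - x| ≤ ε := by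
    intro x ε hε
    have hε0 : 0 < ε := by linarith
    refine ⟨0, -(round x), ?_, ?_⟩
    · simp only [Int.cast_zero, abs_zero]
      positivity
    · simp only [Int.cast_zero, zero_mul]
      rw [show (0:ℝ) - (-(round x):ℤ) - x = -(x - round x) by push_cast; ring, abs_neg]
      linarith [abs_sub_round x]
  intro k
  induction k with
  | zero =>
    intro x ε hε
    exact base x ε (by norm_num at hε ⊢; linarith)
  | succ k ih =>
    intro x ε hε
    have hε0 : 0 < ε := lt_of_lt_of_le (by positivity) hε
    by_cases hhalf : (1:ℝ)/2 ≤ ε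
    · exact base x ε hhalf
    push_neg at hhalf
    have h2ε : (1:ℝ)/2^k ≤ 2*ε := by
      rw [pow_succ] at hε
      rw [div_le_iff₀ (by positivity)] at hε ⊢
      nlinarith [pow_pos (show (0:ℝ) < 2 by norm_num) k]
    obtain ⟨m₀, n₀, hm₀, herr⟩ := ih x (2*ε) h2ε
    obtain ⟨q, p, hq1, hqle, hδ⟩ := aux_dirichlet_eps θ hε0 hhalf
    set σ := (q : ℝ) * θ - p with hσ
    have hqR : (1:ℝ) ≤ (q:ℝ) := by exact_mod_cast hq1
    have hσne : σ ≠ 0 := by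
      have hq0 : q ≠ 0 := by omega
      exact sub_ne_zero.mpr ((hirr.intCast_mul hq0).ne_int p)
    have hδlow : c * ε / 2 ≤ |σ| := by
      have hcq : c ≤ (q:ℝ) * |σ| := hba p q hq1
      have hσpos : 0 < |σ| := abs_pos.mpr hσne
      have : (q:ℝ) * |σ| ≤ (2/ε) * |σ| := by
        apply mul_le_mul_of_nonneg_right hqle hσpos.le
      rw [div_mul_eq_mul_div, le_div_iff₀ hε0] at this
      nlinarith
    set y := (m₀ : ℝ) * θ - n₀ - x with hy
    set j : ℤ := round (-y/σ) with hj
    have habsy : |y| ≤ 2*ε := herr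
    have hσpos : 0 < |σ| := abs_pos.mpr hσne
    refine ⟨m₀ + j*q, n₀ + j*p, ?_, ?_⟩
    · have hround : |(-y/σ) - (j:ℝ)| ≤ 1/2 := by
        rw [hj]; exact abs_sub_round _
      have hjb : |(j:ℝ)| ≤ |y|/|σ| + 1/2 := by
        have h2 : |(-y)/σ| = |y|/|σ| := by rw [abs_div, abs_neg]
        calc |(j:ℝ)| ≤ |(j:ℝ) - (-y/σ)| + |(-y)/σ| := by
              have := abs_add_le ((j:ℝ) - (-y/σ)) (-y/σ)
              simp only [sub_add_cancel] at this
              linarith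
          _ ≤ 1/2 + |y|/|σ| := by
              rw [h2, abs_sub_comm]
              exact add_le_add hround le_rfl
          _ = |y|/|σ| + 1/2 := by ring
      have hyd : |y|/|σ| ≤ 4/c := by
        rw [div_le_div_iff₀ hσpos (by positivity)]
        nlinarith
      have hjb' : |(j:ℝ)| ≤ 4/c + 1/2 := by linarith
      have hjq : |(j:ℝ)*(q:ℝ)| ≤ (4/c + 1/2) * (2/ε) := by
        rw [abs_mul, abs_of_nonneg (by linarith : (0:ℝ) ≤ (q:ℝ))]
        apply mul_le_mul hjb' hqle (by linarith) (by positivity)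
      have hm₀' : |(m₀:ℝ)| ≤ (16/c + 4)/(2*ε) := hm₀
      push_cast
      calc |(m₀:ℝ) + j*q| ≤ |(m₀:ℝ)| + |(j:ℝ)*(q:ℝ)| := abs_add_le _ _
        _ ≤ (16/c + 4)/(2*ε) + (4/c + 1/2) * (2/ε) := by linarith
        _ = (16/c + 3)/ε := by field_simp; ring
        _ ≤ (16/c + 4)/ε := by gcongr <;> linarith
    · have hkey : ((m₀ + j*q : ℤ) : ℝ) * θ - ((n₀ + j*p : ℤ) : ℝ) - x = y + j*σ := by
        push_cast
        rw [hy, hσ]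
        ring
      rw [hkey]
      have : y + (j:ℝ)*σ = -σ * ((-y/σ) - j) := by
        field_simp
        ring
      rw [this, abs_mul, abs_neg]
      have h1 : |(-y/σ) - (j:ℝ)| ≤ 1/2 := by
        rw [hj]; exact abs_sub_round _
      calc |σ| * |(-y/σ) - (j:ℝ)| ≤ |σ| * (1/2) :=
            mul_le_mul_of_nonneg_left h1 hσpos.le
        _ ≤ ε * (1/2) := by nlinarith
        _ ≤ ε := by linarith

/-- The key density lemma for an arbitrary positive `ε`. -/
lemma aux_key_dense_all (θ c : ℝ) (hirr : Irrational θ) (hc : 0 < c)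
    (hba : ∀ p q : ℤ, 1 ≤ q → c ≤ (q : ℝ) * |(q : ℝ) * θ - p|)
    (x ε : ℝ) (hε : 0 < ε) :
    ∃ m n : ℤ, |(m : ℝ)| ≤ (16/c + 4)/ε ∧ |(m : ℝ) * θ - n - x| ≤ ε := by
  obtain ⟨k, hk⟩ := exists_pow_lt_of_lt_one hε (by norm_num : (1:ℝ)/2 < 1)
  refine aux_key_dense θ c hirr hc hba k x ε ?_
  calc (1:ℝ)/2^k = (1/2)^k := by rw [div_pow, one_pow]
    _ ≤ ε := hk.le

theorem badly_approximable_implies_relatively_dense (θ : ℝ)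
    (h : BadlyApproximable θ) : FamilyRelativelyDense θ := by
  obtain ⟨hirr, c, hc, hba⟩ := h
  set C : ℝ := 16/c + 4 with hC
  have hC0 : 0 < C := by positivity
  refine ⟨2*C + 2, by positivity, ?_⟩
  intro t ht ζ
  obtain ⟨x, y⟩ := ζ
  set s := Real.sqrt t with hs
  have hs1 : 1 ≤ s := by
    rw [hs, show (1:ℝ) = Real.sqrt 1 by simp]
    exact Real.sqrt_le_sqrt ht
  have hs0 : 0 < s := lt_of_lt_of_le one_pos hs1
  set a : ℤ := round (y * s) with ha
  have hε0 : 0 < 1/(2*s) := by positivity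
  obtain ⟨m₀, n₀, hm₀, herr⟩ :=
    aux_key_dense_all θ c hirr hc hba (x/s - a*θ) (1/(2*s)) hε0
  refine ⟨(((((a+m₀ : ℤ)) : ℝ) * θ - (n₀ : ℝ)) * s, ((a+m₀ : ℤ) : ℝ) / s),
    ⟨a+m₀, n₀, rfl⟩, ?_⟩
  have h1 : |x - (((a+m₀ : ℤ) : ℝ) * θ - (n₀:ℝ)) * s| ≤ 1/2 := by
    have heq : x - (((a+m₀ : ℤ) : ℝ) * θ - (n₀:ℝ)) * s
        = -(((m₀:ℝ) * θ - n₀ - (x/s - a*θ)) * s) := by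
      push_cast
      field_simp
      ring
    rw [heq, abs_neg, abs_mul, abs_of_pos hs0]
    calc |(m₀:ℝ) * θ - n₀ - (x/s - a*θ)| * s ≤ (1/(2*s)) * s :=
          mul_le_mul_of_nonneg_right herr hs0.le
      _ = 1/2 := by field_simp
  have h2 : |y - ((a+m₀ : ℤ) : ℝ)/s| ≤ 2*C + 1/2 := by
    have e1 : y - ((a+m₀ : ℤ) : ℝ)/s = (y*s - a)/s - (m₀:ℝ)/s := by
      push_cast
      field_simp
      ring
    have hb1 : |(y*s - a)/s| ≤ 1/2 := by
      rw [abs_div, abs_of_pos hs0, div_le_iff₀ hs0]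
      rw [ha]
      nlinarith [abs_sub_round (y*s)]
    have hb2 : |(m₀:ℝ)/s| ≤ 2*C := by
      rw [abs_div, abs_of_pos hs0, div_le_iff₀ hs0]
      have he : C/(1/(2*s)) = 2*C*s := by field_simp
      calc |(m₀:ℝ)| ≤ C/(1/(2*s)) := hm₀
        _ = 2*C*s := he
        _ = 2*C*s := rfl
    calc |y - ((a+m₀ : ℤ) : ℝ)/s| ≤ |(y*s - a)/s| + |(m₀:ℝ)/s| := by
          rw [e1]; exact abs_sub _ _
      _ ≤ 1/2 + 2*C := add_le_add hb1 hb2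
      _ = 2*C + 1/2 := by ring
  have habs1 := abs_le.mp h1
  have habs2 := abs_le.mp h2
  rw [eDist, Real.sqrt_lt' (by positivity)]
  simp only
  nlinarith [habs1.1, habs1.2, habs2.1, habs2.2, hC0]
end

section
/- Let α > 0 and β = 1 − 1/(2α). If θ is a badly approximable real number, then the Archimedean spiral lattice Γ_{α,θ} is asymptotically β-uniformly discrete. -/
section SpiralAux

private lemma abs_exp_I_sub_one (t : ℝ) :
    norm (Complex.exp ((t : ℂ) * Complex.I) - 1) = 2 * |Real.sin (t / 2)| := by
  rw [Complex.exp_mul_I, Real.abs_sin_half, Complex.norm_def, Complex.normSq_apply]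
  have h1 : (Complex.cos t + Complex.sin t * Complex.I - 1).re = Real.cos t - 1 := by
    simp [Complex.cos_ofReal_re]
  have h2 : (Complex.cos t + Complex.sin t * Complex.I - 1).im = Real.sin t := by
    simp [Complex.sin_ofReal_re]
  rw [h1, h2]
  rw [show (Real.cos t - 1) * (Real.cos t - 1) + Real.sin t * Real.sin t
      = 2 ^ 2 * ((1 - Real.cos t) / 2) by nlinarith [Real.sin_sq_add_cos_sq t]]
  rw [Real.sqrt_mul (by positivity), Real.sqrt_sq (by norm_num : (0:ℝ) ≤ 2)]

private lemma sin_lb (θ c : ℝ)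
    (hbad : ∀ p q : ℤ, 1 ≤ q → c ≤ (q : ℝ) * |(q : ℝ) * θ - (p : ℝ)|)
    (k : ℕ) (hk : 1 ≤ k) :
    2 * (c / k) ≤ |Real.sin (Real.pi * k * θ)| := by
  have hkr : (0:ℝ) < (k:ℝ) := by exact_mod_cast hk
  set p : ℤ := round ((k:ℝ) * θ) with hp
  set d : ℝ := (k:ℝ) * θ - p with hd
  have hd2 : |d| ≤ 1/2 := abs_sub_round _
  have hcd : c / k ≤ |d| := by
    have h := hbad p (k : ℤ) (by exact_mod_cast hk)
    push_cast at h
    rw [div_le_iff₀ hkr]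
    linarith [h]
  have hsin : |Real.sin (Real.pi * k * θ)| = |Real.sin (Real.pi * d)| := by
    have he : Real.pi * k * θ = Real.pi * d + p * Real.pi := by rw [hd]; ring
    rw [he, Real.sin_add_int_mul_pi, abs_mul]
    have h1 : |((-1:ℝ)) ^ p| = 1 := by
      rcases Int.even_or_odd p with hpe | hpo
      · rw [hpe.neg_one_zpow]; norm_num
      · rw [Odd.neg_one_zpow hpo]; norm_num
    rw [h1, one_mul]
  rw [hsin]
  have habs : |Real.pi * d| ≤ Real.pi / 2 := by
    rw [abs_mul, abs_of_nonneg Real.pi_pos.le]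
    calc Real.pi * |d| ≤ Real.pi * (1/2) := by
          exact mul_le_mul_of_nonneg_left hd2 Real.pi_pos.le
      _ = Real.pi / 2 := by ring
  have := Real.mul_abs_le_abs_sin habs
  rw [abs_mul, abs_of_nonneg Real.pi_pos.le] at this
  have hpi : 2 / Real.pi * (Real.pi * |d|) = 2 * |d| := by
    field_simp
  rw [hpi] at this
  calc 2 * (c / k) ≤ 2 * |d| := by linarith
    _ ≤ |Real.sin (Real.pi * d)| := this

private lemma radial_lb (α : ℝ) (hα : 0 < α) (m n : ℕ) (hm : 1 ≤ m) (hmn : m < n) :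
    α * ((n:ℝ) - m) * (m:ℝ)^α / n ≤ (n:ℝ)^α - (m:ℝ)^α := by
  have hm0 : (0:ℝ) < m := by exact_mod_cast hm
  have hmn' : (m:ℝ) < n := by exact_mod_cast hmn
  have hn0 : (0:ℝ) < n := lt_trans hm0 hmn'
  have hmα : (0:ℝ) < (m:ℝ)^α := Real.rpow_pos_of_pos hm0 α
  have hnα : (0:ℝ) < (n:ℝ)^α := Real.rpow_pos_of_pos hn0 α
  rcases le_or_gt 1 α with h1 | h1
  · have hs : (0:ℝ) ≤ ((n:ℝ) - m)/m := by
      apply div_nonneg _ hm0.le; linarith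
    have hb := one_add_mul_self_le_rpow_one_add (by linarith : (-1:ℝ) ≤ ((n:ℝ)-m)/m) h1
    rw [show (1 + ((n:ℝ)-m)/m) = (n:ℝ)/m by field_simp; ring] at hb
    rw [Real.div_rpow hn0.le hm0.le] at hb
    have h2 : (1 + α * (((n:ℝ)-m)/m)) * (m:ℝ)^α ≤ (n:ℝ)^α := by
      have := mul_le_mul_of_nonneg_right hb hmα.le
      rwa [div_mul_cancel₀ _ hmα.ne'] at this
    have he : (1 + α * (((n:ℝ)-m)/m)) * (m:ℝ)^α
        = (m:ℝ)^α + α * ((n:ℝ)-m) * (m:ℝ)^α / m := by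
      field_simp
    have h3 : α * ((n:ℝ)-m) * (m:ℝ)^α / m ≤ (n:ℝ)^α - (m:ℝ)^α := by linarith
    have hnum : 0 ≤ α * ((n:ℝ)-m) * (m:ℝ)^α := by
      have h5 : (0:ℝ) ≤ (n:ℝ)-m := by linarith
      exact mul_nonneg (mul_nonneg hα.le h5) hmα.le
    calc α * ((n:ℝ)-m) * (m:ℝ)^α / n ≤ α * ((n:ℝ)-m) * (m:ℝ)^α / m := by
          rw [div_eq_mul_inv, div_eq_mul_inv]
          exact mul_le_mul_of_nonneg_left (inv_anti₀ hm0 hmn'.le) hnum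
      _ ≤ _ := h3
  · have hle : ((n:ℝ)-m)/n ≤ 1 := by rw [div_le_one hn0]; linarith
    have hb := rpow_one_add_le_one_add_mul_self
      (by linarith : (-1:ℝ) ≤ -(((n:ℝ)-m)/n)) hα.le h1.le
    rw [show (1 + -(((n:ℝ)-m)/n)) = (m:ℝ)/n by field_simp; ring] at hb
    rw [Real.div_rpow hm0.le hn0.le] at hb
    have h2 : (m:ℝ)^α ≤ (1 + α * (-(((n:ℝ)-m)/n))) * (n:ℝ)^α := by
      have := mul_le_mul_of_nonneg_right hb hnα.le
      rwa [div_mul_cancel₀ _ hnα.ne'] at this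
    have he : (1 + α * (-(((n:ℝ)-m)/n))) * (n:ℝ)^α
        = (n:ℝ)^α - α * ((n:ℝ)-m) * (n:ℝ)^α / n := by
      field_simp; ring
    have h3 : α * ((n:ℝ)-m) * (n:ℝ)^α / n ≤ (n:ℝ)^α - (m:ℝ)^α := by linarith
    have h4 : (m:ℝ)^α ≤ (n:ℝ)^α := Real.rpow_le_rpow hm0.le hmn'.le hα.le
    calc α * ((n:ℝ)-m) * (m:ℝ)^α / n ≤ α * ((n:ℝ)-m) * (n:ℝ)^α / n := by
          gcongr
      _ ≤ _ := h3

private lemma spiral_dist_lb (α θ c : ℝ) (hα : 0 < α) (hc : 0 < c)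
    (hbad : ∀ p q : ℤ, 1 ≤ q → c ≤ (q : ℝ) * |(q : ℝ) * θ - (p : ℝ)|)
    (m n : ℕ) (hm : 1 ≤ m) (hmn : m < n) (R : ℝ) (hR : 0 < R)
    (hm1 : R/2 ≤ (m:ℝ)^α) (hn2 : (n:ℝ)^α ≤ 3/2*R) :
    Real.sqrt (α*c/2 * (3/2:ℝ)^(-(1/α))) * R^(1-1/(2*α)) ≤
      norm ((((n:ℝ)^α : ℝ) : ℂ) * Complex.exp (((2*Real.pi*n*θ : ℝ) : ℂ) * Complex.I)
        - (((m:ℝ)^α : ℝ) : ℂ) * Complex.exp (((2*Real.pi*m*θ : ℝ) : ℂ) * Complex.I)) := by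
  have hm0 : (0:ℝ) < m := by exact_mod_cast hm
  have hmn' : (m:ℝ) < n := by exact_mod_cast hmn
  have hn0 : (0:ℝ) < n := lt_trans hm0 hmn'
  set k : ℕ := n - m with hkdef
  have hk1 : 1 ≤ k := by omega
  have hkr : (k:ℝ) = (n:ℝ) - m := by
    rw [hkdef]; push_cast [Nat.cast_sub hmn.le]; ring
  have hkr0 : (0:ℝ) < k := by
    rw [hkr]; linarith
  set en : ℂ := Complex.exp (((2*Real.pi*n*θ : ℝ) : ℂ) * Complex.I) with hen
  set em : ℂ := Complex.exp (((2*Real.pi*m*θ : ℝ) : ℂ) * Complex.I) with hem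
  set ζn : ℂ := (((n:ℝ)^α : ℝ) : ℂ) * en with hζn
  set ζm : ℂ := (((m:ℝ)^α : ℝ) : ℂ) * em with hζm
  set D : ℝ := norm (ζn - ζm) with hD
  have hD0 : 0 ≤ D := norm_nonneg _
  have hmα : (0:ℝ) < (m:ℝ)^α := Real.rpow_pos_of_pos hm0 α
  have hnα : (0:ℝ) < (n:ℝ)^α := Real.rpow_pos_of_pos hn0 α
  set A : ℝ := (n:ℝ)^α - (m:ℝ)^α with hAdef
  have hA : 0 < A := sub_pos.mpr (Real.rpow_lt_rpow hm0.le hmn' hα)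
  have habs : ∀ (x : ℝ) (t : ℝ), 0 ≤ x →
      norm ((x : ℂ) * Complex.exp ((t : ℂ) * Complex.I)) = x := by
    intro x t hx
    rw [norm_mul, Complex.norm_real, Real.norm_eq_abs, Complex.norm_exp_ofReal_mul_I, mul_one, abs_of_nonneg hx]
  -- D ≥ A
  have hDA : A ≤ D := by
    have h1 : norm ζn - norm ζm ≤ D := by
      rw [hD]
      exact norm_sub_norm_le _ _
    rwa [hζn, hζm, habs _ _ hnα.le, habs _ _ hmα.le] at h1
  -- angular bound
  have hEdiff : norm (en - em) = 2 * |Real.sin (Real.pi * k * θ)| := by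
    have hfac : en - em = em * (Complex.exp (((2*Real.pi*k*θ : ℝ) : ℂ) * Complex.I) - 1) := by
      rw [mul_sub, mul_one, hem, hen, ← Complex.exp_add]
      congr 2
      push_cast [hkr]
      ring
    rw [hfac, norm_mul, hem, Complex.norm_exp_ofReal_mul_I, one_mul, abs_exp_I_sub_one,
      show (2*Real.pi*(k:ℝ)*θ)/2 = Real.pi * k * θ by ring]
  have hS : c * R / k ≤ D := by
    have hfac2 : (((m:ℝ)^α : ℝ) : ℂ) * (en - em) = (ζn - ζm) - ((A : ℝ) : ℂ) * en := by
      rw [hζn, hζm, hAdef]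
      push_cast
      ring
    have htri : norm ((((m:ℝ)^α : ℝ) : ℂ) * (en - em)) ≤ D + A := by
      rw [hfac2]
      calc norm ((ζn - ζm) - ((A : ℝ) : ℂ) * en)
          ≤ norm (ζn - ζm) + norm (((A : ℝ) : ℂ) * en) := by
            exact norm_sub_le _ _
        _ = D + A := by rw [← hD, habs _ _ hA.le]
    have hlhs : norm ((((m:ℝ)^α : ℝ) : ℂ) * (en - em))
        = (m:ℝ)^α * (2 * |Real.sin (Real.pi * k * θ)|) := by
      rw [norm_mul, Complex.norm_real, Real.norm_eq_abs, abs_of_nonneg hmα.le, hEdiff]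
    have hsin := sin_lb θ c hbad k hk1
    have hchain : 2 * (c * R / k) ≤ D + A := by
      calc 2 * (c * R / k) = (R/2) * (2 * (2 * (c / k))) := by ring
        _ ≤ (m:ℝ)^α * (2 * |Real.sin (Real.pi * k * θ)|) := by
            apply mul_le_mul hm1 (by linarith) (by positivity) hmα.le
        _ ≤ D + A := by rw [← hlhs]; exact htri
    linarith
  -- radial bound
  have hn_le : (n:ℝ) ≤ (3/2*R)^((1:ℝ)/α) := by
    have h1 : (n:ℝ) = ((n:ℝ)^α)^((1:ℝ)/α) := by
      rw [← Real.rpow_mul hn0.le, mul_one_div_cancel hα.ne', Real.rpow_one]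
    rw [h1]
    exact Real.rpow_le_rpow hnα.le hn2 (by positivity)
  have hQ : (0:ℝ) < (3/2*R)^((1:ℝ)/α) := Real.rpow_pos_of_pos (by linarith) _
  have hA0 : α * k * (R/2) / ((3/2*R)^((1:ℝ)/α)) ≤ A := by
    have h1 := radial_lb α hα m n hm hmn
    rw [← hkr] at h1
    calc α * k * (R/2) / ((3/2*R)^((1:ℝ)/α)) ≤ α * k * (m:ℝ)^α / n := by
          apply div_le_div₀ (by positivity) ?_ hn0 hn_le
          exact mul_le_mul_of_nonneg_left hm1 (by positivity)
      _ ≤ A := h1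
    -- note: hAdef
  -- combine
  have hP : (0:ℝ) ≤ α*c/2 * (3/2:ℝ)^(-(1/α)) := by positivity
  have hsq : (Real.sqrt (α*c/2 * (3/2:ℝ)^(-(1/α))) * R^(1-1/(2*α)))^2 ≤ D^2 := by
    have hL : (Real.sqrt (α*c/2 * (3/2:ℝ)^(-(1/α))) * R^(1-1/(2*α)))^2
        = (α*c/2 * (3/2:ℝ)^(-(1/α))) * R^((2:ℝ)-1/α) := by
      rw [mul_pow, Real.sq_sqrt hP]
      congr 1
      rw [← Real.rpow_natCast (R^(1-1/(2*α))) 2, ← Real.rpow_mul hR.le]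
      congr 1
      push_cast
      field_simp
    have hprod : (α * k * (R/2) / ((3/2*R)^((1:ℝ)/α))) * (c * R / k) ≤ D * D :=
      mul_le_mul (le_trans hA0 hDA) hS (by positivity) hD0
    have heq : (α * k * (R/2) / ((3/2*R)^((1:ℝ)/α))) * (c * R / k)
        = (α*c/2 * (3/2:ℝ)^(-(1/α))) * R^((2:ℝ)-1/α) := by
      have h32 : ((3:ℝ)/2*R)^((1:ℝ)/α) = (3/2:ℝ)^((1:ℝ)/α) * R^((1:ℝ)/α) :=
        Real.mul_rpow (by norm_num) hR.le
      have hneg : (3/2:ℝ)^(-(1/α)) = ((3/2:ℝ)^((1:ℝ)/α))⁻¹ := by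
        rw [← Real.rpow_neg (by norm_num)]
      have hRs : R^((2:ℝ)-1/α) = R * R / R^((1:ℝ)/α) := by
        rw [Real.rpow_sub hR]
        congr 1
        rw [show (2:ℝ) = ((2:ℕ):ℝ) by norm_num, Real.rpow_natCast]
        ring
      rw [h32, hneg, hRs]
      have h1 : ((3/2:ℝ)^((1:ℝ)/α)) ≠ 0 := by positivity
      have h2 : R^((1:ℝ)/α) ≠ 0 := by positivity
      field_simp
    calc (Real.sqrt (α*c/2 * (3/2:ℝ)^(-(1/α))) * R^(1-1/(2*α)))^2
        = (α*c/2 * (3/2:ℝ)^(-(1/α))) * R^((2:ℝ)-1/α) := hL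
      _ ≤ D * D := by rw [← heq]; exact hprod
      _ = D^2 := (sq D).symm
  have hKR0 : 0 ≤ Real.sqrt (α*c/2 * (3/2:ℝ)^(-(1/α))) * R^(1-1/(2*α)) := by positivity
  calc Real.sqrt (α*c/2 * (3/2:ℝ)^(-(1/α))) * R^(1-1/(2*α))
      = Real.sqrt ((Real.sqrt (α*c/2 * (3/2:ℝ)^(-(1/α))) * R^(1-1/(2*α)))^2) :=
        (Real.sqrt_sq hKR0).symm
    _ ≤ Real.sqrt (D^2) := Real.sqrt_le_sqrt hsq
    _ = D := Real.sqrt_sq hD0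

private lemma abs_tri (z w : ℂ) : norm w ≤ norm z + norm (z - w) := by
  have h := norm_sub_le z (z - w)
  simp only [sub_sub_cancel] at h
  exact h

lemma abs_tri2 (z w : ℂ) : norm z ≤ norm (z - w) + norm w := by
  have h := norm_add_le (z - w) w
  simp only [sub_add_cancel] at h
  exact h


end SpiralAux

theorem badly_approx_implies_spiral_uniformly_discrete (α θ β : ℝ) (hα : 0 < α)
    (hβ : β = 1 - 1 / (2 * α)) (h : BadlyApproximable θ) :
    AsympUniformlyDiscrete β (spiralLattice α θ) := by
  obtain ⟨-, c, hc, hbad⟩ := h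
  set K := Real.sqrt (α*c/2 * (3/2:ℝ)^(-(1/α))) with hKdef
  have hKpos : 0 < K := Real.sqrt_pos.mpr (by positivity)
  refine ⟨K/2, by positivity, ?_⟩
  intro s₁ hs₁0 hs₁K
  refine ⟨max 1 ((2*s₁)^(2*α)), lt_of_lt_of_le one_pos (le_max_left _ _), ?_⟩
  intro z hz
  set R := norm z with hRdef
  have hR1 : 1 ≤ R := le_trans (le_max_left _ _) hz
  have hRpos : 0 < R := lt_of_lt_of_le one_pos hR1
  have hRβ : (0:ℝ) < R^β := Real.rpow_pos_of_pos hRpos β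
  have hhalf : s₁ * R^β ≤ R/2 := by
    have h2s : 2*s₁ ≤ R^(1/(2*α)) := by
      have h0 : (2*s₁)^(2*α) ≤ R := le_trans (le_max_right _ _) hz
      have h1 := Real.rpow_le_rpow (by positivity) h0 (by positivity : (0:ℝ) ≤ 1/(2*α))
      rwa [← Real.rpow_mul (by positivity), mul_one_div_cancel
        (by positivity : (2*α) ≠ 0), Real.rpow_one] at h1
    have hsplit : R^(1:ℝ) = R^β * R^(1/(2*α)) := by
      rw [← Real.rpow_add hRpos]; congr 1; rw [hβ]; ring
    have := mul_le_mul_of_nonneg_left h2s hRβ.le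
    calc s₁ * R^β = R^β * (2*s₁) / 2 := by ring
      _ ≤ R^β * R^(1/(2*α)) / 2 := by linarith
      _ = R/2 := by rw [← hsplit, Real.rpow_one]
  intro ζ₁ h₁ ζ₂ h₂
  obtain ⟨⟨n₁, rfl⟩, h1a, h1c⟩ := h₁
  obtain ⟨⟨n₂, rfl⟩, h2a, h2c⟩ := h₂
  have habs : ∀ n : ℕ, norm ((((n : ℝ) ^ α : ℝ) : ℂ) *
      Complex.exp ((2 * Real.pi * n * θ : ℝ) * Complex.I)) = (n:ℝ)^α := by
    intro n
    rw [norm_mul, Complex.norm_real, Real.norm_eq_abs, Complex.norm_exp_ofReal_mul_I, mul_one,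
      abs_of_nonneg (Real.rpow_nonneg n.cast_nonneg α)]
  have hge1 : ∀ n : ℕ, 1 ≤ norm ((((n : ℝ) ^ α : ℝ) : ℂ) *
      Complex.exp ((2 * Real.pi * n * θ : ℝ) * Complex.I)) → 1 ≤ n := by
    intro n hn
    rw [habs n] at hn
    by_contra hcon
    have hn0 : n = 0 := by omega
    subst hn0
    rw [Nat.cast_zero, Real.zero_rpow hα.ne'] at hn
    linarith
  have hbounds : ∀ n : ℕ, norm (z - (((n : ℝ) ^ α : ℝ) : ℂ) *
      Complex.exp ((2 * Real.pi * n * θ : ℝ) * Complex.I)) < s₁ * R^β →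
      R/2 ≤ (n:ℝ)^α ∧ (n:ℝ)^α ≤ 3/2*R := by
    intro n hn
    have t1 := abs_tri z ((((n : ℝ) ^ α : ℝ) : ℂ) *
      Complex.exp ((2 * Real.pi * n * θ : ℝ) * Complex.I))
    have t2 := abs_tri2 z ((((n : ℝ) ^ α : ℝ) : ℂ) *
      Complex.exp ((2 * Real.pi * n * θ : ℝ) * Complex.I))
    rw [habs n] at t1 t2
    rw [← hRdef] at t1 t2
    constructor <;> linarith
  have hK2 : 2*s₁ < K := by linarith
  have hmain : ∀ m n : ℕ, m < n →
      norm (z - (((m : ℝ) ^ α : ℝ) : ℂ) *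
        Complex.exp ((2 * Real.pi * m * θ : ℝ) * Complex.I)) < s₁ * R^β →
      norm (z - (((n : ℝ) ^ α : ℝ) : ℂ) *
        Complex.exp ((2 * Real.pi * n * θ : ℝ) * Complex.I)) < s₁ * R^β →
      1 ≤ m → False := by
    intro m n hmn hmc hnc hm1
    set pm : ℂ := (((m : ℝ) ^ α : ℝ) : ℂ) *
      Complex.exp ((2 * Real.pi * m * θ : ℝ) * Complex.I) with hpm
    set pn : ℂ := (((n : ℝ) ^ α : ℝ) : ℂ) *
      Complex.exp ((2 * Real.pi * n * θ : ℝ) * Complex.I) with hpn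
    have hd := spiral_dist_lb α θ c hα hc hbad m n hm1 hmn R hRpos
      (hbounds m hmc).1 (hbounds n hnc).2
    rw [← hβ] at hd
    have htri : norm (pn - pm) ≤ norm (z - pn) + norm (z - pm) := by
      have h0 := norm_sub_le (z - pm) (z - pn)
      have he : (z - pm) - (z - pn) = pn - pm := by ring
      rw [he] at h0
      linarith
    have : K * R^β ≤ norm (pn - pm) := hd
    nlinarith [hRβ, hK2]
  rcases lt_trichotomy n₁ n₂ with hlt | heq | hgt
  · exact absurd (hmain n₁ n₂ hlt h1c h2c (hge1 n₁ h1a)) (by simp)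
  · rw [heq]
  · exact absurd (hmain n₂ n₁ hgt h2c h1c (hge1 n₂ h2a)) (by simp)
end

section
/- Let α > 0, β = 1 − 1/(2α), and let θ be an irrational real number. If the Archimedean spiral lattice Γ_{α,θ} is asymptotically β-uniformly discrete, then θ is badly approximable. -/
noncomputable def sp (α θ : ℝ) (n : ℕ) : ℂ :=
  (((n : ℝ) ^ α : ℝ) : ℂ) * Complex.exp ((2 * Real.pi * n * θ : ℝ) * Complex.I)

lemma sp_mem (α θ : ℝ) (n : ℕ) : sp α θ n ∈ spiralLattice α θ := ⟨n, rfl⟩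

lemma abs_sp (α θ : ℝ) (n : ℕ) : ‖sp α θ n‖ = (n : ℝ) ^ α := by
  rw [sp, norm_mul, Complex.norm_real, Real.norm_eq_abs, Complex.norm_exp_ofReal_mul_I, mul_one,
    abs_of_nonneg (Real.rpow_nonneg (Nat.cast_nonneg n) α)]

lemma one_add_rpow_le (α : ℝ) (hα : 0 < α) {x : ℝ} (hx : 0 ≤ x) (hx1 : x ≤ 1) :
    (1 + x) ^ α ≤ 1 + α * Real.exp α * x := by
  have h1 : (1 + x) ^ α ≤ Real.exp (α * x) := by
    calc (1 + x) ^ α ≤ (Real.exp x) ^ α :=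
          Real.rpow_le_rpow (by linarith) (by linarith [Real.add_one_le_exp x]) hα.le
      _ = Real.exp (x * α) := (Real.exp_mul x α).symm
      _ = Real.exp (α * x) := by ring_nf
  have hax : 0 ≤ α * x := by positivity
  have h2 : Real.exp (α * x) ≤ 1 + (α * x) * Real.exp (α * x) := by
    have e1 : Real.exp (-(α * x)) * Real.exp (α * x) = 1 := by
      rw [← Real.exp_add]; simp
    have e2 : 1 - α * x ≤ Real.exp (-(α * x)) := by
      linarith [Real.add_one_le_exp (-(α * x))]
    nlinarith [mul_le_mul_of_nonneg_right e2 (Real.exp_pos (α * x)).le]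
  have h3 : Real.exp (α * x) ≤ Real.exp α := Real.exp_le_exp.mpr (by nlinarith)
  nlinarith [Real.exp_pos α]

lemma sp_dist (α θ : ℝ) (hα : 0 < α) (n q : ℕ) (p : ℤ)
    (hsmall : |2 * Real.pi * ((q : ℝ) * θ - (p : ℝ))| ≤ 1) :
    ‖sp α θ n - sp α θ (n + q)‖ ≤
      ((((n + q : ℕ) : ℝ)) ^ α - (n : ℝ) ^ α) +
        (n : ℝ) ^ α * (2 * |2 * Real.pi * ((q : ℝ) * θ - (p : ℝ))|) := by
  set y : ℝ := 2 * Real.pi * ((q : ℝ) * θ - (p : ℝ)) with hy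
  set E : ℂ := Complex.exp ((2 * Real.pi * n * θ : ℝ) * Complex.I) with hE
  set X : ℂ := Complex.exp ((y : ℝ) * Complex.I) with hX
  have hEabs : ‖E‖ = 1 := Complex.norm_exp_ofReal_mul_I _
  have hXabs : ‖X‖ = 1 := Complex.norm_exp_ofReal_mul_I _
  have hexp : Complex.exp ((2 * Real.pi * ((n + q : ℕ) : ℝ) * θ : ℝ) * Complex.I) = E * X := by
    have h1 : ((2 * Real.pi * ((n + q : ℕ) : ℝ) * θ : ℝ) : ℂ) * Complex.I =
        ((2 * Real.pi * (n : ℝ) * θ : ℝ) : ℂ) * Complex.I + ((y : ℝ) : ℂ) * Complex.I +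
          (p : ℂ) * (2 * (Real.pi : ℂ) * Complex.I) := by
      push_cast [hy]; ring
    rw [h1, Complex.exp_add, Complex.exp_add, Complex.exp_int_mul_two_pi_mul_I, mul_one]
  have hmono : (n : ℝ) ^ α ≤ (((n + q : ℕ) : ℝ)) ^ α :=
    Real.rpow_le_rpow (Nat.cast_nonneg n) (by push_cast; linarith [(Nat.cast_nonneg q : (0:ℝ) ≤ q)]) hα.le
  have hXsub : ‖X - 1‖ ≤ 2 * |y| := by
    have h2 : ‖(y : ℂ) * Complex.I‖ = |y| := by
      rw [norm_mul, Complex.norm_real, Real.norm_eq_abs, Complex.norm_I, mul_one]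
    calc ‖X - 1‖ ≤ 2 * ‖(y : ℂ) * Complex.I‖ :=
          Complex.norm_exp_sub_one_le (by rw [h2]; exact hsmall)
      _ = 2 * |y| := by rw [h2]
  have key : ‖sp α θ n - sp α θ (n + q)‖ ≤
      ‖(((n : ℝ) ^ α : ℝ) : ℂ) * E - (((n : ℝ) ^ α : ℝ) : ℂ) * (E * X)‖ +
        ‖(((n : ℝ) ^ α : ℝ) : ℂ) * (E * X) -
          ((((((n + q : ℕ) : ℝ)) ^ α : ℝ) : ℂ) * (E * X))‖ := by
    rw [sp, sp, hexp]
    exact norm_sub_le_norm_sub_add_norm_sub _ _ _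
  have hfst : ‖(((n : ℝ) ^ α : ℝ) : ℂ) * E - (((n : ℝ) ^ α : ℝ) : ℂ) * (E * X)‖ =
      (n : ℝ) ^ α * ‖X - 1‖ := by
    have : (((n : ℝ) ^ α : ℝ) : ℂ) * E - (((n : ℝ) ^ α : ℝ) : ℂ) * (E * X) =
        (((n : ℝ) ^ α : ℝ) : ℂ) * E * (1 - X) := by ring
    rw [this, norm_mul, norm_mul, Complex.norm_real, Real.norm_eq_abs, hEabs, mul_one,
      abs_of_nonneg (Real.rpow_nonneg (Nat.cast_nonneg n) α), norm_sub_rev 1 X]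
  have hsnd : ‖(((n : ℝ) ^ α : ℝ) : ℂ) * (E * X) -
      ((((((n + q : ℕ) : ℝ)) ^ α : ℝ) : ℂ) * (E * X))‖ =
      (((n + q : ℕ) : ℝ)) ^ α - (n : ℝ) ^ α := by
    have : (((n : ℝ) ^ α : ℝ) : ℂ) * (E * X) - ((((((n + q : ℕ) : ℝ)) ^ α : ℝ) : ℂ) * (E * X)) =
        ((((n : ℝ) ^ α - (((n + q : ℕ) : ℝ)) ^ α : ℝ)) : ℂ) * (E * X) := by push_cast; ring
    rw [this, norm_mul, norm_mul, Complex.norm_real, Real.norm_eq_abs, hEabs, hXabs, mul_one, mul_one,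
      abs_sub_comm, abs_of_nonneg (by linarith)]
  calc ‖sp α θ n - sp α θ (n + q)‖ ≤ _ := key
    _ = (n : ℝ) ^ α * ‖X - 1‖ + ((((n + q : ℕ) : ℝ)) ^ α - (n : ℝ) ^ α) := by
        rw [hfst, hsnd]
    _ ≤ (n : ℝ) ^ α * (2 * |y|) + ((((n + q : ℕ) : ℝ)) ^ α - (n : ℝ) ^ α) := by
        have := Real.rpow_nonneg (Nat.cast_nonneg n) α
        nlinarith [hXsub]
    _ = ((((n + q : ℕ) : ℝ)) ^ α - (n : ℝ) ^ α) + (n : ℝ) ^ α * (2 * |y|) := by ring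

set_option maxHeartbeats 1000000 in
theorem spiral_uniformly_discrete_implies_badly_approx (α θ β : ℝ) (hα : 0 < α)
    (hβ : β = 1 - 1 / (2 * α)) (hθ : Irrational θ)
    (h : AsympUniformlyDiscrete β (spiralLattice α θ)) :
    BadlyApproximable θ := by
  refine ⟨hθ, ?_⟩
  by_contra hc
  push_neg at hc
  obtain ⟨s, hs, hds⟩ := h
  obtain ⟨M, hM, hsub⟩ := hds (s / 2) (by linarith) (by linarith)
  set s₁ : ℝ := s / 2 with hs₁def
  have hs₁ : 0 < s₁ := by positivity
  have hπ : (0:ℝ) < Real.pi := Real.pi_pos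
  set a : ℝ := α * Real.exp α with ha
  have ha0 : 0 < a := by positivity
  -- K and u = √K
  set T : ℝ := 2 * a / s₁ + 1 with hT
  have hT0 : 0 < T := by positivity
  set K : ℕ := ⌈T ^ 2⌉₊ with hKdef
  have hK1 : 1 ≤ K := Nat.one_le_ceil_iff.mpr (by positivity)
  have hK0 : (0:ℝ) < (K : ℝ) := by exact_mod_cast hK1
  set u : ℝ := Real.sqrt K with hu
  have hu0 : 0 < u := Real.sqrt_pos.mpr hK0
  have huu : u * u = (K : ℝ) := Real.mul_self_sqrt hK0.le
  have hTu : T ≤ u := by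
    have h1 : T ^ 2 ≤ (K : ℝ) := Nat.le_ceil _
    nlinarith [huu]
  -- Q
  set Q : ℤ := ⌈M ^ (1 / α)⌉ + 1 with hQ
  have hQ1 : 1 ≤ Q := by
    have : (0:ℤ) < ⌈M ^ (1 / α)⌉ := Int.ceil_pos.mpr (Real.rpow_pos_of_pos hM _)
    omega
  -- c₀ : min over small q
  have hne : (Finset.Icc (1:ℤ) Q).Nonempty := Finset.nonempty_Icc.mpr hQ1
  set g : ℤ → ℝ := fun q => (q : ℝ) * |(q : ℝ) * θ - (round ((q : ℝ) * θ) : ℤ)| with hg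
  set c₀ : ℝ := (Finset.Icc (1:ℤ) Q).inf' hne g with hc₀def
  have hc₀ : 0 < c₀ := by
    rw [hc₀def, Finset.lt_inf'_iff]
    intro b hb
    have hb1 : 1 ≤ b := (Finset.mem_Icc.mp hb).1
    have hbirr : Irrational ((b : ℝ) * θ) := hθ.intCast_mul (by omega)
    have : (0:ℝ) < |(b : ℝ) * θ - (round ((b : ℝ) * θ) : ℤ)| := by
      rw [abs_pos, sub_ne_zero]
      exact hbirr.ne_int _
    have hb0 : (0:ℝ) < b := by exact_mod_cast hb1
    exact mul_pos hb0 this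
  -- choose c and get p q
  set c : ℝ := min c₀ (min (s₁ / (8 * Real.pi * u)) (1 / (4 * Real.pi))) with hcdef
  have hcpos : 0 < c := by
    refine lt_min hc₀ (lt_min (by positivity) (by positivity))
  obtain ⟨p, q, hq1, hqc⟩ := hc c hcpos
  have hq0 : (0:ℝ) < q := by exact_mod_cast hq1
  set r : ℝ := |(q : ℝ) * θ - (p : ℝ)| with hr
  have hr0 : 0 ≤ r := abs_nonneg _
  have hqr : (q : ℝ) * r < c := hqc
  -- q > Q
  have hQq : Q < q := by
    by_contra hle
    push_neg at hle
    have hmem : q ∈ Finset.Icc (1:ℤ) Q := Finset.mem_Icc.mpr ⟨hq1, hle⟩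
    have h1 : c₀ ≤ g q := Finset.inf'_le g hmem
    have h2 : g q ≤ (q : ℝ) * r := by
      rw [hg]
      exact mul_le_mul_of_nonneg_left (round_le ((q : ℝ) * θ) p) hq0.le
    have h3 : c ≤ c₀ := min_le_left _ _
    linarith
  -- setup n
  set qn : ℕ := q.toNat with hqn
  have hqncast : (qn : ℝ) = (q : ℝ) := by
    rw [hqn]; exact_mod_cast congrArg (Int.cast : ℤ → ℝ) (Int.toNat_of_nonneg (by omega))
  have hqn1 : 1 ≤ qn := by omega
  have hqn1R : (1:ℝ) ≤ (qn : ℝ) := by exact_mod_cast hqn1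
  set n : ℕ := K * qn ^ 2 with hn
  have hncast : (n : ℝ) = (K : ℝ) * (qn : ℝ) ^ 2 := by push_cast [hn]; ring
  have hn0 : (0:ℝ) < (n : ℝ) := by rw [hncast]; positivity
  have hK1R : (1:ℝ) ≤ (K : ℝ) := by exact_mod_cast hK1
  have hqn_le_n : (qn : ℝ) ≤ (n : ℝ) := by
    rw [hncast]
    have h1 : (qn : ℝ) ≤ (qn : ℝ) ^ 2 := by nlinarith
    have h2 : (qn : ℝ) ^ 2 ≤ (K : ℝ) * (qn : ℝ) ^ 2 := by nlinarith
    linarith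
  -- n ≥ M^{1/α}
  have hMn : M ^ (1 / α) ≤ (n : ℝ) := by
    have h1 : M ^ (1 / α) ≤ (⌈M ^ (1 / α)⌉ : ℝ) := Int.le_ceil _
    have h2 : ((⌈M ^ (1 / α)⌉ : ℤ) : ℝ) ≤ (Q : ℝ) := by rw [hQ]; push_cast; linarith
    have h3 : (Q : ℝ) ≤ (q : ℝ) := by exact_mod_cast hQq.le
    rw [← hqncast] at h3
    linarith
  have hzM : M ≤ (n : ℝ) ^ α := by
    have h1 : (M ^ (1 / α)) ^ α ≤ (n : ℝ) ^ α :=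
      Real.rpow_le_rpow (Real.rpow_pos_of_pos hM _).le hMn hα.le
    rwa [← Real.rpow_mul hM.le, one_div_mul_cancel hα.ne', Real.rpow_one] at h1
  have h1n : (1:ℝ) ≤ (n : ℝ) := le_trans hqn1R hqn_le_n
  -- smallness of r
  have hcu : c ≤ s₁ / (8 * Real.pi * u) := le_trans (min_le_right _ _) (min_le_left _ _)
  have hcπ : c ≤ 1 / (4 * Real.pi) := le_trans (min_le_right _ _) (min_le_right _ _)
  have hrq : r ≤ (q : ℝ) * r := by
    calc r = 1 * r := (one_mul r).symm
      _ ≤ (q : ℝ) * r := mul_le_mul_of_nonneg_right (by exact_mod_cast hq1) hr0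
  have hrsmall : |2 * Real.pi * ((q : ℝ) * θ - (p : ℝ))| ≤ 1 := by
    rw [abs_mul, abs_of_pos (by positivity : (0:ℝ) < 2 * Real.pi)]
    have : r < 1 / (4 * Real.pi) := lt_of_le_of_lt hrq (lt_of_lt_of_le hqr hcπ)
    rw [← hr]
    have h5 : 2 * Real.pi * r ≤ 2 * Real.pi * (1 / (4 * Real.pi)) :=
      mul_le_mul_of_nonneg_left this.le (by positivity)
    have h4 : 2 * Real.pi * (1 / (4 * Real.pi)) = 1 / 2 := by
      field_simp; ring
    linarith
  -- key inequality chain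
  have hβαβ : α * β = α - 1 / 2 := by rw [hβ]; field_simp
  have hpowβ : ((n : ℝ) ^ α) ^ β = (n : ℝ) ^ α / (u * (qn : ℝ)) := by
    have hsq : Real.sqrt (n : ℝ) = u * (qn : ℝ) := by
      rw [hncast, Real.sqrt_mul hK0.le, Real.sqrt_sq (by positivity)]
    calc ((n : ℝ) ^ α) ^ β = (n : ℝ) ^ (α * β) := (Real.rpow_mul hn0.le α β).symm
      _ = (n : ℝ) ^ (α - 1 / 2) := by rw [hβαβ]
      _ = (n : ℝ) ^ α / (n : ℝ) ^ ((1:ℝ) / 2) := Real.rpow_sub hn0 α (1 / 2)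
      _ = (n : ℝ) ^ α / (u * (qn : ℝ)) := by rw [← Real.sqrt_eq_rpow, hsq]
  -- core scalar inequality
  have hnapos : (0:ℝ) < (n : ℝ) ^ α := Real.rpow_pos_of_pos hn0 α
  have hqnn : (qn : ℝ) / (n : ℝ) = 1 / ((K : ℝ) * (qn : ℝ)) := by
    rw [hncast]
    field_simp
  have hsu : 2 * a + s₁ ≤ s₁ * u := by
    have h1 : s₁ * T = 2 * a + s₁ := by
      rw [hT]; field_simp
    have h2 : s₁ * T ≤ s₁ * u := mul_le_mul_of_nonneg_left hTu hs₁.le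
    linarith
  have core1 : a * (1 / ((K : ℝ) * (qn : ℝ))) < s₁ / (2 * (u * (qn : ℝ))) := by
    rw [mul_one_div, div_lt_div_iff₀ (by positivity) (by positivity)]
    have t : 2 * a * (u * (qn : ℝ)) ≤ (s₁ * u - s₁) * (u * (qn : ℝ)) :=
      mul_le_mul_of_nonneg_right (by linarith) (by positivity)
    have pos : (0:ℝ) < s₁ * (u * (qn : ℝ)) := by positivity
    have e1 : (s₁ * u - s₁) * (u * (qn : ℝ)) =
        s₁ * u * (u * (qn : ℝ)) - s₁ * (u * (qn : ℝ)) := by ring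
    have e2 : a * (2 * (u * (qn : ℝ))) = 2 * a * (u * (qn : ℝ)) := by ring
    have e3 : s₁ * ((K : ℝ) * (qn : ℝ)) = s₁ * u * (u * (qn : ℝ)) := by
      rw [← huu]; ring
    rw [e2, e3]
    linarith
  have hq' : (qn : ℝ) * r < s₁ / (8 * Real.pi * u) := by
    rw [hqncast]; exact lt_of_lt_of_le hqr hcu
  have core2 : 4 * Real.pi * r < s₁ / (2 * (u * (qn : ℝ))) := by
    rw [lt_div_iff₀ (by positivity)]
    have h1 : (qn : ℝ) * r * (8 * Real.pi * u) < s₁ :=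
      (lt_div_iff₀ (by positivity : (0:ℝ) < 8 * Real.pi * u)).mp hq'
    calc 4 * Real.pi * r * (2 * (u * (qn : ℝ))) = (qn : ℝ) * r * (8 * Real.pi * u) := by ring
      _ < s₁ := h1
  have core : a * ((qn : ℝ) / (n : ℝ)) + 4 * Real.pi * r < s₁ / (u * (qn : ℝ)) := by
    rw [hqnn]
    have h2 : s₁ / (2 * (u * (qn : ℝ))) + s₁ / (2 * (u * (qn : ℝ))) = s₁ / (u * (qn : ℝ)) := by
      rw [← add_div]
      rw [eq_div_iff (by positivity)]
      field_simp
      ring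
    linarith
  -- distance estimate for ζ₂
  have hsmall' : |2 * Real.pi * ((qn : ℝ) * θ - (p : ℝ))| ≤ 1 := by rw [hqncast]; exact hrsmall
  have hx0 : (0:ℝ) ≤ (qn : ℝ) / (n : ℝ) := by positivity
  have hx1 : (qn : ℝ) / (n : ℝ) ≤ 1 := (div_le_one hn0).mpr hqn_le_n
  have hsplit : (((n + qn : ℕ)) : ℝ) = (n : ℝ) * (1 + (qn : ℝ) / (n : ℝ)) := by
    push_cast
    field_simp
  have hA : (((n + qn : ℕ)) : ℝ) ^ α ≤ (n : ℝ) ^ α * (1 + a * ((qn : ℝ) / (n : ℝ))) := by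
    rw [hsplit, Real.mul_rpow hn0.le (by positivity)]
    exact mul_le_mul_of_nonneg_left (one_add_rpow_le α hα hx0 hx1) hnapos.le
  have hB : 2 * |2 * Real.pi * ((qn : ℝ) * θ - (p : ℝ))| = 4 * Real.pi * r := by
    rw [hqncast, abs_mul, abs_of_pos (by positivity : (0:ℝ) < 2 * Real.pi), ← hr]
    ring
  have hζ₂dist : ‖sp α θ n - sp α θ (n + qn)‖ <
      s₁ * ‖sp α θ n‖ ^ β := by
    rw [abs_sp, hpowβ]
    have hd := sp_dist α θ hα n qn p hsmall'
    rw [hB] at hd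
    have h3 : (((n + qn : ℕ)) : ℝ) ^ α - (n : ℝ) ^ α + (n : ℝ) ^ α * (4 * Real.pi * r) ≤
        (n : ℝ) ^ α * (a * ((qn : ℝ) / (n : ℝ)) + 4 * Real.pi * r) := by
      have e1 : (n : ℝ) ^ α * (1 + a * ((qn : ℝ) / (n : ℝ))) =
          (n : ℝ) ^ α + (n : ℝ) ^ α * (a * ((qn : ℝ) / (n : ℝ))) := by ring
      have e2 : (n : ℝ) ^ α * (a * ((qn : ℝ) / (n : ℝ)) + 4 * Real.pi * r) =
          (n : ℝ) ^ α * (a * ((qn : ℝ) / (n : ℝ))) + (n : ℝ) ^ α * (4 * Real.pi * r) := by ring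
      linarith [hA]
    have h4 : (n : ℝ) ^ α * (a * ((qn : ℝ) / (n : ℝ)) + 4 * Real.pi * r) <
        (n : ℝ) ^ α * (s₁ / (u * (qn : ℝ))) := mul_lt_mul_of_pos_left core hnapos
    calc ‖sp α θ n - sp α θ (n + qn)‖ ≤ _ := hd
      _ ≤ (n : ℝ) ^ α * (a * ((qn : ℝ) / (n : ℝ)) + 4 * Real.pi * r) := h3
      _ < (n : ℝ) ^ α * (s₁ / (u * (qn : ℝ))) := h4
      _ = s₁ * ((n : ℝ) ^ α / (u * (qn : ℝ))) := by ring
  -- apply discreteness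
  have habsz : M ≤ ‖sp α θ n‖ := by rw [abs_sp]; exact hzM
  have hone₁ : (1:ℝ) ≤ ‖sp α θ n‖ := by
    rw [abs_sp]
    calc (1:ℝ) = (1:ℝ) ^ α := (Real.one_rpow α).symm
      _ ≤ (n : ℝ) ^ α := Real.rpow_le_rpow zero_le_one h1n hα.le
  have hone₂ : (1:ℝ) ≤ ‖sp α θ (n + qn)‖ := by
    rw [abs_sp]
    calc (1:ℝ) = (1:ℝ) ^ α := (Real.one_rpow α).symm
      _ ≤ (((n + qn : ℕ)) : ℝ) ^ α :=
        Real.rpow_le_rpow zero_le_one (by push_cast; linarith) hα.le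
  have hdist₁ : ‖sp α θ n - sp α θ n‖ < s₁ * ‖sp α θ n‖ ^ β := by
    rw [sub_self, norm_zero, abs_sp, hpowβ]
    positivity
  have heq : sp α θ n = sp α θ (n + qn) :=
    hsub (sp α θ n) habsz ⟨sp_mem α θ n, hone₁, hdist₁⟩
      ⟨sp_mem α θ (n + qn), hone₂, hζ₂dist⟩
  have habs := congrArg (‖·‖) heq
  rw [abs_sp, abs_sp] at habs
  have hlt : (n : ℝ) ^ α < (((n + qn : ℕ)) : ℝ) ^ α :=
    Real.rpow_lt_rpow (Nat.cast_nonneg n) (by push_cast; linarith) hα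
  linarith
end
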